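/- arXiv:0812.4847 — 10 statements merged into one kernel-verified Lean document; each statement's English description precedes it below -/
import Mathlib

section
/- For every 1-Lipschitz function f : ℤ₊ → ℝ and every n ∈ ℤ₊, the Stein solution satisfies |g_f(n)| ≤ (1/α) ∑_{k=1}^∞ k π_k, and this bound is attained: for the function f₁(k) = −k one has g_{f₁}(1) = (1/α) ∑_{k=1}^∞ k π_k; consequently the supremum over all 1-Lipschitz f of sup_n |g_f(n)| equals (1/α) ∑_{k=1}^∞ k π_k. -/
open Finset

private lemma antisym (m : ℕ) (a c : ℕ → ℝ) :
    ∑ k ∈ Finset.range m, ∑ j ∈ Finset.range m, a k * a j * (c k - c j) = 0 := by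
  have h : ∀ k j : ℕ, a k * a j * (c k - c j) = a k * a j * c k - a k * a j * c j := by
    intro k j; ring
  simp_rw [h, Finset.sum_sub_distrib]
  rw [sub_eq_zero, Finset.sum_comm]
  exact Finset.sum_congr rfl fun j _ => Finset.sum_congr rfl fun k _ => by ring

private lemma pbd_msum (α β : ℝ) (hα : 0 < α) (hβ : 0 < β)
    (C : ℝ) (hC : 0 < C) (π : ℕ → ℝ)
    (hπ : ∀ n : ℕ, π n =
      C * α ^ n / ∏ i ∈ Finset.range n, (β * ((i : ℝ) + 1) + ((i : ℝ) + 1) * (i : ℝ))) :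
    Summable (fun k : ℕ => (k : ℝ) * π k) := by
  have hbpos : ∀ i : ℕ, 0 < β * ((i : ℝ) + 1) + ((i : ℝ) + 1) * (i : ℝ) := by
    intro i
    have h1 : (0:ℝ) ≤ (i:ℝ) := Nat.cast_nonneg i
    nlinarith
  have hprodpos : ∀ n : ℕ, 0 < ∏ i ∈ Finset.range n, (β * ((i : ℝ) + 1) + ((i : ℝ) + 1) * (i : ℝ)) :=
    fun n => Finset.prod_pos fun i _ => hbpos i
  have hπpos : ∀ n : ℕ, 0 < π n := by
    intro n; rw [hπ n]; positivity
  have hrec : ∀ n : ℕ, (β * ((n : ℝ) + 1) + ((n : ℝ) + 1) * (n : ℝ)) * π (n + 1) = α * π n := by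
    intro n
    rw [hπ n, hπ (n + 1), Finset.prod_range_succ]
    have h1 := (hprodpos n).ne'
    have h2 := (hbpos n).ne'
    field_simp
    ring
  apply summable_of_ratio_norm_eventually_le (r := 1/2) (by norm_num)
  filter_upwards [Filter.eventually_ge_atTop (⌈2 * α⌉₊ + 1)] with k hk
  have hk1 : (1:ℝ) ≤ (k:ℝ) := by exact_mod_cast Nat.one_le_iff_ne_zero.mpr (by omega)
  have hk2 : 2 * α ≤ (k:ℝ) := by
    calc 2 * α ≤ (⌈2*α⌉₊ : ℝ) := Nat.le_ceil _
    _ ≤ (k:ℝ) := by exact_mod_cast le_trans (Nat.le_succ _) hk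
  have hkey : ((k:ℝ) + 1) * π (k + 1) = α * π k / (β + k) := by
    have h := hrec k
    have hβk : (0:ℝ) < β + k := by positivity
    field_simp at h ⊢
    nlinarith [h]
  have hπk := (hπpos k).le
  have hπk1 := (hπpos (k+1)).le
  rw [Real.norm_eq_abs, Real.norm_eq_abs,
    abs_of_nonneg (mul_nonneg (Nat.cast_nonneg _) hπk),
    abs_of_nonneg (mul_nonneg (Nat.cast_nonneg _) hπk1)]
  push_cast
  rw [hkey, div_le_iff₀ (by positivity)]
  have hbk1 : (1:ℝ) ≤ β + k := by linarith
  have h3 : α ≤ 1/2 * ((k:ℝ) * (β + k)) := by nlinarith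
  nlinarith [mul_le_mul_of_nonneg_right h3 hπk]

set_option maxHeartbeats 1600000 in
private lemma key (α β : ℝ) (hα : 0 < α) (hβ : 0 < β)
    (C : ℝ) (hC : 0 < C) (π : ℕ → ℝ)
    (hπ : ∀ n : ℕ, π n =
      C * α ^ n / ∏ i ∈ Finset.range n, (β * ((i : ℝ) + 1) + ((i : ℝ) + 1) * (i : ℝ)))
    (hπ1 : ∑' n, π n = 1)
    (f : ℕ → ℝ) (hf : ∀ x y : ℕ, |f x - f y| ≤ |(x : ℝ) - (y : ℝ)|)
    (hfs : Summable fun n => |f n| * π n)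
    (g : ℕ → ℝ) (hg0 : g 0 = g 1)
    (hg : ∀ n : ℕ, α * g (n + 1) - (β * (n : ℝ) + (n : ℝ) * ((n : ℝ) - 1)) * g n
      = f n - ∑' k, f k * π k) :
    ∀ n : ℕ, |g n| ≤ (1 / α) * ∑' k : ℕ, (k : ℝ) * π k := by
  -- positivity of products and π
  have hbpos : ∀ i : ℕ, 0 < β * ((i : ℝ) + 1) + ((i : ℝ) + 1) * (i : ℝ) := by
    intro i
    have h1 : (0:ℝ) ≤ (i:ℝ) := Nat.cast_nonneg i
    nlinarith
  have hprodpos : ∀ n : ℕ, 0 < ∏ i ∈ Finset.range n, (β * ((i : ℝ) + 1) + ((i : ℝ) + 1) * (i : ℝ)) :=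
    fun n => Finset.prod_pos fun i _ => hbpos i
  have hπpos : ∀ n : ℕ, 0 < π n := by
    intro n; rw [hπ n]; positivity
  -- recurrence
  have hrec : ∀ n : ℕ, (β * ((n : ℝ) + 1) + ((n : ℝ) + 1) * (n : ℝ)) * π (n + 1) = α * π n := by
    intro n
    rw [hπ n, hπ (n + 1), Finset.prod_range_succ]
    have h1 := (hprodpos n).ne'
    have h2 := (hbpos n).ne'
    field_simp
    ring
  -- summability of π
  have hπsum : Summable π := by
    by_contra h
    rw [tsum_eq_zero_of_not_summable h] at hπ1
    norm_num at hπ1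
  -- summability of k * π k
  have hmsum : Summable (fun k : ℕ => (k : ℝ) * π k) := pbd_msum α β hα hβ C hC π hπ
  set m := ∑' k : ℕ, (k : ℝ) * π k with hm
  have hmnn : 0 ≤ m := tsum_nonneg fun k => mul_nonneg (Nat.cast_nonneg _) (hπpos k).le
  have hfπ : Summable (fun k : ℕ => f k * π k) := by
    apply Summable.of_abs
    apply hfs.congr
    intro n
    rw [abs_mul, abs_of_nonneg (hπpos n).le]
  set φ := ∑' k, f k * π k with hφ
  -- representation
  have hrep : ∀ n : ℕ, α * (π n * g (n + 1)) = ∑ k ∈ Finset.range (n + 1), π k * (f k - φ) := by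
    intro n
    induction n with
    | zero =>
      have h0 := hg 0
      push_cast at h0
      rw [Finset.sum_range_one]
      linear_combination π 0 * h0
    | succ n ih =>
      have h := hg (n + 1)
      push_cast at h
      rw [Finset.sum_range_succ, ← ih]
      linear_combination π (n + 1) * h + g (n + 1) * hrec n
  -- the sequence s and R ≥ 0
  set s : ℕ → ℝ := fun i => ((i : ℝ) + 1) * π (i + 1) - m * π i with hsdef
  have hs_shift : Summable (fun i : ℕ => ((i : ℝ) + 1) * π (i + 1)) := by
    have := (summable_nat_add_iff 1).mpr hmsum
    apply this.congr
    intro i; push_cast; ring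
  have hssum : Summable s := hs_shift.sub (hπsum.mul_left m)
  have hs_total : ∑' i, s i = 0 := by
    rw [hsdef]
    rw [Summable.tsum_sub hs_shift (hπsum.mul_left m), tsum_mul_left, hπ1]
    have h1 : ∑' i : ℕ, ((i : ℝ) + 1) * π (i + 1) = m := by
      rw [hm, Summable.tsum_eq_zero_add hmsum]
      push_cast
      simp
    rw [h1]; ring
  have hs_formula : ∀ i : ℕ, s i = π i * (α / (β + i) - m) := by
    intro i
    have h := hrec i
    have hβi : (0 : ℝ) < β + i := by positivity
    show ((i : ℝ) + 1) * π (i + 1) - m * π i = π i * (α / (β + (i : ℝ)) - m)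
    have h2 : ((i : ℝ) + 1) * π (i + 1) = α * π i / (β + i) := by
      rw [eq_div_iff hβi.ne']
      nlinarith [h]
    rw [h2]
    field_simp
  have hRnn : ∀ n : ℕ, 0 ≤ ∑ i ∈ Finset.range n, s i := by
    intro n
    by_cases hcase : ∀ i < n, m ≤ α / (β + i)
    · apply Finset.sum_nonneg
      intro i hi
      rw [hs_formula i]
      exact mul_nonneg (hπpos i).le (sub_nonneg.2 (hcase i (Finset.mem_range.mp hi)))
    · push_neg at hcase
      obtain ⟨i₀, hi₀n, hi₀⟩ := hcase
      have htail : ∀ i : ℕ, s (i + n) ≤ 0 := by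
        intro i
        rw [hs_formula (i + n)]
        apply mul_nonpos_of_nonneg_of_nonpos (hπpos _).le
        rw [sub_nonpos]
        calc α / (β + (i + n : ℕ)) ≤ α / (β + i₀) := by
              apply div_le_div_of_nonneg_left hα.le (by positivity)
              have : (i₀ : ℝ) ≤ ((i + n : ℕ) : ℝ) := by
                exact_mod_cast le_trans (le_of_lt hi₀n) (Nat.le_add_left n i)
              linarith
          _ ≤ m := hi₀.le
      have := Summable.sum_add_tsum_nat_add n hssum
      rw [hs_total] at this
      have h2 : ∑' i, s (i + n) ≤ 0 := tsum_nonpos htail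
      linarith
  -- M(n) ≤ m * π n
  have hMle : ∀ n : ℕ,
      m * (∑ k ∈ Finset.range (n + 1), π k) - ∑ k ∈ Finset.range (n + 1), (k : ℝ) * π k
      ≤ m * π n := by
    intro n
    have hR : ∑ i ∈ Finset.range n, s i
        = ∑ k ∈ Finset.range (n + 1), (k : ℝ) * π k - m * ∑ k ∈ Finset.range n, π k := by
      rw [hsdef, Finset.sum_sub_distrib, ← Finset.mul_sum]
      congr 1
      rw [Finset.sum_range_succ' (fun k => (k : ℝ) * π k) n]
      push_cast
      simp
    have := hRnn n
    rw [hR] at this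
    rw [Finset.sum_range_succ π n]
    linarith
  -- bound on the partial sum
  have hSbound : ∀ n : ℕ, |∑ k ∈ Finset.range (n + 1), π k * (f k - φ)|
      ≤ m * (∑ k ∈ Finset.range (n + 1), π k) - ∑ k ∈ Finset.range (n + 1), (k : ℝ) * π k := by
    intro n
    set N := n + 1 with hN
    have hdiff : ∀ k : ℕ, Summable (fun j : ℕ => (f k - f j) * π j) := by
      intro k
      have he : (fun j : ℕ => (f k - f j) * π j) = fun j => f k * π j - f j * π j := by
        funext j; ring
      rw [he]
      exact (hπsum.mul_left (f k)).sub hfπ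
    have h1 : ∀ k : ℕ, f k - φ = ∑' j, (f k - f j) * π j := by
      intro k
      have he : (fun j : ℕ => (f k - f j) * π j) = fun j => f k * π j - f j * π j := by
        funext j; ring
      rw [he, Summable.tsum_sub (hπsum.mul_left (f k)) hfπ, tsum_mul_left, hπ1, hφ]; ring
    have hsplit : ∀ k : ℕ, (∑' j, (f k - f j) * π j)
        = ∑ j ∈ Finset.range N, (f k - f j) * π j + ∑' i, (f k - f (i + N)) * π (i + N) :=
      fun k => (Summable.sum_add_tsum_nat_add N (hdiff k)).symm
    have hzero : ∑ k ∈ Finset.range N, ∑ j ∈ Finset.range N, π k * ((f k - f j) * π j) = 0 := by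
      rw [← antisym N π f]
      exact Finset.sum_congr rfl fun k _ => Finset.sum_congr rfl fun j _ => by ring
    have hS : ∑ k ∈ Finset.range N, π k * (f k - φ)
        = ∑ k ∈ Finset.range N, π k * ∑' i, (f k - f (i + N)) * π (i + N) := by
      calc ∑ k ∈ Finset.range N, π k * (f k - φ)
          = ∑ k ∈ Finset.range N, (∑ j ∈ Finset.range N, π k * ((f k - f j) * π j)
              + π k * ∑' i, (f k - f (i + N)) * π (i + N)) := by
            refine Finset.sum_congr rfl fun k _ => ?_
            rw [h1 k, hsplit k, mul_add, Finset.mul_sum]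
        _ = _ := by rw [Finset.sum_add_distrib, hzero, zero_add]
    have hsum2 : ∀ k : ℕ, Summable (fun j : ℕ => ((j : ℝ) - k) * π j) := by
      intro k
      have := hmsum.sub (hπsum.mul_left (k : ℝ))
      apply this.congr; intro j; ring
    have htail1 : ∀ k : ℕ, Summable (fun i : ℕ => (((i + N : ℕ) : ℝ) - (k : ℝ)) * π (i + N)) := by
      intro k
      exact (summable_nat_add_iff N).mpr (hsum2 k)
    have hpt : ∀ k, k ∈ Finset.range N → ∀ i : ℕ,
        |(f k - f (i + N)) * π (i + N)| ≤ (((i + N : ℕ) : ℝ) - (k : ℝ)) * π (i + N) := by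
      intro k hk i
      rw [abs_mul, abs_of_nonneg (hπpos _).le]
      apply mul_le_mul_of_nonneg_right _ (hπpos _).le
      refine (hf k (i + N)).trans ?_
      have hkN : (k : ℝ) ≤ ((i + N : ℕ) : ℝ) := by
        exact_mod_cast le_trans (Finset.mem_range.mp hk).le (Nat.le_add_left N i)
      rw [abs_of_nonpos (by linarith)]
      ring_nf
      linarith
    have htail2 : ∀ k, k ∈ Finset.range N → Summable (fun i : ℕ => |(f k - f (i + N)) * π (i + N)|) := by
      intro k hk
      exact Summable.of_nonneg_of_le (fun i => abs_nonneg _) (hpt k hk) (htail1 k)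
    have habs : |∑ k ∈ Finset.range N, π k * (f k - φ)|
        ≤ ∑ k ∈ Finset.range N, π k * ∑' i, (((i + N : ℕ) : ℝ) - (k : ℝ)) * π (i + N) := by
      rw [hS]
      refine (Finset.abs_sum_le_sum_abs _ _).trans (Finset.sum_le_sum fun k hk => ?_)
      rw [abs_mul, abs_of_nonneg (hπpos k).le]
      refine mul_le_mul_of_nonneg_left ?_ (hπpos k).le
      have hnorm : Summable (fun i : ℕ => ‖(f k - f (i + N)) * π (i + N)‖) := by
        simpa only [Real.norm_eq_abs] using htail2 k hk
      calc |∑' i, (f k - f (i + N)) * π (i + N)|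
          ≤ ∑' i, |(f k - f (i + N)) * π (i + N)| := by
            simpa only [Real.norm_eq_abs] using
              norm_tsum_le_tsum_norm (f := fun i : ℕ => (f k - f (i + N)) * π (i + N)) hnorm
        _ ≤ ∑' i, (((i + N : ℕ) : ℝ) - (k : ℝ)) * π (i + N) :=
            Summable.tsum_le_tsum (hpt k hk) (htail2 k hk) (htail1 k)
    have hUk : ∀ k : ℕ, ∑' i, (((i + N : ℕ) : ℝ) - (k : ℝ)) * π (i + N)
        = (m - k) - ∑ j ∈ Finset.range N, ((j : ℝ) - k) * π j := by
      intro k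
      have h2 := Summable.sum_add_tsum_nat_add (f := fun j : ℕ => ((j : ℝ) - k) * π j) N (hsum2 k)
      have h3 : ∑' j : ℕ, ((j : ℝ) - k) * π j = m - k := by
        have he : (fun j : ℕ => ((j : ℝ) - k) * π j) = fun j : ℕ => (j : ℝ) * π j - (k : ℝ) * π j := by
          funext j; ring
        rw [he, Summable.tsum_sub hmsum (hπsum.mul_left _), tsum_mul_left, hπ1, hm]; ring
      rw [h3] at h2
      linarith
    have hz2 : ∑ k ∈ Finset.range N, ∑ j ∈ Finset.range N, π k * (((j : ℝ) - k) * π j) = 0 := by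
      rw [← antisym N π (fun x : ℕ => -(x : ℝ))]
      exact Finset.sum_congr rfl fun k _ => Finset.sum_congr rfl fun j _ => by ring
    have hfinal : ∑ k ∈ Finset.range N, π k * ∑' i, (((i + N : ℕ) : ℝ) - (k : ℝ)) * π (i + N)
        = m * (∑ k ∈ Finset.range N, π k) - ∑ k ∈ Finset.range N, (k : ℝ) * π k := by
      calc ∑ k ∈ Finset.range N, π k * ∑' i, (((i + N : ℕ) : ℝ) - (k : ℝ)) * π (i + N)
          = ∑ k ∈ Finset.range N, (π k * (m - k)
              - ∑ j ∈ Finset.range N, π k * (((j : ℝ) - k) * π j)) := by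
            refine Finset.sum_congr rfl fun k _ => ?_
            rw [hUk k, mul_sub, Finset.mul_sum]
        _ = ∑ k ∈ Finset.range N, π k * (m - k) := by
            rw [Finset.sum_sub_distrib, hz2, sub_zero]
        _ = _ := by
            rw [Finset.mul_sum, ← Finset.sum_sub_distrib]
            exact Finset.sum_congr rfl fun k _ => by ring
    rw [← hfinal]
    exact habs
  -- conclusion
  have hbnd : ∀ n : ℕ, |g (n + 1)| ≤ 1 / α * m := by
    intro n
    have h1 := hrep n
    have h2 := (hSbound n).trans (hMle n)
    rw [← h1, abs_mul, abs_of_pos hα, abs_mul, abs_of_pos (hπpos n)] at h2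
    have h3 := hπpos n
    rw [div_mul_eq_mul_div, le_div_iff₀ hα]
    nlinarith
  intro n
  cases n with
  | zero => rw [hg0]; exact hbnd 0
  | succ k => exact hbnd k

/-- For every 1-Lipschitz `f : ℕ → ℝ` and every `n`, the Stein solution of the
PBD(α;0,β,1) Stein equation satisfies `|g_f n| ≤ (1/α) ∑_{k≥1} k π_k`; for `f₁ k = -k` the
bound is attained at `n = 1`; consequently the supremum over all 1-Lipschitz `f` and all `n`
of `|g_f n|` equals `(1/α) ∑_{k≥1} k π_k`. -/
theorem stmt_0 (α β : ℝ) (hα : 0 < α) (hβ : 0 < β)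
    (C : ℝ) (hC : 0 < C) (π : ℕ → ℝ)
    (hπ : ∀ n : ℕ, π n =
      C * α ^ n / ∏ i ∈ Finset.range n, (β * ((i : ℝ) + 1) + ((i : ℝ) + 1) * (i : ℝ)))
    (hπ1 : ∑' n, π n = 1)
    (f : ℕ → ℝ) (hf : ∀ x y : ℕ, |f x - f y| ≤ |(x : ℝ) - (y : ℝ)|)
    (hfs : Summable fun n => |f n| * π n)
    (g : ℕ → ℝ) (hg0 : g 0 = g 1)
    (hg : ∀ n : ℕ, α * g (n + 1) - (β * (n : ℝ) + (n : ℝ) * ((n : ℝ) - 1)) * g n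
      = f n - ∑' k, f k * π k)
    (g₁ : ℕ → ℝ) (hg₁0 : g₁ 0 = g₁ 1)
    (hg₁ : ∀ n : ℕ, α * g₁ (n + 1) - (β * (n : ℝ) + (n : ℝ) * ((n : ℝ) - 1)) * g₁ n
      = -(n : ℝ) - ∑' k : ℕ, -(k : ℝ) * π k) :
    (∀ n : ℕ, |g n| ≤ (1 / α) * ∑' k : ℕ, (k : ℝ) * π k) ∧
    g₁ 1 = (1 / α) * ∑' k : ℕ, (k : ℝ) * π k ∧
    IsGreatest {x : ℝ | ∃ f' g' : ℕ → ℝ,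
        (∀ u v : ℕ, |f' u - f' v| ≤ |(u : ℝ) - (v : ℝ)|) ∧
        (Summable fun n => |f' n| * π n) ∧ g' 0 = g' 1 ∧
        (∀ n : ℕ, α * g' (n + 1) - (β * (n : ℝ) + (n : ℝ) * ((n : ℝ) - 1)) * g' n
          = f' n - ∑' k, f' k * π k) ∧
        ∃ n : ℕ, x = |g' n|}
      ((1 / α) * ∑' k : ℕ, (k : ℝ) * π k) := by
  have hπpos : ∀ n : ℕ, 0 < π n := by
    intro n
    rw [hπ n]
    have hp : 0 < ∏ i ∈ Finset.range n, (β * ((i : ℝ) + 1) + ((i : ℝ) + 1) * (i : ℝ)) := by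
      apply Finset.prod_pos
      intro i _
      have h1 : (0:ℝ) ≤ (i:ℝ) := Nat.cast_nonneg i
      nlinarith
    positivity
  have hmnn : 0 ≤ ∑' k : ℕ, (k : ℝ) * π k :=
    tsum_nonneg fun k => mul_nonneg (Nat.cast_nonneg _) (hπpos k).le
  -- g₁ 1 value
  have h0 := hg₁ 0
  simp only [Nat.cast_zero, mul_zero, zero_mul, sub_zero, zero_sub, neg_zero, zero_add,
    neg_mul, tsum_neg, sub_neg_eq_add, zero_mul, zero_add] at h0
  -- h0 : α * g₁ 1 = ∑' k, k * π k  (roughly)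
  have hg11 : g₁ 1 = (1 / α) * ∑' k : ℕ, (k : ℝ) * π k := by
    rw [one_div, inv_mul_eq_div, eq_div_iff hα.ne']
    linarith [h0]
  refine ⟨key α β hα hβ C hC π hπ hπ1 f hf hfs g hg0 hg, hg11, ?_, ?_⟩
  · -- membership
    refine ⟨fun k => -(k : ℝ), g₁, ?_, ?_, hg₁0, ?_, 1, ?_⟩
    · intro u v
      have he : -(u : ℝ) - (-(v : ℝ)) = v - u := by ring
      rw [he, abs_sub_comm]
    · exact (pbd_msum α β hα hβ C hC π hπ).congr fun n => by rw [abs_neg, Nat.abs_cast]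
    · exact hg₁
    · rw [hg11, abs_of_nonneg (by positivity)]
  · rintro x ⟨f', g', h1, h2, h3, h4, n, rfl⟩
    exact key α β hα hβ C hC π hπ hπ1 f' h1 h2 g' h3 h4 n
end

section
/- For every 1-Lipschitz function f : ℤ₊ → ℝ and every n ∈ ℤ₊, the Stein solution satisfies |g_f(n)| ≤ min( 1/(β + 2α/(α+2β+2)), (√(α + (1−β)²/4) + (1−β)/2)/α ). -/
open Filter Finset

lemma pbd_summable_pow (α β : ℝ) (hα : 0 < α) (hβ : 0 < β) (π : ℕ → ℝ)
    (hpos : ∀ n, 0 < π n)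
    (hrec : ∀ n : ℕ, ((n : ℝ) + 1) * (β + n) * π (n + 1) = α * π n)
    (k : ℕ) : Summable (fun n : ℕ => (n : ℝ) ^ k * π n) := by
  apply summable_of_ratio_norm_eventually_le (r := 1/2) (by norm_num)
  obtain ⟨N, hN⟩ := exists_nat_ge (2 ^ (k + 1) * α)
  filter_upwards [eventually_ge_atTop (max N 1)] with n hn
  have hn1 : (1 : ℕ) ≤ n := le_trans (le_max_right N 1) hn
  have hnN : (N : ℝ) ≤ n := Nat.cast_le.mpr (le_trans (le_max_left N 1) hn)
  have hn1' : (1 : ℝ) ≤ n := by exact_mod_cast hn1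
  have hd : (0:ℝ) < ((n : ℝ) + 1) * (β + n) := by positivity
  have hπn := hpos n
  have hπn1 := hpos (n + 1)
  have hre := hrec n
  have h2 : ((n : ℝ) + 1) ^ k ≤ 2 ^ k * (n : ℝ) ^ k := by
    calc ((n : ℝ) + 1) ^ k ≤ (2 * n) ^ k := by
          apply pow_le_pow_left₀ (by linarith) (by linarith)
      _ = 2 ^ k * (n : ℝ) ^ k := by rw [mul_pow]
  have h3 : 2 ^ (k + 1) * α ≤ ((n : ℝ) + 1) * (β + n) := by
    have : (2:ℝ) ^ (k+1) * α ≤ (n : ℝ) := le_trans hN hnN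
    nlinarith [hβ, hα]
  have key : ((n : ℝ) + 1) ^ k * π (n + 1) ≤ 1/2 * ((n : ℝ) ^ k * π n) := by
    have hπ1eq : π (n + 1) = α * π n / (((n : ℝ) + 1) * (β + n)) := by
      field_simp
      linarith [hre]
    rw [hπ1eq]
    rw [show ((n:ℝ)+1)^k * (α * π n / (((n:ℝ)+1)*(β+(n:ℝ)))) = ((n:ℝ)+1)^k * (α * π n) / (((n:ℝ)+1)*(β+(n:ℝ))) from by ring, div_le_iff₀ hd]
    have e1 : ((n : ℝ) + 1) ^ k * (α * π n) ≤ 2 ^ k * (n : ℝ) ^ k * (α * π n) := by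
      apply mul_le_mul_of_nonneg_right h2; positivity
    have e2 : 2 ^ k * (n : ℝ) ^ k * (α * π n) ≤ 1/2 * ((n : ℝ) ^ k * π n) * (((n : ℝ) + 1) * (β + n)) := by
      have hb : (n:ℝ)^k * π n * (2^k * α) ≤ (n:ℝ)^k * π n * (1/2 * (((n : ℝ) + 1) * (β + n))) := by
        apply mul_le_mul_of_nonneg_left _ (by positivity)
        have h3' : 2*((2:ℝ)^k*α) ≤ ((n : ℝ) + 1) * (β + n) := by
          calc 2*((2:ℝ)^k*α) = 2^(k+1)*α := by ring
            _ ≤ _ := h3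
        linarith
      nlinarith [hb]
    linarith
  push_cast
  rw [Real.norm_eq_abs, Real.norm_eq_abs, abs_of_pos (by positivity), abs_of_pos (by positivity)]
  exact key

lemma pbd_shift (α β : ℝ) (π : ℕ → ℝ)
    (hrec : ∀ n : ℕ, ((n : ℝ) + 1) * (β + n) * π (n + 1) = α * π n)
    (φ : ℕ → ℝ)
    (hS : Summable (fun m : ℕ => φ m * ((β * m + m * ((m : ℝ) - 1)) * π m))) :
    ∑' m : ℕ, φ m * ((β * m + m * ((m : ℝ) - 1)) * π m)
      = α * ∑' m : ℕ, φ (m + 1) * π m := by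
  rw [Summable.tsum_eq_zero_add hS]
  have h0 : φ 0 * ((β * (0:ℕ) + (0:ℕ) * (((0:ℕ) : ℝ) - 1)) * π 0) = 0 := by
    norm_num
  have hterm : ∀ m : ℕ, φ (m + 1) * ((β * (↑(m+1) : ℝ) + (↑(m+1) : ℝ) * ((↑(m+1) : ℝ) - 1)) * π (m + 1))
      = α * (φ (m + 1) * π m) := by
    intro m
    have h := hrec m
    push_cast
    linear_combination φ (m + 1) * h
  calc φ 0 * ((β * (0:ℕ) + (0:ℕ) * (((0:ℕ):ℝ) - 1)) * π 0)
        + ∑' m : ℕ, φ (m+1) * ((β * (↑(m+1):ℝ) + (↑(m+1):ℝ) * ((↑(m+1):ℝ) - 1)) * π (m+1))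
      = ∑' m : ℕ, α * (φ (m+1) * π m) := by rw [h0, zero_add, tsum_congr hterm]
    _ = α * ∑' m : ℕ, φ (m+1) * π m := tsum_mul_left


set_option maxHeartbeats 1000000 in
/-- bound on `|g_f n|` for the PBD(α;0,β,1) Stein solution. -/
theorem stmt_1
    (α β : ℝ) (hα : 0 < α) (hβ : 0 < β)
    (C : ℝ) (hC : 0 < C) (π : ℕ → ℝ)
    (hπ : ∀ n : ℕ, π n =
      C * α ^ n / ∏ i ∈ Finset.range n, (β * ((i : ℝ) + 1) + ((i : ℝ) + 1) * (i : ℝ)))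
    (hπ1 : ∑' n, π n = 1)
    (f : ℕ → ℝ) (hf : ∀ x y : ℕ, |f x - f y| ≤ |(x : ℝ) - (y : ℝ)|)
    (hfs : Summable fun n => |f n| * π n)
    (g : ℕ → ℝ) (hg0 : g 0 = g 1)
    (hg : ∀ n : ℕ, α * g (n + 1) - (β * (n : ℝ) + (n : ℝ) * ((n : ℝ) - 1)) * g n
      = f n - ∑' k, f k * π k)
    :
    ∀ n : ℕ, |g n| ≤
      min (1 / (β + 2 * α / (α + 2 * β + 2)))
        ((Real.sqrt (α + (1 - β) ^ 2 / 4) + (1 - β) / 2) / α) := by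
  -- ## Setup
  have hprod : ∀ n : ℕ, 0 < ∏ i ∈ range n, (β * ((i : ℝ) + 1) + ((i : ℝ) + 1) * i) := by
    intro n
    apply Finset.prod_pos
    intro i _
    have : (0:ℝ) ≤ (i:ℝ) := Nat.cast_nonneg i
    nlinarith
  have hpos : ∀ n, 0 < π n := by
    intro n; rw [hπ n]
    have := hprod n
    positivity
  have hrec : ∀ n : ℕ, ((n : ℝ) + 1) * (β + n) * π (n + 1) = α * π n := by
    intro n
    have h2 := hπ (n + 1)
    rw [Finset.prod_range_succ] at h2
    rw [hπ n, h2]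
    have hPn := (hprod n).ne'
    have hfn : (0:ℝ) < β * ((n:ℝ) + 1) + ((n:ℝ) + 1) * n := by
      have : (0:ℝ) ≤ (n:ℝ) := Nat.cast_nonneg n
      nlinarith
    field_simp
    ring
  have Spow := fun k => pbd_summable_pow α β hα hβ π hpos hrec k
  have Sπ : Summable π := by
    have := Spow 0
    simpa using this
  have Scomb : ∀ a0 a1 a2 a3 a4 : ℝ, Summable (fun n : ℕ =>
      (a0 + a1 * n + a2 * (n:ℝ)^2 + a3 * (n:ℝ)^3 + a4 * (n:ℝ)^4) * π n) := by
    intro a0 a1 a2 a3 a4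
    have h := ((((Spow 0).mul_left a0).add ((Spow 1).mul_left a1)).add
      ((Spow 2).mul_left a2)).add (((Spow 3).mul_left a3).add ((Spow 4).mul_left a4))
    apply h.congr
    intro n; push_cast; ring
  have Sμ : Summable (fun n : ℕ => (n:ℝ) * π n) := (Spow 1).congr (fun n => by ring)
  have Sm2 : Summable (fun n : ℕ => (n:ℝ) * ((n:ℝ) - 1) * π n) :=
    (Scomb 0 (-1) 1 0 0).congr (fun n => by ring)
  have Sm3 : Summable (fun n : ℕ => (n:ℝ) * ((n:ℝ) - 1) * ((n:ℝ) - 2) * π n) :=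
    (Scomb 0 2 (-3) 1 0).congr (fun n => by ring)
  have Sd : Summable (fun m : ℕ => (β * m + m * ((m:ℝ) - 1)) * π m) :=
    (Scomb 0 (β - 1) 1 0 0).congr (fun n => by ring)
  have SWf : Summable (fun m : ℕ => ((m:ℝ) - (∑' n : ℕ, (n:ℝ) * π n)) * π m) :=
    (Scomb (-(∑' n : ℕ, (n:ℝ) * π n)) 1 0 0 0).congr (fun n => by ring)
  set μ := ∑' n : ℕ, (n:ℝ) * π n with hμdef
  set m2 := ∑' n : ℕ, (n:ℝ) * ((n:ℝ) - 1) * π n with hm2def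
  set m3 := ∑' n : ℕ, (n:ℝ) * ((n:ℝ) - 1) * ((n:ℝ) - 2) * π n with hm3def
  -- d-sum identity
  have hdsum : ∑' m : ℕ, (β * m + m * ((m:ℝ) - 1)) * π m = α := by
    have h := pbd_shift α β π hrec (fun _ => 1) (Sd.congr (fun m => by ring))
    simp only [one_mul] at h
    rw [h, hπ1, mul_one]
  have I3 : β * μ + m2 = α := by
    rw [← hdsum]
    rw [show (fun m : ℕ => (β * m + m * ((m:ℝ) - 1)) * π m)
        = (fun m : ℕ => β * ((m:ℝ) * π m) + (m:ℝ) * ((m:ℝ) - 1) * π m) from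
      funext (fun m => by ring)]
    rw [Summable.tsum_add ((Sμ.mul_left β)) Sm2, tsum_mul_left]
  have I4 : α * μ = m3 + (β + 1) * m2 := by
    have h := pbd_shift α β π hrec (fun m => (m:ℝ) - 1)
      ((Scomb 0 (1 - β) (β - 2) 1 0).congr (fun m => by ring))
    have hR : ∑' m : ℕ, ((↑(m+1):ℝ) - 1) * π m = μ := by
      rw [hμdef]; apply tsum_congr; intro m; push_cast; ring
    rw [hR] at h
    rw [← h]
    rw [show (fun m : ℕ => ((m:ℝ) - 1) * ((β * m + m * ((m:ℝ) - 1)) * π m))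
        = (fun m : ℕ => (m:ℝ) * ((m:ℝ) - 1) * ((m:ℝ) - 2) * π m
            + (β + 1) * ((m:ℝ) * ((m:ℝ) - 1) * π m)) from
      funext (fun m => by ring)]
    rw [Summable.tsum_add Sm3 (Sm2.mul_left (β + 1)), tsum_mul_left]
  have I5 : 2 * m3 ≤ α * m2 := by
    have h := pbd_shift α β π hrec (fun m => ((m:ℝ) - 1) * ((m:ℝ) - 2))
      ((Scomb 0 (2*β - 2) (5 - 3*β) (β - 4) 1).congr (fun m => by ring))
    have hR : ∑' m : ℕ, ((↑(m+1):ℝ) - 1) * ((↑(m+1):ℝ) - 2) * π m = m2 := by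
      rw [hm2def]; apply tsum_congr; intro m; push_cast; ring
    rw [show (fun m : ℕ => ((m:ℝ) - 1) * ((m:ℝ) - 2) * ((β * m + m * ((m:ℝ) - 1)) * π m))
        = (fun m : ℕ => 2 * ((m:ℝ) * ((m:ℝ) - 1) * ((m:ℝ) - 2) * π m)
            + (m:ℝ) * ((m:ℝ) - 1) * ((m:ℝ) - 2) * (β + (m:ℝ) - 3) * π m) from
      funext (fun m => by ring)] at h
    have SX : Summable (fun m : ℕ => (m:ℝ) * ((m:ℝ) - 1) * ((m:ℝ) - 2) * (β + (m:ℝ) - 3) * π m) :=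
      (Scomb 0 (2*β - 6) (11 - 3*β) (β - 6) 1).congr (fun m => by ring)
    rw [Summable.tsum_add (Sm3.mul_left 2) SX, tsum_mul_left] at h
    have hXnn : 0 ≤ ∑' m : ℕ, (m:ℝ) * ((m:ℝ) - 1) * ((m:ℝ) - 2) * (β + (m:ℝ) - 3) * π m := by
      apply tsum_nonneg
      intro m
      match m with
      | 0 => norm_num
      | 1 => norm_num
      | 2 => norm_num
      | (m+3) =>
        have h1 := (hpos (m+3)).le
        have h2 : (0:ℝ) ≤ (m:ℝ) := Nat.cast_nonneg m
        push_cast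
        have : (0:ℝ) ≤ ((m:ℝ)+3) * ((m:ℝ)+3-1) * ((m:ℝ)+3-2) * (β + ((m:ℝ)+3) - 3) := by
          apply mul_nonneg (mul_nonneg (mul_nonneg (by linarith) (by linarith)) (by linarith))
          linarith
        exact mul_nonneg this h1
    -- h : 2 * m3 + X = α * m2 (after hR)
    rw [hR] at h
    linarith
  have hm3nn : 0 ≤ m3 := by
    rw [hm3def]
    apply tsum_nonneg
    intro m
    match m with
    | 0 => norm_num
    | 1 => norm_num
    | 2 => norm_num
    | (m+3) =>
      have h1 := (hpos (m+3)).le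
      have h2 : (0:ℝ) ≤ (m:ℝ) := Nat.cast_nonneg m
      push_cast
      apply mul_nonneg _ h1
      apply mul_nonneg (mul_nonneg (by linarith) (by linarith)) (by linarith)
  have hμnn : 0 ≤ μ := by
    rw [hμdef]; exact tsum_nonneg (fun m => mul_nonneg (Nat.cast_nonneg m) (hpos m).le)
  have I6 : μ^2 ≤ m2 + μ := by
    have hnn : 0 ≤ ∑' m : ℕ, ((m:ℝ) - μ)^2 * π m :=
      tsum_nonneg (fun m => mul_nonneg (sq_nonneg _) (hpos m).le)
    have hexp : ∑' m : ℕ, ((m:ℝ) - μ)^2 * π m = m2 + ((1 - 2*μ) * μ + μ^2 * 1) := by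
      rw [show (fun m : ℕ => ((m:ℝ) - μ)^2 * π m)
          = (fun m : ℕ => (m:ℝ) * ((m:ℝ) - 1) * π m
              + ((1 - 2*μ) * ((m:ℝ) * π m) + μ^2 * π m)) from
        funext (fun m => by ring)]
      rw [Summable.tsum_add Sm2 ((Sμ.mul_left (1 - 2*μ)).add (Sπ.mul_left (μ^2))),
        Summable.tsum_add (Sμ.mul_left (1 - 2*μ)) (Sπ.mul_left (μ^2)),
        tsum_mul_left, tsum_mul_left, hπ1]
    nlinarith [hnn, hexp]
  -- ## Constants
  set s := Real.sqrt (α + (1 - β)^2/4) with hsdef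
  have hs2 : s^2 = α + (1 - β)^2/4 := Real.sq_sqrt (by positivity)
  have hs0 : 0 < s := Real.sqrt_pos.mpr (by positivity)
  set x' := s + (1 - β)/2 with hx'def
  have hx'pos : 0 < x' := by
    rw [hx'def]
    nlinarith [hs2, hs0, hα, sq_nonneg (s - (β-1)/2)]
  have hxq : x' * (x' + β - 1) = α := by
    rw [hx'def]; linear_combination hs2
  have hμx : μ ≤ x' := by
    have h1 : μ^2 + (β - 1) * μ ≤ α := by nlinarith [I6, I3]
    rw [hx'def]
    nlinarith [sq_nonneg (μ + (β-1)/2 - s), hs2, hs0, h1]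
  set z := β + 2 * α / (α + 2*β + 2) with hzdef
  have hz0 : 0 < z := by
    rw [hzdef]; positivity
  have hμz : μ * z ≤ α := by
    have hden : (0:ℝ) < α + 2*β + 2 := by linarith
    have h2 : 2 * α * μ ≤ (α + 2*β + 2) * m2 := by linarith [I5, I4]
    have h3 : μ * z * (α + 2*β + 2) ≤ α * (α + 2*β + 2) := by
      have : μ * z * (α + 2*β + 2) = μ * β * (α + 2*β + 2) + 2 * α * μ := by
        rw [hzdef]; field_simp
      rw [this]
      nlinarith [h2, I3]
    nlinarith [h3, hden]
  set c := min (α / z) x' with hcdef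
  have hcμ : μ ≤ c := by
    apply le_min _ hμx
    rw [le_div_iff₀ hz0]
    exact hμz
  have hcpos : 0 < c := lt_min (by positivity) hx'pos
  have hgoal_eq : min (1 / z) (x' / α) = c / α := by
    rw [hcdef, ← min_div_div_right hα.le]
    congr 1
    rw [div_div, mul_comm z α, ← div_div, div_self hα.ne']
  -- ## Stein solution representation
  set pf := ∑' (k : ℕ), f k * π k with hpfdef
  have Sf : Summable (fun k : ℕ => f k * π k) := by
    apply Summable.of_abs
    apply hfs.congr
    intro k
    rw [abs_mul, abs_of_pos (hpos k)]
  have SfP : Summable (fun k : ℕ => (f k - pf) * π k) := by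
    apply (Sf.sub (Sπ.mul_left pf)).congr
    intro k; ring
  have hgF : ∀ n : ℕ, α * π n * g (n + 1) = ∑ k ∈ range (n + 1), (f k - pf) * π k := by
    intro n
    induction n with
    | zero =>
      have h0 := hg 0
      norm_num at h0
      rw [Finset.sum_range_one]
      have : (((0:ℕ):ℝ) - μ) = -μ := by norm_num
      push_cast
      linear_combination π 0 * h0
    | succ n ih =>
      have hstep := hg (n + 1)
      have hd : (β * (↑(n+1):ℝ) + (↑(n+1):ℝ) * ((↑(n+1):ℝ) - 1)) * π (n + 1) = α * π n := by
        have h := hrec n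
        push_cast
        linear_combination h
      rw [Finset.sum_range_succ, ← ih]
      push_cast at hstep hd ⊢
      linear_combination π (n+1) * hstep + g (n+1) * hd
  -- ## Core bound
  have hqx : ∀ x : ℝ, (α * x - c * (x * (β + x - 1)) + α * (c - μ)) =
      (α * x - c * (x * (β + x - 1)) + α * (c - μ)) := fun _ => rfl
  have Sq : Summable (fun m : ℕ => (α * (m:ℝ) - c * ((m:ℝ) * (β + (m:ℝ) - 1)) + α * (c - μ)) * π m) :=
    (Scomb (α*(c-μ)) (α - c*(β-1)) (-c) 0 0).congr (fun m => by push_cast; ring)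
  have hWtot : ∑' m : ℕ, ((m:ℝ) - μ) * π m = 0 := by
    have e : (fun m : ℕ => ((m:ℝ) - μ) * π m) = fun m : ℕ => (m:ℝ) * π m - μ * π m :=
      funext fun m => by ring
    rw [e, Summable.tsum_sub Sμ (Sπ.mul_left μ), tsum_mul_left, hπ1, ← hμdef]
    ring
  have hqtot : ∑' m : ℕ, (α * (m:ℝ) - c * ((m:ℝ) * (β + (m:ℝ) - 1)) + α * (c - μ)) * π m = 0 := by
    have e : (fun m : ℕ => (α * (m:ℝ) - c * ((m:ℝ) * (β + (m:ℝ) - 1)) + α * (c - μ)) * π m)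
        = fun m : ℕ => (α * (((m:ℝ) - μ) * π m) + (α*c) * π m)
            - c * ((β * m + m * ((m:ℝ) - 1)) * π m) :=
      funext fun m => by ring
    rw [e, Summable.tsum_sub ((SWf.mul_left α).add (Sπ.mul_left (α*c))) (Sd.mul_left c),
      Summable.tsum_add (SWf.mul_left α) (Sπ.mul_left (α*c)),
      tsum_mul_left, tsum_mul_left, tsum_mul_left, hWtot, hπ1, hdsum]
    ring
  have key : ∀ n : ℕ, |g (n + 1)| ≤ c / α := by
    intro n
    have Sshift : ∀ (G : ℕ → ℝ), Summable G → Summable (fun i : ℕ => G (i + (n+1))) :=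
      fun G hG => (summable_nat_add_iff (n+1)).2 hG
    have SQ : Summable (fun i : ℕ => π (i + (n+1))) := Sshift π Sπ
    have SWsh : Summable (fun i : ℕ => ((↑(i + (n+1)) : ℝ) - μ) * π (i + (n+1))) := Sshift _ SWf
    obtain ⟨Qn, hQdef⟩ : ∃ q, q = ∑' i : ℕ, π (i + (n+1)) := ⟨_, rfl⟩
    obtain ⟨Wn, hWdef⟩ : ∃ w, w = ∑' i : ℕ, ((↑(i + (n+1)) : ℝ) - μ) * π (i + (n+1)) := ⟨_, rfl⟩
    have hPQ : (∑ k ∈ range (n+1), π k) + Qn = 1 := by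
      rw [hQdef, Summable.sum_add_tsum_nat_add (n+1) Sπ, hπ1]
    have hWfin : ∑ k ∈ range (n+1), (μ - (k:ℝ)) * π k = Wn := by
      have h := Summable.sum_add_tsum_nat_add (f := fun m : ℕ => ((m:ℝ) - μ) * π m) (n+1) SWf
      rw [hWtot] at h
      have h2 : ∑ k ∈ range (n+1), (μ - (k:ℝ)) * π k
          + ∑ k ∈ range (n+1), ((k:ℝ) - μ) * π k = 0 := by
        rw [← Finset.sum_add_distrib]
        apply Finset.sum_eq_zero
        intros; ring
      rw [hWdef]; linarith [h, h2]
    -- F decomposition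
    have Sjk : ∀ k : ℕ, Summable (fun j : ℕ => (f k - f j) * π j) :=
      fun k => ((Sπ.mul_left (f k)).sub Sf).congr (fun j => by ring)
    have hfk : ∀ k : ℕ, f k - pf = ∑' j : ℕ, (f k - f j) * π j := by
      intro k
      have e : (fun j : ℕ => (f k - f j) * π j) = fun j : ℕ => f k * π j - f j * π j :=
        funext fun j => by ring
      rw [e, Summable.tsum_sub (Sπ.mul_left (f k)) Sf, tsum_mul_left, hπ1, ← hpfdef, mul_one]
    have hsplitF : ∑ k ∈ range (n+1), (f k - pf) * π k
        = (∑ k ∈ range (n+1), (∑ j ∈ range (n+1), (f k - f j) * π j) * π k)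
          + ∑ k ∈ range (n+1), (∑' i : ℕ, (f k - f (i + (n+1))) * π (i + (n+1))) * π k := by
      rw [← Finset.sum_add_distrib]
      apply Finset.sum_congr rfl
      intro k _
      rw [hfk k, ← add_mul]
      congr 1
      exact (Summable.sum_add_tsum_nat_add (n+1) (Sjk k)).symm
    have hA : ∑ k ∈ range (n+1), (∑ j ∈ range (n+1), (f k - f j) * π j) * π k = 0 := by
      have e1 : ∑ k ∈ range (n+1), (∑ j ∈ range (n+1), (f k - f j) * π j) * π k
          = ∑ k ∈ range (n+1), ∑ j ∈ range (n+1), (f k - f j) * (π j * π k) := by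
        apply Finset.sum_congr rfl
        intro k _
        rw [Finset.sum_mul]
        exact Finset.sum_congr rfl fun j _ => by ring
      have hcomm : ∑ k ∈ range (n+1), ∑ j ∈ range (n+1), (f k - f j) * (π j * π k)
          = ∑ k ∈ range (n+1), ∑ j ∈ range (n+1), (f j - f k) * (π k * π j) :=
        Finset.sum_comm
      have hzero : ∑ k ∈ range (n+1), ∑ j ∈ range (n+1), ((f k - f j) * (π j * π k)
          + (f j - f k) * (π k * π j)) = 0 := by
        apply Finset.sum_eq_zero
        intro k _
        apply Finset.sum_eq_zero
        intros; ring
      have hsplit2 : ∑ k ∈ range (n+1), ∑ j ∈ range (n+1), ((f k - f j) * (π j * π k)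
          + (f j - f k) * (π k * π j))
          = ∑ k ∈ range (n+1), ∑ j ∈ range (n+1), (f k - f j) * (π j * π k)
            + ∑ k ∈ range (n+1), ∑ j ∈ range (n+1), (f j - f k) * (π k * π j) := by
        rw [← Finset.sum_add_distrib]
        apply Finset.sum_congr rfl
        intro k _
        rw [← Finset.sum_add_distrib]
      rw [e1]
      linarith [hcomm, hzero, hsplit2]
    -- bound on tail part
    have Sabs : ∀ k : ℕ, Summable (fun i : ℕ => |f k - f (i + (n+1))| * π (i + (n+1))) := by
      intro k
      apply Summable.of_nonneg_of_le (fun i => mul_nonneg (abs_nonneg _) (hpos _).le)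
        _ (((Sshift π Sπ).mul_left (|f k|)).add (Sshift (fun m => |f m| * π m) hfs))
      intro i
      have htri : |f k - f (i + (n+1))| ≤ |f k| + |f (i + (n+1))| := by
        have h := abs_add_le (f k) (-(f (i + (n+1))))
        rw [abs_neg] at h
        simpa [sub_eq_add_neg] using h
      calc |f k - f (i + (n+1))| * π (i + (n+1))
          ≤ (|f k| + |f (i + (n+1))|) * π (i + (n+1)) :=
            mul_le_mul_of_nonneg_right htri (hpos _).le
        _ = |f k| * π (i + (n+1)) + |f (i + (n+1))| * π (i + (n+1)) := by ring
    have Slin : ∀ k : ℕ, Summable (fun i : ℕ => ((↑(i + (n+1)):ℝ) - k) * π (i + (n+1))) :=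
      fun k => Sshift (fun m : ℕ => ((m:ℝ) - k) * π m)
        ((Scomb (-(k:ℝ)) 1 0 0 0).congr fun m => by push_cast; ring)
    have hinner : ∀ k : ℕ, ∑' i : ℕ, ((↑(i + (n+1)):ℝ) - k) * π (i + (n+1))
        = Wn + (μ - k) * Qn := by
      intro k
      have e : (fun i : ℕ => ((↑(i + (n+1)):ℝ) - k) * π (i + (n+1)))
          = fun i : ℕ => ((↑(i + (n+1)):ℝ) - μ) * π (i + (n+1)) + (μ - k) * π (i + (n+1)) :=
        funext fun i => by ring
      rw [e, Summable.tsum_add SWsh (SQ.mul_left (μ - (k:ℝ))), tsum_mul_left, ← hWdef, ← hQdef]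
    have hBbound : |∑ k ∈ range (n+1), (∑' i : ℕ, (f k - f (i + (n+1))) * π (i + (n+1))) * π k| ≤ Wn := by
      calc |∑ k ∈ range (n+1), (∑' i : ℕ, (f k - f (i + (n+1))) * π (i + (n+1))) * π k|
          ≤ ∑ k ∈ range (n+1), |(∑' i : ℕ, (f k - f (i + (n+1))) * π (i + (n+1))) * π k| :=
            Finset.abs_sum_le_sum_abs _ _
        _ ≤ ∑ k ∈ range (n+1), (Wn + (μ - (k:ℝ)) * Qn) * π k := by
            apply Finset.sum_le_sum
            intro k hk
            rw [abs_mul, abs_of_pos (hpos k)]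
            apply mul_le_mul_of_nonneg_right _ (hpos k).le
            have hnormeq : ∀ i : ℕ, ‖(f k - f (i + (n+1))) * π (i + (n+1))‖
                = |f k - f (i + (n+1))| * π (i + (n+1)) := by
              intro i
              rw [Real.norm_eq_abs, abs_mul, abs_of_pos (hpos _)]
            have hkn : (k:ℝ) ≤ n := by
              have := Nat.lt_succ_iff.mp (Finset.mem_range.mp hk)
              exact_mod_cast this
            calc |∑' i : ℕ, (f k - f (i + (n+1))) * π (i + (n+1))|
                ≤ ∑' i : ℕ, |f k - f (i + (n+1))| * π (i + (n+1)) := by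
                  have h := norm_tsum_le_tsum_norm
                    (f := fun i : ℕ => (f k - f (i + (n+1))) * π (i + (n+1)))
                    ((Sabs k).congr (fun i => (hnormeq i).symm))
                  rw [Real.norm_eq_abs] at h
                  calc |∑' i : ℕ, (f k - f (i + (n+1))) * π (i + (n+1))|
                      ≤ ∑' i : ℕ, ‖(f k - f (i + (n+1))) * π (i + (n+1))‖ := h
                    _ = ∑' i : ℕ, |f k - f (i + (n+1))| * π (i + (n+1)) :=
                        tsum_congr hnormeq
              _ ≤ ∑' i : ℕ, ((↑(i + (n+1)):ℝ) - k) * π (i + (n+1)) := by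
                  apply Summable.tsum_le_tsum _ (Sabs k) (Slin k)
                  intro i
                  have hge : (k:ℝ) ≤ (↑(i + (n+1)):ℝ) := by
                    push_cast
                    have : (0:ℝ) ≤ (i:ℝ) := Nat.cast_nonneg i
                    linarith
                  have hb := hf k (i + (n+1))
                  have habs : |(k:ℝ) - (↑(i + (n+1)):ℝ)| = (↑(i + (n+1)):ℝ) - k := by
                    rw [abs_sub_comm, abs_of_nonneg (by linarith)]
                  apply mul_le_mul_of_nonneg_right _ (hpos _).le
                  rw [← habs]
                  exact hb
              _ = Wn + (μ - (k:ℝ)) * Qn := hinner k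
        _ = (∑ k ∈ range (n+1), π k) * Wn + Qn * ∑ k ∈ range (n+1), (μ - (k:ℝ)) * π k := by
            rw [Finset.sum_mul, Finset.mul_sum, ← Finset.sum_add_distrib]
            exact Finset.sum_congr rfl fun k _ => by ring
        _ = (∑ k ∈ range (n+1), π k) * Wn + Qn * Wn := by rw [hWfin]
        _ = Wn := by linear_combination Wn * hPQ
    have hFW : |∑ k ∈ range (n+1), (f k - pf) * π k| ≤ Wn := by
      rw [hsplitF, hA, zero_add]
      exact hBbound
    -- the tail identity for the quadratic
    have hdtail : ∑' i : ℕ, (β * (↑(i + (n+1)):ℝ) + (↑(i + (n+1)):ℝ) * ((↑(i + (n+1)):ℝ) - 1)) * π (i + (n+1))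
        = α * π n + α * Qn := by
      have hterm : ∀ i : ℕ, (β * (↑(i + (n+1)):ℝ) + (↑(i + (n+1)):ℝ) * ((↑(i + (n+1)):ℝ) - 1)) * π (i + (n+1))
          = α * π (i + n) := by
        intro i
        have h := hrec (i + n)
        have hidx : i + n + 1 = i + (n+1) := by omega
        rw [hidx] at h
        push_cast at h ⊢
        linear_combination h
      rw [tsum_congr hterm]
      have SS : Summable (fun i : ℕ => α * π (i + n)) := ((summable_nat_add_iff n).2 Sπ).mul_left α
      rw [Summable.tsum_eq_zero_add SS]
      have h0 : α * π (0 + n) = α * π n := by rw [Nat.zero_add]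
      have h1 : ∑' b : ℕ, α * π (b + 1 + n) = α * Qn := by
        rw [hQdef, ← tsum_mul_left]
        apply tsum_congr
        intro b
        rw [show b + 1 + n = b + (n+1) from by omega]
      rw [h0, h1]
    have Shtail : Summable (fun i : ℕ =>
        (α * (↑(i + (n+1)):ℝ) - c * ((↑(i + (n+1)):ℝ) * (β + (↑(i + (n+1)):ℝ) - 1)) + α * (c - μ)) * π (i + (n+1))) :=
      Sshift _ Sq
    have hδ : α * Wn - c * (α * π n) = ∑' i : ℕ,
        (α * (↑(i + (n+1)):ℝ) - c * ((↑(i + (n+1)):ℝ) * (β + (↑(i + (n+1)):ℝ) - 1)) + α * (c - μ)) * π (i + (n+1)) := by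
      have e : (fun i : ℕ =>
          (α * (↑(i + (n+1)):ℝ) - c * ((↑(i + (n+1)):ℝ) * (β + (↑(i + (n+1)):ℝ) - 1)) + α * (c - μ)) * π (i + (n+1)))
          = fun i : ℕ => (α * (((↑(i + (n+1)):ℝ) - μ) * π (i + (n+1))) + (α*c) * π (i + (n+1)))
            - c * ((β * (↑(i + (n+1)):ℝ) + (↑(i + (n+1)):ℝ) * ((↑(i + (n+1)):ℝ) - 1)) * π (i + (n+1))) :=
        funext fun i => by ring
      rw [e, Summable.tsum_sub ((SWsh.mul_left α).add (SQ.mul_left (α*c))) ((Sshift _ Sd).mul_left c),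
        Summable.tsum_add (SWsh.mul_left α) (SQ.mul_left (α*c)),
        tsum_mul_left, tsum_mul_left, tsum_mul_left, hdtail, ← hWdef, ← hQdef]
      ring
    have htail_le : ∑' i : ℕ,
        (α * (↑(i + (n+1)):ℝ) - c * ((↑(i + (n+1)):ℝ) * (β + (↑(i + (n+1)):ℝ) - 1)) + α * (c - μ)) * π (i + (n+1)) ≤ 0 := by
      by_cases hcase : ∀ i : ℕ,
          α * (↑(i + (n+1)):ℝ) - c * ((↑(i + (n+1)):ℝ) * (β + (↑(i + (n+1)):ℝ) - 1)) + α * (c - μ) ≤ 0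
      · apply tsum_nonpos
        intro i
        exact mul_nonpos_iff.mpr (Or.inr ⟨hcase i, (hpos _).le⟩)
      · push_neg at hcase
        obtain ⟨i0, hi0⟩ := hcase
        have hy0 : (0:ℝ) < (↑(i0 + (n+1)):ℝ) := by
          have : 0 < i0 + (n+1) := by omega
          exact_mod_cast this
        have hq0nn : (0:ℝ) ≤ α * (c - μ) := mul_nonneg hα.le (by linarith [hcμ])
        have hfin : 0 ≤ ∑ m ∈ range (n+1), (α * (m:ℝ) - c * ((m:ℝ) * (β + (m:ℝ) - 1)) + α * (c - μ)) * π m := by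
          apply Finset.sum_nonneg
          intro m hm
          apply mul_nonneg _ (hpos m).le
          have hmn : (m:ℝ) ≤ (↑(i0 + (n+1)):ℝ) := by
            have : m ≤ i0 + (n+1) := by
              have := Finset.mem_range.mp hm
              omega
            exact_mod_cast this
          have hm0 : (0:ℝ) ≤ (m:ℝ) := Nat.cast_nonneg m
          have hid : (↑(i0 + (n+1)):ℝ) * (α * (m:ℝ) - c * ((m:ℝ) * (β + (m:ℝ) - 1)) + α * (c - μ))
              = ((↑(i0 + (n+1)):ℝ) - (m:ℝ)) * (α * (c - μ))
                + (m:ℝ) * (α * (↑(i0 + (n+1)):ℝ) - c * ((↑(i0 + (n+1)):ℝ) * (β + (↑(i0 + (n+1)):ℝ) - 1)) + α * (c - μ))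
                + c * (m:ℝ) * (↑(i0 + (n+1)):ℝ) * ((↑(i0 + (n+1)):ℝ) - (m:ℝ)) := by ring
          have hA1 : 0 ≤ ((↑(i0 + (n+1)):ℝ) - (m:ℝ)) * (α * (c - μ)) :=
            mul_nonneg (by linarith) hq0nn
          have hA2 : 0 ≤ (m:ℝ) * (α * (↑(i0 + (n+1)):ℝ) - c * ((↑(i0 + (n+1)):ℝ) * (β + (↑(i0 + (n+1)):ℝ) - 1)) + α * (c - μ)) :=
            mul_nonneg hm0 hi0.le
          have hA3 : 0 ≤ c * (m:ℝ) * (↑(i0 + (n+1)):ℝ) * ((↑(i0 + (n+1)):ℝ) - (m:ℝ)) :=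
            mul_nonneg (mul_nonneg (mul_nonneg hcpos.le hm0) hy0.le) (by linarith)
          have h4 : (↑(i0 + (n+1)):ℝ) * 0 ≤ (↑(i0 + (n+1)):ℝ) * (α * (m:ℝ) - c * ((m:ℝ) * (β + (m:ℝ) - 1)) + α * (c - μ)) := by
            rw [mul_zero]
            linarith [hid, hA1, hA2, hA3]
          exact nonneg_of_mul_nonneg_right (by linarith [h4]) hy0
        have hsum := Summable.sum_add_tsum_nat_add
          (f := fun m : ℕ => (α * (m:ℝ) - c * ((m:ℝ) * (β + (m:ℝ) - 1)) + α * (c - μ)) * π m) (n+1) Sq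
        rw [hqtot] at hsum
        linarith [hfin, hsum]
    have hWc : Wn ≤ c * π n := by
      have h1 : α * Wn - c * (α * π n) ≤ 0 := by rw [hδ]; exact htail_le
      have h2 : α * Wn ≤ α * (c * π n) := by linarith
      exact le_of_mul_le_mul_left h2 hα
    have h1 := hgF n
    have h2 : |α * π n * g (n+1)| ≤ Wn := by rw [h1]; exact hFW
    have h3 : α * π n * |g (n+1)| ≤ c * π n := by
      have : α * π n * |g (n+1)| = |α * π n * g (n+1)| := by
        rw [abs_mul, abs_of_pos (mul_pos hα (hpos n))]
      rw [this]
      exact le_trans h2 hWc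
    rw [le_div_iff₀ hα]
    have hπn := hpos n
    have h4 : (|g (n+1)| * α) * π n ≤ c * π n := by
      rw [show (|g (n+1)| * α) * π n = α * π n * |g (n+1)| from by ring]
      exact h3
    exact le_of_mul_le_mul_right h4 hπn
  -- ## Conclusion
  intro n
  rw [hgoal_eq]
  match n with
  | 0 => rw [hg0]; exact key 0
  | (n+1) => exact key n
end

section
/- For every 1-Lipschitz function f : ℤ₊ → ℝ and every n ∈ ℤ₊, the Stein solution satisfies |g̃_f(n)| ≤ min( 1/(1 + 2ab/(a+2b+2)), (√(ab + (b−1)²/4) + (b−1)/2)/(ab) ). -/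
open Finset Filter

namespace Stmt4

noncomputable section

/-- death rates of PBD(a;0,1,b) -/
def lm (b : ℝ) (n : ℕ) : ℝ := (n : ℝ) + b * (n : ℝ) * ((n : ℝ) - 1)

structure Hyp (a b : ℝ) (π : ℕ → ℝ) : Prop where
  ha : 0 < a
  hb : 0 < b
  pos : ∀ n, 0 < π n
  rc : ∀ n : ℕ, a * π n = lm b (n + 1) * π (n + 1)
  one : ∑' n, π n = 1

variable {a b : ℝ} {π : ℕ → ℝ}

lemma lm_zero : lm b 0 = 0 := by simp [lm]

lemma fall2 (n : ℕ) : 0 ≤ (n:ℝ) * ((n:ℝ) - 1) := by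
  rcases n with _ | m
  · simp
  · push_cast
    nlinarith [Nat.cast_nonneg (α := ℝ) m]

lemma fall3 (n : ℕ) : 0 ≤ (n:ℝ) * ((n:ℝ) - 1) * ((n:ℝ) - 2) := by
  rcases n with _ | _ | m
  · simp
  · norm_num
  · push_cast
    have t : (0:ℝ) ≤ ((m:ℝ)+2)*((m:ℝ)+1)*(m:ℝ) := by positivity
    nlinarith [t]

lemma fall4 (n : ℕ) : 0 ≤ (n:ℝ) * ((n:ℝ) - 1) * ((n:ℝ) - 2) * ((n:ℝ) - 3) := by
  rcases n with _ | _ | _ | m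
  · simp
  · norm_num
  · norm_num
  · push_cast
    have t : (0:ℝ) ≤ ((m:ℝ)+3)*((m:ℝ)+2)*((m:ℝ)+1)*(m:ℝ) := by positivity
    nlinarith [t]

lemma lm_ge (hb : 0 < b) (n : ℕ) : (n:ℝ) ≤ lm b n := by
  have := fall2 n
  unfold lm
  nlinarith [hb.le]

lemma lm_pos (hb : 0 < b) {n : ℕ} (hn : 1 ≤ n) : 0 < lm b n := by
  have h1 : (1:ℝ) ≤ (n:ℝ) := by exact_mod_cast hn
  linarith [lm_ge hb n]

lemma lm_mono (hb : 0 < b) {m n : ℕ} (h : m ≤ n) : lm b m ≤ lm b n := by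
  rcases Nat.eq_zero_or_pos n with h0 | h0
  · have hm0 : m = 0 := Nat.le_zero.mp (h0 ▸ h)
    simp [hm0, h0]
  · have hm : (m:ℝ) ≤ (n:ℝ) := by exact_mod_cast h
    have h1 : (1:ℝ) ≤ (n:ℝ) := by exact_mod_cast h0
    have hm0 : (0:ℝ) ≤ (m:ℝ) := Nat.cast_nonneg m
    unfold lm
    nlinarith [hb.le, mul_nonneg (show (0:ℝ) ≤ (n:ℝ)-(m:ℝ) by linarith)
      (show (0:ℝ) ≤ (n:ℝ)+(m:ℝ)-1 by linarith)]

lemma summable_pi (h : Hyp a b π) : Summable π := by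
  by_contra hs
  have h1 := h.one
  rw [tsum_eq_zero_of_not_summable hs] at h1
  linarith

lemma pi_succ (h : Hyp a b π) (n : ℕ) : π (n+1) = a * π n / lm b (n+1) := by
  have hlm : 0 < lm b (n+1) := lm_pos h.hb (Nat.le_add_left 1 n)
  rw [eq_div_iff (ne_of_gt hlm)]
  linear_combination (h.rc n).symm

lemma sum4 (h : Hyp a b π) : Summable (fun k : ℕ => ((k:ℝ)+1)^4 * π k) := by
  apply summable_of_ratio_norm_eventually_le (f := fun k : ℕ => ((k:ℝ)+1)^4 * π k) (r := 1/2) (by norm_num)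
  filter_upwards [eventually_ge_atTop ⌈32*a⌉₊] with k hk
  have hka : 32 * a ≤ (k:ℝ) := le_trans (Nat.le_ceil _) (by exact_mod_cast hk)
  have hp := h.pos k
  have hp1 := h.pos (k+1)
  have hlm : ((k:ℝ)+1) ≤ lm b (k+1) := by
    have := lm_ge h.hb (k+1)
    push_cast at this ⊢
    linarith
  have hlmpos : 0 < lm b (k+1) := lm_pos h.hb (Nat.le_add_left 1 k)
  rw [Real.norm_eq_abs, Real.norm_eq_abs, abs_of_nonneg (by positivity),
    abs_of_nonneg (by positivity)]
  push_cast
  rw [pi_succ h k, ← mul_div_assoc, div_le_iff₀ hlmpos]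
  have h2 : ((k:ℝ)+1+1) ≤ 2*((k:ℝ)+1) := by
    have := Nat.cast_nonneg (α := ℝ) k; linarith
  have h16 : ((k:ℝ)+1+1)^4 ≤ 16*((k:ℝ)+1)^4 := by
    calc ((k:ℝ)+1+1)^4 ≤ (2*((k:ℝ)+1))^4 := pow_le_pow_left₀ (by positivity) h2 4
    _ = 16*((k:ℝ)+1)^4 := by ring
  have hlm32 : 32*a ≤ lm b (k+1) := by linarith
  nlinarith [mul_le_mul_of_nonneg_right h16 (mul_nonneg h.ha.le hp.le),
    mul_le_mul_of_nonneg_left hlm32 (show (0:ℝ) ≤ 1/32*(((k:ℝ)+1)^4* π k) by positivity)]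


variable {a b : ℝ} {π : ℕ → ℝ}

lemma dom (h : Hyp a b π) (u : ℕ → ℝ) (M : ℝ)
    (hu : ∀ k, |u k| ≤ M * (((k:ℝ)+1)^4 * π k)) : Summable u := by
  refine Summable.of_abs (Summable.of_nonneg_of_le (fun k => abs_nonneg _) hu ?_)
  exact (sum4 h).mul_left M

lemma pb1 (k : ℕ) : (k:ℝ) ≤ ((k:ℝ)+1)^4 := by
  have := Nat.cast_nonneg (α := ℝ) k; nlinarith [sq_nonneg ((k:ℝ)), sq_nonneg ((k:ℝ)+1)]

lemma pb2 (k : ℕ) : (k:ℝ)*((k:ℝ)-1) ≤ ((k:ℝ)+1)^4 := by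
  have := Nat.cast_nonneg (α := ℝ) k; nlinarith [sq_nonneg ((k:ℝ)), sq_nonneg ((k:ℝ)+1)]

lemma pb3 (k : ℕ) : (k:ℝ)*((k:ℝ)-1)*((k:ℝ)-2) ≤ ((k:ℝ)+1)^4 := by
  have := Nat.cast_nonneg (α := ℝ) k
  nlinarith [sq_nonneg ((k:ℝ)), sq_nonneg ((k:ℝ)-1), sq_nonneg ((k:ℝ)+1), sq_nonneg ((k:ℝ)*((k:ℝ)-1))]

lemma pb4 (k : ℕ) : (k:ℝ)*((k:ℝ)-1)*((k:ℝ)-2)*((k:ℝ)-3) ≤ ((k:ℝ)+1)^4 := by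
  have := Nat.cast_nonneg (α := ℝ) k
  nlinarith [sq_nonneg ((k:ℝ)), sq_nonneg ((k:ℝ)-1), sq_nonneg ((k:ℝ)-2), sq_nonneg ((k:ℝ)*((k:ℝ)-1)), fall4 k, fall2 k]

lemma s1 (h : Hyp a b π) : Summable (fun k : ℕ => (k:ℝ) * π k) := by
  refine dom h _ 1 (fun k => ?_)
  rw [abs_of_nonneg (mul_nonneg (Nat.cast_nonneg k) (h.pos k).le), one_mul]
  exact mul_le_mul_of_nonneg_right (pb1 k) (h.pos k).le

lemma s2 (h : Hyp a b π) : Summable (fun k : ℕ => (k:ℝ)*((k:ℝ)-1) * π k) := by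
  refine dom h _ 1 (fun k => ?_)
  rw [abs_of_nonneg (mul_nonneg (fall2 k) (h.pos k).le), one_mul]
  exact mul_le_mul_of_nonneg_right (pb2 k) (h.pos k).le

lemma s3 (h : Hyp a b π) : Summable (fun k : ℕ => (k:ℝ)*((k:ℝ)-1)*((k:ℝ)-2) * π k) := by
  refine dom h _ 1 (fun k => ?_)
  rw [abs_of_nonneg (mul_nonneg (fall3 k) (h.pos k).le), one_mul]
  exact mul_le_mul_of_nonneg_right (pb3 k) (h.pos k).le

lemma s4 (h : Hyp a b π) : Summable (fun k : ℕ => (k:ℝ)*((k:ℝ)-1)*((k:ℝ)-2)*((k:ℝ)-3) * π k) := by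
  refine dom h _ 1 (fun k => ?_)
  rw [abs_of_nonneg (mul_nonneg (fall4 k) (h.pos k).le), one_mul]
  exact mul_le_mul_of_nonneg_right (pb4 k) (h.pos k).le

lemma shift (F : ℕ → ℝ) (hF : Summable F) (h0 : F 0 = 0) :
    ∑' k : ℕ, F (k+1) = ∑' k : ℕ, F k := by
  rw [Summable.tsum_eq_zero_add hF, h0, zero_add]

/-- first moment -/
def m1 (π : ℕ → ℝ) : ℝ := ∑' k : ℕ, (k:ℝ) * π k
def m2 (π : ℕ → ℝ) : ℝ := ∑' k : ℕ, (k:ℝ)*((k:ℝ)-1) * π k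
def m3 (π : ℕ → ℝ) : ℝ := ∑' k : ℕ, (k:ℝ)*((k:ℝ)-1)*((k:ℝ)-2) * π k
def m4' (π : ℕ → ℝ) : ℝ := ∑' k : ℕ, (k:ℝ)*((k:ℝ)-1)*((k:ℝ)-2)*((k:ℝ)-3) * π k

lemma m1_nonneg (h : Hyp a b π) : 0 ≤ m1 π :=
  tsum_nonneg (fun k => mul_nonneg (Nat.cast_nonneg k) (h.pos k).le)
lemma m2_nonneg (h : Hyp a b π) : 0 ≤ m2 π :=
  tsum_nonneg (fun k => mul_nonneg (fall2 k) (h.pos k).le)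
lemma m3_nonneg (h : Hyp a b π) : 0 ≤ m3 π :=
  tsum_nonneg (fun k => mul_nonneg (fall3 k) (h.pos k).le)
lemma m4'_nonneg (h : Hyp a b π) : 0 ≤ m4' π :=
  tsum_nonneg (fun k => mul_nonneg (fall4 k) (h.pos k).le)

lemma sum_lm (h : Hyp a b π) : Summable (fun k : ℕ => lm b k * π k) := by
  refine ((s1 h).add (((s2 h)).mul_left b)).congr (fun k => ?_)
  unfold lm; ring

lemma momA (h : Hyp a b π) : m1 π + b * m2 π = a := by
  have e1 : a = ∑' k : ℕ, lm b (k+1) * π (k+1) := by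
    calc a = a * ∑' k : ℕ, π k := by rw [h.one]; ring
    _ = ∑' k : ℕ, a * π k := tsum_mul_left.symm
    _ = ∑' k : ℕ, lm b (k+1) * π (k+1) := tsum_congr (fun k => h.rc k)
  have e2 : (∑' k : ℕ, lm b (k+1) * π (k+1)) = ∑' k : ℕ, lm b k * π k :=
    shift _ (sum_lm h) (by simp [lm_zero])
  have e3 : (∑' k : ℕ, lm b k * π k) = m1 π + b * m2 π := by
    have e : ∀ k : ℕ, lm b k * π k = (k:ℝ) * π k + b * ((k:ℝ)*((k:ℝ)-1) * π k) := by
      intro k; unfold lm; ring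
    rw [tsum_congr e, Summable.tsum_add (s1 h) (((s2 h)).mul_left b), tsum_mul_left]
    rfl
  rw [e1, e2, e3]

lemma sum_klm (h : Hyp a b π) : Summable (fun k : ℕ => (k:ℝ) * lm b k * π k) := by
  refine (((s2 h).add (s1 h)).add (((s3 h).add ((s2 h).mul_left 2)).mul_left b)).congr (fun k => ?_)
  unfold lm; ring

lemma momB (h : Hyp a b π) : a * m1 π + a = m2 π + m1 π + b * (m3 π + 2 * m2 π) := by
  have e1 : a * m1 π + a = ∑' k : ℕ, ((k:ℝ)+1) * lm b (k+1) * π (k+1) := by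
    calc a * m1 π + a = a * m1 π + a * ∑' k : ℕ, π k := by rw [h.one]; ring
    _ = ∑' k : ℕ, a * ((k:ℝ) * π k) + ∑' k : ℕ, a * π k := by rw [tsum_mul_left, tsum_mul_left]; rfl
    _ = ∑' k : ℕ, (a * ((k:ℝ) * π k) + a * π k) :=
      (Summable.tsum_add ((s1 h).mul_left a) ((summable_pi h).mul_left a)).symm
    _ = ∑' k : ℕ, ((k:ℝ)+1) * (a * π k) := tsum_congr (fun k => by ring)
    _ = ∑' k : ℕ, ((k:ℝ)+1) * (lm b (k+1) * π (k+1)) := tsum_congr (fun k => by rw [h.rc k])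
    _ = ∑' k : ℕ, ((k:ℝ)+1) * lm b (k+1) * π (k+1) := tsum_congr (fun k => by ring)
  have e2 : (∑' k : ℕ, ((k:ℝ)+1) * lm b (k+1) * π (k+1)) = ∑' k : ℕ, (k:ℝ) * lm b k * π k := by
    have := shift (fun k : ℕ => (k:ℝ) * lm b k * π k) (sum_klm h) (by simp [lm_zero])
    rw [← this]
    exact tsum_congr (fun k => by push_cast; ring)
  have e3 : (∑' k : ℕ, (k:ℝ) * lm b k * π k) = m2 π + m1 π + b * (m3 π + 2 * m2 π) := by
    have e : ∀ k : ℕ, (k:ℝ) * lm b k * π k =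
        ((k:ℝ)*((k:ℝ)-1) * π k + (k:ℝ) * π k)
        + b * ((k:ℝ)*((k:ℝ)-1)*((k:ℝ)-2) * π k + 2 * ((k:ℝ)*((k:ℝ)-1) * π k)) := by
      intro k; unfold lm; ring
    rw [tsum_congr e, Summable.tsum_add ((s2 h).add (s1 h))
      (((s3 h).add ((s2 h).mul_left 2)).mul_left b),
      Summable.tsum_add (s2 h) (s1 h), tsum_mul_left,
      Summable.tsum_add (s3 h) ((s2 h).mul_left 2), tsum_mul_left]
    rfl
  rw [e1, e2, e3]

lemma sum_flm (h : Hyp a b π) : Summable (fun k : ℕ => ((k:ℝ)-1)*((k:ℝ)-2) * lm b k * π k) := by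
  refine ((s3 h).add (((s4 h).add ((s3 h).mul_left 2)).mul_left b)).congr (fun k => ?_)
  unfold lm; ring

lemma momC (h : Hyp a b π) : a * m2 π = m3 π + b * (m4' π + 2 * m3 π) := by
  have e1 : a * m2 π = ∑' k : ℕ, ((k:ℝ))*((k:ℝ)-1) * lm b (k+1) * π (k+1) := by
    calc a * m2 π = ∑' k : ℕ, a * ((k:ℝ)*((k:ℝ)-1) * π k) := tsum_mul_left.symm
    _ = ∑' k : ℕ, (k:ℝ)*((k:ℝ)-1) * (a * π k) := tsum_congr (fun k => by ring)
    _ = ∑' k : ℕ, (k:ℝ)*((k:ℝ)-1) * (lm b (k+1) * π (k+1)) := tsum_congr (fun k => by rw [h.rc k])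
    _ = ∑' k : ℕ, (k:ℝ)*((k:ℝ)-1) * lm b (k+1) * π (k+1) := tsum_congr (fun k => by ring)
  have e2 : (∑' k : ℕ, (k:ℝ)*((k:ℝ)-1) * lm b (k+1) * π (k+1))
      = ∑' k : ℕ, ((k:ℝ)-1)*((k:ℝ)-2) * lm b k * π k := by
    have := shift (fun k : ℕ => ((k:ℝ)-1)*((k:ℝ)-2) * lm b k * π k) (sum_flm h)
      (by simp [lm_zero])
    rw [← this]
    exact tsum_congr (fun k => by push_cast; ring)
  have e3 : (∑' k : ℕ, ((k:ℝ)-1)*((k:ℝ)-2) * lm b k * π k) = m3 π + b * (m4' π + 2 * m3 π) := by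
    have e : ∀ k : ℕ, ((k:ℝ)-1)*((k:ℝ)-2) * lm b k * π k =
        ((k:ℝ)*((k:ℝ)-1)*((k:ℝ)-2) * π k)
        + b * ((k:ℝ)*((k:ℝ)-1)*((k:ℝ)-2)*((k:ℝ)-3) * π k
               + 2 * ((k:ℝ)*((k:ℝ)-1)*((k:ℝ)-2) * π k)) := by
      intro k; unfold lm; ring
    rw [tsum_congr e, Summable.tsum_add (s3 h) (((s4 h).add ((s3 h).mul_left 2)).mul_left b),
      tsum_mul_left, Summable.tsum_add (s4 h) ((s3 h).mul_left 2), tsum_mul_left]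
    rfl
  rw [e1, e2, e3]

lemma variance (h : Hyp a b π) : m1 π ^ 2 ≤ m2 π + m1 π := by
  have hv : 0 ≤ ∑' k : ℕ, ((k:ℝ) - m1 π)^2 * π k :=
    tsum_nonneg (fun k => mul_nonneg (sq_nonneg _) (h.pos k).le)
  have e : ∀ k : ℕ, ((k:ℝ) - m1 π)^2 * π k =
      ((k:ℝ)*((k:ℝ)-1) * π k + (k:ℝ) * π k + (m1 π)^2 * π k) - (2 * m1 π) * ((k:ℝ) * π k) := by
    intro k; ring
  rw [tsum_congr e, Summable.tsum_sub (((s2 h).add (s1 h)).add ((summable_pi h).mul_left ((m1 π)^2)))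
    ((s1 h).mul_left (2 * m1 π)),
    Summable.tsum_add ((s2 h).add (s1 h)) ((summable_pi h).mul_left ((m1 π)^2)),
    Summable.tsum_add (s2 h) (s1 h), tsum_mul_left, tsum_mul_left, h.one] at hv
  have : 0 ≤ m2 π + m1 π + (m1 π)^2 * 1 - 2 * m1 π * m1 π := hv
  nlinarith [this]


lemma muTheta (h : Hyp a b π) {θ : ℝ} (hθpos : 0 < θ)
    (hθ2 : θ^2 + (b-1)*θ = a*b) : θ * m1 π ≤ a := by
  have hA := momA h
  have hvar := variance h
  have hm1 := m1_nonneg h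
  have hb := h.hb
  have star : b * m1 π^2 + m1 π - b * m1 π ≤ a := by
    nlinarith [mul_le_mul_of_nonneg_left hvar hb.le]
  by_cases hcase : θ ≤ b * m1 π + 1 - b
  · nlinarith [mul_le_mul_of_nonneg_right hcase hm1]
  · push_neg at hcase
    have h2 : b * θ * m1 π < a * b := by
      nlinarith [mul_lt_mul_of_pos_right hcase hθpos]
    nlinarith [h2]

lemma muD (h : Hyp a b π) :
    m1 π * ((a+2*b+2) + 2*a*b) ≤ a * (a+2*b+2) := by
  have hA := momA h
  have hB := momB h
  have hC := momC h
  have hm3 := m3_nonneg h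
  have hm4 := m4'_nonneg h
  have hb := h.hb
  have h2am1 : 2*a*m1 π ≤ (a+2*b+2) * m2 π := by nlinarith [hA, hB, hC]
  have hAS : (m1 π + b * m2 π) * (a+2*b+2) = a * (a+2*b+2) := by rw [hA]
  nlinarith [hAS, mul_le_mul_of_nonneg_left h2am1 hb.le]


def FF (π : ℕ → ℝ) (n : ℕ) : ℝ := ∑ k ∈ Finset.range (n+1), π k
def AA (π : ℕ → ℝ) (n : ℕ) : ℝ := ∑ k ∈ Finset.range (n+1), (k:ℝ) * π k
def Fb (π : ℕ → ℝ) (n : ℕ) : ℝ := ∑' i : ℕ, π (i + (n+1))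
def BB (π : ℕ → ℝ) (n : ℕ) : ℝ := ∑' i : ℕ, ((i + (n+1) : ℕ):ℝ) * π (i + (n+1))
def TT (π : ℕ → ℝ) (n : ℕ) : ℝ := FF π n * BB π n - AA π n * Fb π n
def GG (a : ℝ) (π : ℕ → ℝ) (n : ℕ) : ℝ := TT π n / (a * π n)

lemma sum_tail_pi (h : Hyp a b π) (n : ℕ) : Summable (fun i : ℕ => π (i + (n+1))) :=
  (summable_nat_add_iff (n+1)).2 (summable_pi h)

lemma sum_tail_m1 (h : Hyp a b π) (n : ℕ) :
    Summable (fun i : ℕ => ((i + (n+1) : ℕ):ℝ) * π (i + (n+1))) :=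
  (summable_nat_add_iff (f := fun k : ℕ => (k:ℝ) * π k) (n+1)).2 (s1 h)

lemma FF_Fb (h : Hyp a b π) (n : ℕ) : FF π n + Fb π n = 1 := by
  have := Summable.sum_add_tsum_nat_add (f := π) (n+1) (summable_pi h)
  rw [h.one] at this
  exact this

lemma AA_BB (h : Hyp a b π) (n : ℕ) : AA π n + BB π n = m1 π := by
  unfold AA BB m1
  exact_mod_cast Summable.sum_add_tsum_nat_add (f := fun k : ℕ => (k:ℝ) * π k) (n+1) (s1 h)

lemma Fb_nonneg (h : Hyp a b π) (n : ℕ) : 0 ≤ Fb π n :=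
  tsum_nonneg (fun i => (h.pos _).le)

lemma BB_nonneg (h : Hyp a b π) (n : ℕ) : 0 ≤ BB π n :=
  tsum_nonneg (fun i => mul_nonneg (Nat.cast_nonneg _) (h.pos _).le)

lemma AA_nonneg (h : Hyp a b π) (n : ℕ) : 0 ≤ AA π n :=
  Finset.sum_nonneg (fun k _ => mul_nonneg (Nat.cast_nonneg _) (h.pos _).le)

lemma FF_le_one (h : Hyp a b π) (n : ℕ) : FF π n ≤ 1 := by
  have h1 := FF_Fb h n; have h2 := Fb_nonneg h n; linarith

lemma TT_zero (h : Hyp a b π) : TT π 0 = π 0 * m1 π := by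
  have hab := AA_BB h 0
  unfold AA at hab
  simp only [Finset.sum_range_one, Nat.cast_zero, zero_mul, zero_add] at hab
  unfold TT FF AA
  simp only [zero_add, Finset.sum_range_one, Nat.cast_zero, zero_mul]
  rw [hab]
  ring

lemma TT_succ (h : Hyp a b π) (n : ℕ) :
    TT π (n+1) = TT π n + (m1 π - ((n+1:ℕ):ℝ)) * π (n+1) := by
  have hFF : FF π (n+1) = FF π n + π (n+1) := Finset.sum_range_succ _ _
  have hAA : AA π (n+1) = AA π n + ((n+1:ℕ):ℝ) * π (n+1) := Finset.sum_range_succ _ _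
  have hFb : Fb π (n+1) = Fb π n - π (n+1) := by
    have h1 := FF_Fb h n; have h2 := FF_Fb h (n+1); rw [hFF] at h2; linarith
  have hBB : BB π (n+1) = BB π n - ((n+1:ℕ):ℝ) * π (n+1) := by
    have h1 := AA_BB h n; have h2 := AA_BB h (n+1); rw [hAA] at h2; linarith
  have h1 := AA_BB h n
  have h2 := FF_Fb h n
  unfold TT
  rw [hFF, hAA, hFb, hBB]
  linear_combination (π (n+1)) * h1 - ((n+1:ℕ):ℝ) * (π (n+1)) * h2

lemma GG_zero (h : Hyp a b π) : GG a π 0 = m1 π / a := by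
  unfold GG
  rw [TT_zero h, mul_comm a (π 0), mul_div_mul_left _ _ (ne_of_gt (h.pos 0))]

lemma GG_rec (h : Hyp a b π) (n : ℕ) :
    a * GG a π (n+1) = lm b (n+1) * GG a π n + m1 π - ((n+1:ℕ):ℝ) := by
  have hp := h.pos n
  have hp1 := h.pos (n+1)
  have ha := h.ha
  have hlm : 0 < lm b (n+1) := lm_pos h.hb (Nat.le_add_left 1 n)
  have e1 : a * GG a π (n+1) = TT π (n+1) / π (n+1) := by
    unfold GG; field_simp
  have e2 : lm b (n+1) * GG a π n = TT π n / π (n+1) := by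
    unfold GG
    rw [show a * π n = lm b (n+1) * π (n+1) from h.rc n, mul_div_assoc',
      mul_div_mul_left _ _ (ne_of_gt hlm)]
  rw [e1, e2, TT_succ h n]
  field_simp
  ring

lemma GG_decay (h : Hyp a b π) (n : ℕ) (hn1 : 1 ≤ n) (hna : 2*a ≤ (n:ℝ)+1) :
    GG a π n ≤ 4/(b*(n:ℝ)) := by
  have ha := h.ha
  have hb := h.hb
  have hp := h.pos n
  have hncast : (1:ℝ) ≤ (n:ℝ) := by exact_mod_cast hn1
  set q : ℝ := a / lm b (n+1) with hq
  have hlmpos : 0 < lm b (n+1) := lm_pos h.hb (Nat.le_add_left 1 n)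
  have hq0 : 0 < q := div_pos ha hlmpos
  have hlm2a : 2*a ≤ lm b (n+1) := by
    have := lm_ge h.hb (n+1)
    push_cast at this
    linarith
  have hqhalf : q ≤ 1/2 := by
    rw [hq, div_le_iff₀ hlmpos]; linarith
  have hq1 : q < 1 := by linarith
  have hterm : ∀ i : ℕ, π (i + (n+1)) ≤ π n * q ^ (i+1) := by
    intro i
    induction i with
    | zero =>
      simp only [zero_add, pow_one]
      rw [pi_succ h n, hq]
      exact le_of_eq (by ring)
    | succ i ih =>
      have hidx : i + 1 + (n+1) = (i + (n+1)) + 1 := by omega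
      have hmono : lm b (n+1) ≤ lm b (i + (n+1) + 1) := lm_mono h.hb (by omega)
      have hlp : 0 < lm b (i + (n+1) + 1) := lm_pos h.hb (by omega)
      have hdd : a / lm b (i + (n+1) + 1) ≤ q := by
        rw [hq]; exact div_le_div_of_nonneg_left ha.le hlmpos hmono
      calc π (i + 1 + (n+1)) = a * π (i + (n+1)) / lm b (i + (n+1) + 1) := by
            rw [hidx, pi_succ h (i + (n+1))]
      _ = (a / lm b (i + (n+1) + 1)) * π (i + (n+1)) := by ring
      _ ≤ q * π (i + (n+1)) := mul_le_mul_of_nonneg_right hdd (h.pos _).le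
      _ ≤ q * (π n * q ^ (i+1)) := mul_le_mul_of_nonneg_left ih hq0.le
      _ = π n * q ^ (i+1+1) := by ring
  have hqnorm : ‖q‖ < 1 := by rw [Real.norm_eq_abs, abs_of_pos hq0]; exact hq1
  have hs_geo : Summable (fun i : ℕ => q ^ i) := summable_geometric_of_lt_one hq0.le hq1
  have hs_igeo : Summable (fun i : ℕ => (i:ℝ) * q ^ i) :=
    (hasSum_coe_mul_geometric_of_norm_lt_one hqnorm).summable
  have hBB : BB π n ≤ (π n * q * ((n:ℝ)+1)) * (1-q)⁻¹ + (π n * q) * (q/(1-q)^2) := by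
    have hle : ∀ i : ℕ, ((i + (n+1) : ℕ):ℝ) * π (i + (n+1)) ≤
        (π n * q * ((n:ℝ)+1)) * q^i + (π n * q) * ((i:ℝ) * q^i) := by
      intro i
      have h1 : ((i + (n+1) : ℕ):ℝ) = (i:ℝ) + ((n:ℝ)+1) := by push_cast; ring
      have h2 : (0:ℝ) ≤ (i:ℝ) + ((n:ℝ)+1) := by positivity
      calc ((i + (n+1) : ℕ):ℝ) * π (i + (n+1)) ≤ ((i + (n+1) : ℕ):ℝ) * (π n * q ^ (i+1)) := by
            rw [h1]; exact mul_le_mul_of_nonneg_left (hterm i) h2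
      _ = (π n * q * ((n:ℝ)+1)) * q^i + (π n * q) * ((i:ℝ) * q^i) := by rw [h1]; ring
    calc BB π n ≤ ∑' i : ℕ, ((π n * q * ((n:ℝ)+1)) * q^i + (π n * q) * ((i:ℝ) * q^i)) :=
          Summable.tsum_le_tsum hle (sum_tail_m1 h n)
            ((hs_geo.mul_left _).add (hs_igeo.mul_left _))
    _ = (π n * q * ((n:ℝ)+1)) * (1-q)⁻¹ + (π n * q) * (q/(1-q)^2) := by
        rw [Summable.tsum_add (hs_geo.mul_left _) (hs_igeo.mul_left _), tsum_mul_left, tsum_mul_left,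
          tsum_geometric_of_lt_one hq0.le hq1, tsum_coe_mul_geometric_of_norm_lt_one hqnorm]
  have hinv : (1-q)⁻¹ ≤ 2 := by
    rw [inv_le_comm₀ (by linarith) (by norm_num)]; linarith
  have hqq : q/(1-q)^2 ≤ 2 := by
    rw [div_le_iff₀ (by nlinarith : (0:ℝ) < (1-q)^2)]; nlinarith
  have hBB2 : BB π n ≤ π n * q * (2*((n:ℝ)+2)) := by
    have t1 : (π n * q * ((n:ℝ)+1)) * (1-q)⁻¹ ≤ (π n * q * ((n:ℝ)+1)) * 2 :=
      mul_le_mul_of_nonneg_left hinv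
        (mul_nonneg (mul_nonneg hp.le hq0.le) (by positivity))
    have t2 : (π n * q) * (q/(1-q)^2) ≤ (π n * q) * 2 :=
      mul_le_mul_of_nonneg_left hqq (mul_nonneg hp.le hq0.le)
    calc BB π n ≤ _ := hBB
    _ ≤ (π n * q * ((n:ℝ)+1)) * 2 + (π n * q) * 2 := add_le_add t1 t2
    _ = π n * q * (2*((n:ℝ)+2)) := by ring
  have hTTle : TT π n ≤ π n * q * (2*((n:ℝ)+2)) := by
    have t1 : TT π n ≤ BB π n := by
      unfold TT
      nlinarith [FF_le_one h n, BB_nonneg h n, mul_nonneg (AA_nonneg h n) (Fb_nonneg h n),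
        FF_Fb h n, Fb_nonneg h n]
    linarith
  unfold GG
  rw [div_le_iff₀ (by positivity)]
  calc TT π n ≤ π n * q * (2*((n:ℝ)+2)) := hTTle
  _ ≤ 4 / (b*(n:ℝ)) * (a * π n) := by
      rw [hq]
      have key : π n * (a / lm b (n+1)) * (2*((n:ℝ)+2))
          = (π n * a * (2*((n:ℝ)+2))) / lm b (n+1) := by ring
      have key2 : 4 / (b*(n:ℝ)) * (a * π n) = (4 * (a * π n)) / (b*(n:ℝ)) := by ring
      rw [key, key2, div_le_div_iff₀ hlmpos (by positivity : (0:ℝ) < b*(n:ℝ))]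
      have hlmn : lm b (n+1) = ((n:ℝ)+1) + b*((n:ℝ)+1)*(n:ℝ) := by
        unfold lm; push_cast; ring
      have hfact : 2*((n:ℝ)+2)*(b*(n:ℝ)) ≤ 4*((n:ℝ)+1) + 4*(b*((n:ℝ)+1)*(n:ℝ)) := by
        nlinarith [mul_nonneg hb.le (sq_nonneg (n:ℝ)), hncast]
      have := mul_le_mul_of_nonneg_left hfact (mul_nonneg ha.le hp.le)
      rw [hlmn]
      nlinarith [this]


lemma GG_step (h : Hyp a b π) {θ : ℝ} (hθpos : 0 < θ) (hθ2 : θ^2 + (b-1)*θ = a*b)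
    (i : ℕ)
    (h1 : min ((a+2*b+2)/((a+2*b+2)+2*a*b)) (1/θ) < GG a π (i+1))
    (h2 : GG a π i ≤ GG a π (i+1)) :
    GG a π (i+1) < GG a π (i+2) := by
  have ha := h.ha
  have hb := h.hb
  have hS : (0:ℝ) < a+2*b+2 := by linarith
  have hS2 : (0:ℝ) < (a+2*b+2)+2*a*b := by positivity
  have R1 := GG_rec h i
  have R2 := GG_rec h (i+1)
  push_cast at R1 R2
  have hi0 : (0:ℝ) ≤ (i:ℝ) := Nat.cast_nonneg i
  have hlm1 : (0:ℝ) ≤ lm b (i+1) := by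
    have h' := lm_ge h.hb (i+1)
    push_cast at h'
    linarith
  have hgap : lm b (i+2) - lm b (i+1) = 1 + 2*b*((i:ℝ)+1) := by
    unfold lm; push_cast; ring
  have h2lm : lm b (i+1) * GG a π i ≤ lm b (i+1) * GG a π (i+1) :=
    mul_le_mul_of_nonneg_left h2 hlm1
  by_cases hcase : θ ≤ 1 + 2*b*((i:ℝ)+1)
  · -- Case I
    have hX : (0:ℝ) < 1 + 2*b*((i:ℝ)+1) := by positivity
    have hcge : 1/(1 + 2*b*((i:ℝ)+1)) ≤ min ((a+2*b+2)/((a+2*b+2)+2*a*b)) (1/θ) := by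
      apply le_min
      · rw [div_le_div_iff₀ hX hS2]
        have hi1 : (1:ℝ) ≤ (i:ℝ)+1 := by linarith
        nlinarith [mul_le_mul_of_nonneg_left hi1 (mul_pos hb hS).le]
      · exact one_div_le_one_div_of_le hθpos hcase
    have hG1 : 1 < (1 + 2*b*((i:ℝ)+1)) * GG a π (i+1) := by
      have := (div_lt_iff₀ hX).1 (lt_of_le_of_lt hcge h1)
      linarith
    have hgapG : (lm b (i+2) - lm b (i+1)) * GG a π (i+1)
        = (1 + 2*b*((i:ℝ)+1)) * GG a π (i+1) := by rw [hgap]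
    by_contra hle
    push_neg at hle
    have hmul := mul_le_mul_of_nonneg_left hle ha.le
    nlinarith [R1, R2, hgapG, h2lm, hG1, hmul]
  · -- Case II : impossible
    push_neg at hcase
    exfalso
    have hbi : 1 + b*(i:ℝ) < θ := by nlinarith
    have hlmi1 : lm b (i+1) = ((i:ℝ)+1)*(1+b*(i:ℝ)) := by unfold lm; push_cast; ring
    have halm : lm b (i+1) < a := by
      by_contra hle
      push_neg at hle
      have h1' : b * a ≤ b * (((i:ℝ)+1)*(1+b*(i:ℝ))) := by
        rw [hlmi1] at hle
        exact mul_le_mul_of_nonneg_left hle hb.le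
      have h2' : b*(((i:ℝ)+1)*(1+b*(i:ℝ))) < b*(((i:ℝ)+1)*θ) := by
        have hh := mul_lt_mul_of_pos_left hbi (show (0:ℝ) < (i:ℝ)+1 by linarith)
        exact mul_lt_mul_of_pos_left hh hb
      have h3' := mul_lt_mul_of_pos_right hbi hθpos
      nlinarith [hθ2, h1', h2', h3']
    have hGle : (a - lm b (i+1)) * GG a π (i+1) ≤ m1 π - ((i:ℝ)+1) := by
      nlinarith [R1, h2lm]
    have hμθ := muTheta h hθpos hθ2
    have hlmθ : lm b (i+1) ≤ ((i:ℝ)+1)*θ := by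
      rw [hlmi1]
      exact mul_le_mul_of_nonneg_left hbi.le (by linarith)
    have hpos : 0 < a - lm b (i+1) := by linarith
    have e1 : θ * ((a - lm b (i+1)) * GG a π (i+1)) ≤ θ * (m1 π - ((i:ℝ)+1)) :=
      mul_le_mul_of_nonneg_left hGle hθpos.le
    have e2 : θ * (m1 π - ((i:ℝ)+1)) ≤ a - lm b (i+1) := by
      have t1 : θ * (m1 π - ((i:ℝ)+1)) = θ * m1 π - ((i:ℝ)+1)*θ := by ring
      rw [t1]
      linarith [hμθ, hlmθ]
    have e3 : (a - lm b (i+1)) * (θ * GG a π (i+1)) ≤ (a - lm b (i+1)) * 1 := by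
      have t2 : (a - lm b (i+1)) * (θ * GG a π (i+1))
          = θ * ((a - lm b (i+1)) * GG a π (i+1)) := by ring
      rw [t2, mul_one]
      linarith [e1, e2]
    have hkey : θ * GG a π (i+1) ≤ 1 := le_of_mul_le_mul_left e3 hpos
    have hGG1θ : GG a π (i+1) ≤ 1/θ := by
      rw [le_div_iff₀ hθpos]; linarith
    have hθD : 1/θ ≤ (a+2*b+2)/((a+2*b+2)+2*a*b) := by
      clear R1 R2 h2lm hgap hGle e1 e2 e3 hkey hGG1θ hlmθ hpos halm hlmi1 h1 h2 hbi hlm1 hμθ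
      have hθ2b : 1 + 2*b ≤ θ := by nlinarith [mul_nonneg hb.le hi0]
      have h1' : (a+2*b+2)*(1+2*b) ≤ (a+2*b+2)*θ := mul_le_mul_of_nonneg_left hθ2b hS.le
      rw [div_le_div_iff₀ hθpos hS2]
      nlinarith [h1', mul_pos hb hb]
    have hcontra : GG a π (i+1) ≤ min ((a+2*b+2)/((a+2*b+2)+2*a*b)) (1/θ) :=
      le_min (le_trans hGG1θ hθD) hGG1θ
    exact absurd h1 (not_lt.2 hcontra)

lemma GG_main (h : Hyp a b π) {θ : ℝ} (hθpos : 0 < θ) (hθ2 : θ^2 + (b-1)*θ = a*b) :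
    ∀ j : ℕ, GG a π j ≤ min ((a+2*b+2)/((a+2*b+2)+2*a*b)) (1/θ) := by
  classical
  have ha := h.ha
  have hb := h.hb
  have hS : (0:ℝ) < a+2*b+2 := by linarith
  have hS2 : (0:ℝ) < (a+2*b+2)+2*a*b := by positivity
  set c : ℝ := min ((a+2*b+2)/((a+2*b+2)+2*a*b)) (1/θ) with hcdef
  have hcpos : 0 < c := lt_min (div_pos hS hS2) (by positivity)
  have hμD := muD h
  have hμθ := muTheta h hθpos hθ2
  have hm1 := m1_nonneg h
  have hμc : m1 π ≤ a * c := by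
    have h1 : m1 π ≤ a * ((a+2*b+2)/((a+2*b+2)+2*a*b)) := by
      rw [mul_div_assoc', le_div_iff₀ hS2]
      nlinarith [hμD]
    have h2 : m1 π ≤ a * (1/θ) := by
      rw [mul_one_div, le_div_iff₀ hθpos]
      nlinarith [hμθ]
    rw [hcdef]
    rcases le_total ((a+2*b+2)/((a+2*b+2)+2*a*b)) (1/θ) with hc1 | hc1
    · rwa [min_eq_left hc1]
    · rwa [min_eq_right hc1]
  intro j
  by_contra hgt
  push_neg at hgt
  have hex : ∃ j, c < GG a π j := ⟨j, hgt⟩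
  have hm : c < GG a π (Nat.find hex) := Nat.find_spec hex
  have hmin : ∀ k, k < Nat.find hex → GG a π k ≤ c := fun k hk => not_lt.1 (Nat.find_min hex hk)
  rcases Nat.eq_zero_or_pos (Nat.find hex) with hm0 | hm0
  · rw [hm0, GG_zero h] at hm
    have : m1 π / a ≤ c := by rw [div_le_iff₀ ha]; nlinarith [hμc]
    linarith
  · obtain ⟨i0, hi0⟩ : ∃ i0, Nat.find hex = i0 + 1 :=
      ⟨Nat.find hex - 1, (Nat.succ_pred_eq_of_pos hm0).symm⟩
    have hprev : GG a π i0 ≤ c := hmin i0 (by omega)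
    have hm' : c < GG a π (i0+1) := by rwa [hi0] at hm
    have hind : ∀ k : ℕ, GG a π (i0+k) ≤ GG a π (i0+k+1) ∧ c < GG a π (i0+k+1) := by
      intro k
      induction k with
      | zero => exact ⟨le_trans hprev (le_of_lt hm'), hm'⟩
      | succ k ih =>
        have hstep := GG_step h hθpos hθ2 (i0+k) (hcdef ▸ ih.2) ih.1
        exact ⟨hstep.le, lt_trans ih.2 hstep⟩
    obtain ⟨N, hN⟩ := exists_nat_gt (max (2*a) (max (4/(b*c)) ((i0:ℝ)+1)))
    have hNa : 2*a ≤ (N:ℝ)+1 := by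
      have h' := le_max_left (2*a) (max (4/(b*c)) ((i0:ℝ)+1))
      linarith [hN]
    have hNc : 4/(b*c) < (N:ℝ) := lt_of_le_of_lt (le_trans (le_max_left _ _) (le_max_right _ _)) hN
    have hNi0 : (i0:ℝ)+1 < (N:ℝ) := lt_of_le_of_lt (le_trans (le_max_right _ _) (le_max_right _ _)) hN
    have hN1 : 1 ≤ N := by
      by_contra hcon
      push_neg at hcon
      interval_cases N
      have hcast := Nat.cast_nonneg (α := ℝ) i0
      push_cast at hNi0
      linarith
    have hdecay := GG_decay h N hN1 hNa
    obtain ⟨k, hk⟩ : ∃ k, N = i0 + k + 1 := by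
      have h' : ((i0+1:ℕ):ℝ) < (N:ℝ) := by push_cast; linarith
      have h'' : i0 + 1 ≤ N := by exact_mod_cast h'.le
      exact ⟨N - i0 - 1, by omega⟩
    have hgtN : c < GG a π N := by rw [hk]; exact (hind k).2
    have hfin : 4/(b*(N:ℝ)) ≤ c := by
      have hNpos : (0:ℝ) < (N:ℝ) := by
        have h' : (1:ℝ) ≤ (N:ℝ) := by exact_mod_cast hN1
        linarith
      rw [div_le_iff₀ (by positivity)]
      rw [div_lt_iff₀ (by positivity)] at hNc
      nlinarith [hNc]
    linarith

lemma g_le_GG (h : Hyp a b π) (f : ℕ → ℝ) (pf : ℝ)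
    (hpf : pf = ∑' k : ℕ, f k * π k)
    (hf : ∀ x y : ℕ, |f x - f y| ≤ |(x : ℝ) - (y : ℝ)|)
    (hfs : Summable fun n => |f n| * π n)
    (g : ℕ → ℝ)
    (hg : ∀ n : ℕ, a * g (n + 1) - lm b n * g n = f n - pf) :
    ∀ n : ℕ, |g (n+1)| ≤ GG a π n := by
  have ha := h.ha
  have hfπ : Summable (fun k : ℕ => f k * π k) := by
    apply Summable.of_abs
    refine hfs.congr (fun k => ?_)
    rw [abs_mul, abs_of_pos (h.pos k)]
  have hsub : ∀ k : ℕ, Summable (fun j : ℕ => (f k - f j) * π j) := fun k =>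
    (((summable_pi h).mul_left (f k)).sub hfπ).congr (fun j => by ring)
  have hcenter : ∀ k : ℕ, f k - pf = ∑' j : ℕ, (f k - f j) * π j := by
    intro k
    have e1 : ∑' j : ℕ, (f k - f j) * π j = ∑' j : ℕ, (f k * π j - f j * π j) :=
      tsum_congr (fun j => by ring)
    rw [e1, Summable.tsum_sub ((summable_pi h).mul_left (f k)) hfπ, tsum_mul_left, h.one,
      mul_one, hpf]
  have hgS : ∀ n : ℕ, g (n+1) = (∑ k ∈ Finset.range (n+1), (f k - pf) * π k) / (a * π n) := by
    intro n
    induction n with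
    | zero =>
      have e := hg 0
      rw [show lm b 0 = 0 from lm_zero, zero_mul, sub_zero] at e
      simp only [zero_add, Finset.sum_range_one]
      rw [eq_div_iff (ne_of_gt (mul_pos h.ha (h.pos 0)))]
      linear_combination (π 0) * e
    | succ n ih =>
      have e := hg (n+1)
      have hrc := h.rc n
      have ih2 : g (n+1) * (a * π n) = ∑ k ∈ Finset.range (n+1), (f k - pf) * π k :=
        ((div_eq_iff (ne_of_gt (mul_pos h.ha (h.pos n)))).1 ih.symm).symm
      rw [eq_div_iff (ne_of_gt (mul_pos h.ha (h.pos (n+1)))), Finset.sum_range_succ]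
      linear_combination (π (n+1)) * e + ih2 - g (n+1) * hrc
  intro n
  -- tail bound termwise
  have htail : ∀ k : ℕ, k ≤ n →
      |∑' i : ℕ, (f k - f (i + (n+1))) * π (i + (n+1))| ≤ BB π n - (k:ℝ) * Fb π n := by
    intro k hk
    have hs2 : Summable (fun i : ℕ => (((i + (n+1) : ℕ):ℝ) - (k:ℝ)) * π (i + (n+1))) :=
      ((sum_tail_m1 h n).sub ((sum_tail_pi h n).mul_left (k:ℝ))).congr (fun i => by ring)
    have hptw : ∀ i : ℕ, |(f k - f (i + (n+1))) * π (i + (n+1))|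
        ≤ (((i + (n+1) : ℕ):ℝ) - (k:ℝ)) * π (i + (n+1)) := by
      intro i
      rw [abs_mul, abs_of_pos (h.pos _)]
      apply mul_le_mul_of_nonneg_right _ (h.pos _).le
      calc |f k - f (i + (n+1))| ≤ |(k:ℝ) - ((i + (n+1) : ℕ):ℝ)| := hf k (i + (n+1))
      _ = ((i + (n+1) : ℕ):ℝ) - (k:ℝ) := by
          rw [abs_sub_comm, abs_of_nonneg]
          have : (k:ℝ) ≤ ((i + (n+1) : ℕ):ℝ) := by
            have : k ≤ i + (n+1) := by omega
            exact_mod_cast this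
          linarith
    have habs : Summable (fun i : ℕ => |(f k - f (i + (n+1))) * π (i + (n+1))|) :=
      Summable.of_nonneg_of_le (fun i => abs_nonneg _) hptw hs2
    have h1 : |∑' i : ℕ, (f k - f (i + (n+1))) * π (i + (n+1))|
        ≤ ∑' i : ℕ, |(f k - f (i + (n+1))) * π (i + (n+1))| := by
      have := norm_tsum_le_tsum_norm (f := fun i : ℕ => (f k - f (i + (n+1))) * π (i + (n+1)))
        (by simpa only [Real.norm_eq_abs] using habs)
      simpa only [Real.norm_eq_abs] using this
    have h2 : (∑' i : ℕ, |(f k - f (i + (n+1))) * π (i + (n+1))|)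
        ≤ ∑' i : ℕ, (((i + (n+1) : ℕ):ℝ) - (k:ℝ)) * π (i + (n+1)) :=
      Summable.tsum_le_tsum hptw habs hs2
    have h3 : (∑' i : ℕ, (((i + (n+1) : ℕ):ℝ) - (k:ℝ)) * π (i + (n+1)))
        = BB π n - (k:ℝ) * Fb π n := by
      have e1 : ∀ i : ℕ, (((i + (n+1) : ℕ):ℝ) - (k:ℝ)) * π (i + (n+1))
          = ((i + (n+1) : ℕ):ℝ) * π (i + (n+1)) - (k:ℝ) * π (i + (n+1)) := fun i => by ring
      rw [tsum_congr e1, Summable.tsum_sub (sum_tail_m1 h n) ((sum_tail_pi h n).mul_left (k:ℝ)),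
        tsum_mul_left]
      rfl
    linarith
  -- split SS
  have hsplit : ∀ k : ℕ, f k - pf = (∑ j ∈ Finset.range (n+1), (f k - f j) * π j)
      + ∑' i : ℕ, (f k - f (i + (n+1))) * π (i + (n+1)) := by
    intro k
    rw [hcenter k, ← Summable.sum_add_tsum_nat_add (n+1) (hsub k)]
  have hzero : (∑ k ∈ Finset.range (n+1),
      (∑ j ∈ Finset.range (n+1), (f k - f j) * π j) * π k) = 0 := by
    have e1 : ∀ k : ℕ, (∑ j ∈ Finset.range (n+1), (f k - f j) * π j) * π k
        = ∑ j ∈ Finset.range (n+1), (f k * π j * π k - f j * π j * π k) := by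
      intro k
      rw [Finset.sum_mul]
      exact Finset.sum_congr rfl (fun j _ => by ring)
    rw [Finset.sum_congr rfl (fun k _ => e1 k)]
    have e2 : (∑ k ∈ Finset.range (n+1), ∑ j ∈ Finset.range (n+1),
        (f k * π j * π k - f j * π j * π k))
        = (∑ k ∈ Finset.range (n+1), ∑ j ∈ Finset.range (n+1), f k * π j * π k)
        - ∑ k ∈ Finset.range (n+1), ∑ j ∈ Finset.range (n+1), f j * π j * π k := by
      rw [← Finset.sum_sub_distrib]
      exact Finset.sum_congr rfl (fun k _ => by rw [Finset.sum_sub_distrib])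
    rw [e2, Finset.sum_comm (s := Finset.range (n+1)) (t := Finset.range (n+1))
      (f := fun k j => f j * π j * π k)]
    rw [sub_eq_zero]
    exact Finset.sum_congr rfl (fun x _ => Finset.sum_congr rfl (fun y _ => by ring))
  have hSSeq : (∑ k ∈ Finset.range (n+1), (f k - pf) * π k)
      = ∑ k ∈ Finset.range (n+1),
          (∑' i : ℕ, (f k - f (i + (n+1))) * π (i + (n+1))) * π k := by
    have e1 : ∀ k : ℕ, (f k - pf) * π k
        = (∑ j ∈ Finset.range (n+1), (f k - f j) * π j) * π k
          + (∑' i : ℕ, (f k - f (i + (n+1))) * π (i + (n+1))) * π k := by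
      intro k
      rw [hsplit k]
      ring
    rw [Finset.sum_congr rfl (fun k _ => e1 k), Finset.sum_add_distrib, hzero, zero_add]
  have hTTb : |∑ k ∈ Finset.range (n+1), (f k - pf) * π k| ≤ TT π n := by
    rw [hSSeq]
    calc |∑ k ∈ Finset.range (n+1),
          (∑' i : ℕ, (f k - f (i + (n+1))) * π (i + (n+1))) * π k|
        ≤ ∑ k ∈ Finset.range (n+1),
          |(∑' i : ℕ, (f k - f (i + (n+1))) * π (i + (n+1))) * π k| :=
          Finset.abs_sum_le_sum_abs _ _
    _ ≤ ∑ k ∈ Finset.range (n+1), (BB π n - (k:ℝ) * Fb π n) * π k := by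
        apply Finset.sum_le_sum
        intro k hk
        rw [abs_mul, abs_of_pos (h.pos k)]
        exact mul_le_mul_of_nonneg_right
          (htail k (Nat.lt_succ_iff.1 (Finset.mem_range.1 hk))) (h.pos k).le
    _ = TT π n := by
        have e1 : ∀ k : ℕ, (BB π n - (k:ℝ) * Fb π n) * π k
            = BB π n * π k - Fb π n * ((k:ℝ) * π k) := fun k => by ring
        rw [Finset.sum_congr rfl (fun k _ => e1 k), Finset.sum_sub_distrib,
          ← Finset.mul_sum, ← Finset.mul_sum]
        unfold TT FF AA
        ring
  rw [hgS n, abs_div, abs_of_pos (mul_pos h.ha (h.pos n))]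
  unfold GG
  exact (div_le_div_iff_of_pos_right (mul_pos h.ha (h.pos n))).2 hTTb

end
end Stmt4

/-- bound on `|g̃_f n|` for the PBD(a;0,1,b) Stein solution. -/
theorem stmt_4
    (a b : ℝ) (ha : 0 < a) (hb : 0 < b)
    (C : ℝ) (hC : 0 < C) (π : ℕ → ℝ)
    (hπ : ∀ n : ℕ, π n =
      C * a ^ n / ∏ i ∈ Finset.range n, (((i : ℝ) + 1) + b * ((i : ℝ) + 1) * (i : ℝ)))
    (hπ1 : ∑' n, π n = 1)
    (f : ℕ → ℝ) (hf : ∀ x y : ℕ, |f x - f y| ≤ |(x : ℝ) - (y : ℝ)|)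
    (hfs : Summable fun n => |f n| * π n)
    (g : ℕ → ℝ) (hg0 : g 0 = g 1)
    (hg : ∀ n : ℕ, a * g (n + 1) - ((n : ℝ) + b * (n : ℝ) * ((n : ℝ) - 1)) * g n
      = f n - ∑' k, f k * π k)
    :
    ∀ n : ℕ, |g n| ≤
      min (1 / (1 + 2 * a * b / (a + 2 * b + 2)))
        ((Real.sqrt (a * b + (b - 1) ^ 2 / 4) + (b - 1) / 2) / (a * b)) := by
  classical
  have hfac : ∀ i : ℕ, (0:ℝ) < ((i : ℝ) + 1) + b * ((i : ℝ) + 1) * (i : ℝ) := by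
    intro i
    have h0 : (0:ℝ) ≤ (i:ℝ) := Nat.cast_nonneg i
    nlinarith [mul_nonneg (mul_nonneg hb.le (by linarith : (0:ℝ) ≤ (i:ℝ)+1)) h0]
  have hpos : ∀ n : ℕ, 0 < π n := by
    intro n
    rw [hπ n]
    exact div_pos (by positivity) (Finset.prod_pos (fun i _ => hfac i))
  have hrc : ∀ n : ℕ, a * π n = Stmt4.lm b (n+1) * π (n+1) := by
    intro n
    rw [hπ n, hπ (n+1), Finset.prod_range_succ]
    have hlm : Stmt4.lm b (n+1) = (((n:ℝ)) + 1) + b * ((n:ℝ) + 1) * (n:ℝ) := by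
      unfold Stmt4.lm; push_cast; ring
    rw [hlm]
    have hP : (0:ℝ) < ∏ i ∈ Finset.range n, (((i : ℝ) + 1) + b * ((i : ℝ) + 1) * (i : ℝ)) :=
      Finset.prod_pos (fun i _ => hfac i)
    have ht := hfac n
    field_simp
    ring_nf
    exact congrArg _ (Finset.prod_congr rfl (fun x _ => by ring))
  have H : Stmt4.Hyp a b π := ⟨ha, hb, hpos, hrc, hπ1⟩
  set s : ℝ := Real.sqrt (a * b + (b - 1) ^ 2 / 4) with hsdef
  have hsq : s^2 = a * b + (b - 1) ^ 2 / 4 := Real.sq_sqrt (by positivity)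
  have hsnn : 0 ≤ s := Real.sqrt_nonneg _
  have hθpos : 0 < s - (b-1)/2 := by nlinarith [mul_pos ha hb]
  have hθ2 : (s - (b-1)/2)^2 + (b-1)*(s - (b-1)/2) = a*b := by linear_combination hsq
  have hEθ : (s + (b - 1) / 2) / (a * b) = 1 / (s - (b-1)/2) := by
    rw [div_eq_div_iff (ne_of_gt (by positivity : (0:ℝ) < a*b)) (ne_of_gt hθpos)]
    linear_combination hsq
  have hS : (0:ℝ) < a+2*b+2 := by linarith
  have hD : 1 / (1 + 2 * a * b / (a + 2 * b + 2))
      = (a+2*b+2)/((a+2*b+2)+2*a*b) := by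
    have e1 : 1 + 2*a*b/(a+2*b+2) = ((a+2*b+2)+2*a*b)/(a+2*b+2) := by
      field_simp
    rw [e1, one_div_div]
  have hgb := Stmt4.g_le_GG H f (∑' k, f k * π k) rfl hf hfs g
    (by intro n; unfold Stmt4.lm; exact hg n)
  have hGm := Stmt4.GG_main H hθpos hθ2
  intro n
  rw [hD, hEθ]
  cases n with
  | zero => rw [hg0]; exact le_trans (hgb 0) (hGm 0)
  | succ n => exact le_trans (hgb n) (hGm n)
end

section
/- For every i ≥ 1 and every 1-Lipschitz function f : ℤ₊ → ℝ, the Stein solution satisfies |g_f(i)| ≤ g_{f₁}(i); that is, the supremum of |g_f(i)| over 1-Lipschitz f is attained at f₁ and equals g_{f₁}(i). -/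
/-- for `i ≥ 1`, the supremum over 1-Lipschitz `f` of `|g_f i|` is attained at `f₁ k = -k`: `|g_f i| ≤ g_{f₁} i`. -/
theorem stmt_8
    (α β : ℝ) (hα : 0 < α) (hβ : 0 < β)
    (C : ℝ) (hC : 0 < C) (π : ℕ → ℝ)
    (hπ : ∀ n : ℕ, π n =
      C * α ^ n / ∏ i ∈ Finset.range n, (β * ((i : ℝ) + 1) + ((i : ℝ) + 1) * (i : ℝ)))
    (hπ1 : ∑' n, π n = 1)
    (f : ℕ → ℝ) (hf : ∀ x y : ℕ, |f x - f y| ≤ |(x : ℝ) - (y : ℝ)|)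
    (hfs : Summable fun n => |f n| * π n)
    (g : ℕ → ℝ) (hg0 : g 0 = g 1)
    (hg : ∀ n : ℕ, α * g (n + 1) - (β * (n : ℝ) + (n : ℝ) * ((n : ℝ) - 1)) * g n
      = f n - ∑' k, f k * π k)
    (g₁ : ℕ → ℝ) (hg₁0 : g₁ 0 = g₁ 1)
    (hg₁ : ∀ n : ℕ, α * g₁ (n + 1) - (β * (n : ℝ) + (n : ℝ) * ((n : ℝ) - 1)) * g₁ n
      = -(n : ℝ) - ∑' k : ℕ, -(k : ℝ) * π k)
    :
    ∀ i : ℕ, 1 ≤ i → |g i| ≤ g₁ i := by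
  -- positivity of π
  have hprodpos : ∀ n : ℕ,
      0 < ∏ i ∈ Finset.range n, (β * ((i : ℝ) + 1) + ((i : ℝ) + 1) * (i : ℝ)) := by
    intro n
    apply Finset.prod_pos
    intro i _
    have h1 : (0:ℝ) ≤ ((i:ℝ) + 1) * (i:ℝ) := by positivity
    nlinarith [Nat.cast_nonneg (α := ℝ) i]
  have hπpos : ∀ n, 0 < π n := by
    intro n
    rw [hπ n]
    exact div_pos (mul_pos hC (pow_pos hα n)) (hprodpos n)
  -- detailed balance recurrence
  have hrec : ∀ n : ℕ, (β * ((n:ℝ) + 1) + ((n:ℝ) + 1) * (n:ℝ)) * π (n+1) = α * π n := by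
    intro n
    rw [hπ n, hπ (n+1), Finset.prod_range_succ]
    have hD : (0:ℝ) < β * ((n:ℝ) + 1) + ((n:ℝ) + 1) * (n:ℝ) := by
      have h1 : (0:ℝ) ≤ ((n:ℝ) + 1) * (n:ℝ) := by positivity
      nlinarith [Nat.cast_nonneg (α := ℝ) n]
    field_simp
    ring
  -- summability
  have hπsum : Summable π := by
    by_contra h
    rw [tsum_eq_zero_of_not_summable h] at hπ1
    norm_num at hπ1
  have hnπsum : Summable (fun n : ℕ => (n:ℝ) * π n) := by
    apply summable_of_ratio_norm_eventually_le (r := 1/2) (by norm_num)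
    filter_upwards [Filter.eventually_atTop.2 ⟨max 1 ⌈2*α⌉₊, fun n hn => hn⟩] with n hn
    have hn1 : 1 ≤ n := le_trans (le_max_left _ _) hn
    have hn2 : 2 * α ≤ (n:ℝ) := by
      calc 2*α ≤ (⌈2*α⌉₊ : ℝ) := Nat.le_ceil _
        _ ≤ (n:ℝ) := by exact_mod_cast le_trans (le_max_right _ _) hn
    have hn1' : (1:ℝ) ≤ (n:ℝ) := by exact_mod_cast hn1
    have h2α : 2 * α ≤ (n:ℝ) * (β + n) := by nlinarith
    have hr := hrec n
    have hp := hπpos n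
    have hp1 := hπpos (n+1)
    rw [Real.norm_eq_abs, Real.norm_eq_abs, abs_of_nonneg (by positivity),
      abs_of_nonneg (by positivity)]
    push_cast
    nlinarith [mul_le_mul_of_nonneg_right h2α hp.le]
  have hπnonneg : ∀ n, (0:ℝ) ≤ π n := fun n => (hπpos n).le
  have hfπsum : Summable (fun n : ℕ => f n * π n) := by
    apply Summable.of_norm_bounded hfs
    intro n
    rw [Real.norm_eq_abs, abs_mul, abs_of_nonneg (hπnonneg n)]
  have hkπsum : Summable (fun n : ℕ => -(n:ℝ) * π n) := by
    have := hnπsum.neg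
    apply this.congr
    intro n; ring
  -- the fundamental representation of Stein solutions
  have key : ∀ (u : ℕ → ℝ) (F : ℕ → ℝ) (Sv : ℝ),
      (∀ n : ℕ, α * u (n+1) - (β * (n:ℝ) + (n:ℝ) * ((n:ℝ)-1)) * u n = F n - Sv) →
      ∀ n : ℕ, α * π n * u (n+1) = ∑ k ∈ Finset.range (n+1), (F k - Sv) * π k := by
    intro u F Sv hrecu n
    induction n with
    | zero =>
      have h := hrecu 0
      simp only [Nat.cast_zero, mul_zero, zero_mul, sub_zero, add_zero, zero_sub, mul_neg,
        neg_zero] at h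
      rw [Finset.sum_range_one]
      have : α * u 1 = F 0 - Sv := by linarith [h]
      rw [show α * π 0 * u 1 = π 0 * (α * u 1) by ring, this]; ring
    | succ n ih =>
      have h := hrecu (n+1)
      rw [Finset.sum_range_succ, ← ih]
      have hr := hrec n
      push_cast at h
      linear_combination π (n+1) * h + u (n+1) * hr
  set S : ℝ := ∑' k, f k * π k with hS
  set S₁ : ℝ := ∑' k : ℕ, -(k:ℝ) * π k with hS₁
  have Hf : ∀ n : ℕ, α * π n * g (n+1) = ∑ k ∈ Finset.range (n+1), (f k - S) * π k :=
    key g f S hg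
  have H1 : ∀ n : ℕ, α * π n * g₁ (n+1)
      = ∑ k ∈ Finset.range (n+1), (-(k:ℝ) - S₁) * π k :=
    key g₁ (fun k => -(k:ℝ)) S₁ hg₁
  -- main estimate
  intro i hi
  obtain ⟨n, rfl⟩ : ∃ n, i = n + 1 := ⟨i - 1, (Nat.succ_pred_eq_of_pos hi).symm⟩
  set s : Finset ℕ := Finset.range (n+1) with hs
  set P : ℝ := ∑ k ∈ s, π k with hP
  set Ffin : ℝ := ∑ k ∈ s, f k * π k with hF
  set Mfin : ℝ := ∑ k ∈ s, (k:ℝ) * π k with hM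
  -- complement sums
  have hcπ : ∑' (j : ↑((↑s : Set ℕ)ᶜ)), π j = 1 - P := by
    have := Summable.sum_add_tsum_compl (s := s) hπsum
    rw [hπ1] at this; linarith
  have hcf : ∑' (j : ↑((↑s : Set ℕ)ᶜ)), f j * π j = S - Ffin := by
    have := Summable.sum_add_tsum_compl (s := s) hfπsum
    rw [← hS] at this; linarith
  have hck : ∑' (j : ↑((↑s : Set ℕ)ᶜ)), -((j:ℕ):ℝ) * π j = S₁ - (-Mfin) := by
    have := Summable.sum_add_tsum_compl (s := s) hkπsum
    rw [← hS₁] at this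
    have hM' : ∑ k ∈ s, -(k:ℝ) * π k = -Mfin := by
      rw [hM, ← Finset.sum_neg_distrib]
      exact Finset.sum_congr rfl (fun k _ => by ring)
    linarith [hM' ▸ this]
  -- double-sum representation, generic
  have rep : ∀ (F : ℕ → ℝ) (Sv : ℝ), Summable (fun k => F k * π k) →
      (∑' k, F k * π k) = Sv →
      ∑ k ∈ s, (F k - Sv) * π k
        = ∑' (j : ↑((↑s : Set ℕ)ᶜ)), π j * ∑ k ∈ s, (F k - F j) * π k := by
    intro F Sv hFs hSv
    have hcF : ∑' (j : ↑((↑s : Set ℕ)ᶜ)), F j * π j = Sv - ∑ k ∈ s, F k * π k := by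
      have := Summable.sum_add_tsum_compl (s := s) hFs
      rw [hSv] at this; linarith
    have e1 : ∀ j : ↑((↑s : Set ℕ)ᶜ),
        π j * ∑ k ∈ s, (F k - F j) * π k
        = (∑ k ∈ s, F k * π k) * π j - P * (F j * π j) := by
      intro j
      have : ∑ k ∈ s, (F k - F (j:ℕ)) * π k
          = (∑ k ∈ s, F k * π k) - F (j:ℕ) * P := by
        rw [hP, Finset.mul_sum, ← Finset.sum_sub_distrib]
        exact Finset.sum_congr rfl (fun k _ => by ring)
      rw [this]; ring
    have hsum1 : Summable (fun j : ↑((↑s : Set ℕ)ᶜ) => (∑ k ∈ s, F k * π k) * π ↑j) :=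
      (hπsum.subtype _).mul_left _
    have hsum2 : Summable (fun j : ↑((↑s : Set ℕ)ᶜ) => P * (F ↑j * π ↑j)) :=
      (hFs.subtype _).mul_left _
    rw [tsum_congr e1, hsum1.tsum_sub hsum2, tsum_mul_left, tsum_mul_left, hcπ, hcF]
    have : ∑ k ∈ s, (F k - Sv) * π k = (∑ k ∈ s, F k * π k) - Sv * P := by
      rw [hP, Finset.mul_sum, ← Finset.sum_sub_distrib]
      exact Finset.sum_congr rfl (fun k _ => by ring)
    rw [this]; ring
  have repf := rep f S hfπsum rfl
  have rep1 := rep (fun k => -(k:ℝ)) S₁ hkπsum rfl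
  -- the dominating sequence
  have hmem : ∀ j : ↑((↑s : Set ℕ)ᶜ), ∀ k ∈ s, (k:ℝ) ≤ ((j:ℕ):ℝ) := by
    intro j k hk
    have hj : (j:ℕ) ∉ s := j.2
    have hk' : k < n + 1 := Finset.mem_range.1 hk
    have hj' : n + 1 ≤ (j:ℕ) := not_lt.1 (fun h => hj (Finset.mem_range.2 h))
    exact_mod_cast (lt_of_lt_of_le hk' hj').le
  have hBinner : ∀ j : ↑((↑s : Set ℕ)ᶜ),
      ∑ k ∈ s, (-(k:ℝ) - -((j:ℕ):ℝ)) * π k = ∑ k ∈ s, (((j:ℕ):ℝ) - k) * π k :=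
    fun j => Finset.sum_congr rfl (fun k _ => by ring)
  have hbound : ∀ j : ↑((↑s : Set ℕ)ᶜ),
      |π (j:ℕ) * ∑ k ∈ s, (f k - f (j:ℕ)) * π k|
        ≤ π (j:ℕ) * ∑ k ∈ s, (((j:ℕ):ℝ) - k) * π k := by
    intro j
    rw [abs_mul, abs_of_nonneg (hπnonneg _)]
    apply mul_le_mul_of_nonneg_left _ (hπnonneg _)
    calc |∑ k ∈ s, (f k - f (j:ℕ)) * π k| ≤ ∑ k ∈ s, |(f k - f (j:ℕ)) * π k| :=
          Finset.abs_sum_le_sum_abs _ _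
      _ ≤ ∑ k ∈ s, (((j:ℕ):ℝ) - k) * π k := by
          apply Finset.sum_le_sum
          intro k hk
          rw [abs_mul, abs_of_nonneg (hπnonneg _)]
          apply mul_le_mul_of_nonneg_right _ (hπnonneg _)
          calc |f k - f (j:ℕ)| ≤ |(k:ℝ) - ((j:ℕ):ℝ)| := hf k (j:ℕ)
            _ = ((j:ℕ):ℝ) - k := by
                rw [abs_sub_comm, abs_of_nonneg (by linarith [hmem j k hk])]
  have hBsum : Summable (fun j : ↑((↑s : Set ℕ)ᶜ) =>
      π (j:ℕ) * ∑ k ∈ s, (((j:ℕ):ℝ) - k) * π k) := by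
    have h0 : Summable (fun j : ℕ => π j * ∑ k ∈ s, ((j:ℝ) - k) * π k) := by
      have : (fun j : ℕ => π j * ∑ k ∈ s, ((j:ℝ) - k) * π k)
          = fun j : ℕ => P * ((j:ℝ) * π j) - Mfin * π j := by
        funext j
        have : ∑ k ∈ s, ((j:ℝ) - k) * π k = (j:ℝ) * P - Mfin := by
          rw [hP, hM, Finset.mul_sum, ← Finset.sum_sub_distrib]
          exact Finset.sum_congr rfl (fun k _ => by ring)
        rw [this]; ring
      rw [this]
      exact (hnπsum.mul_left P).sub (hπsum.mul_left Mfin)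
    exact h0.subtype _
  have hAsum : Summable (fun j : ↑((↑s : Set ℕ)ᶜ) =>
      π (j:ℕ) * ∑ k ∈ s, (f k - f (j:ℕ)) * π k) := by
    apply Summable.of_norm_bounded hBsum
    intro j
    rw [Real.norm_eq_abs]
    exact hbound j
  -- put it together
  have hfin : |∑ k ∈ s, (f k - S) * π k| ≤ ∑ k ∈ s, (-(k:ℝ) - S₁) * π k := by
    rw [repf, rep1]
    calc |∑' (j : ↑((↑s : Set ℕ)ᶜ)), π (j:ℕ) * ∑ k ∈ s, (f k - f (j:ℕ)) * π k|
        ≤ ∑' (j : ↑((↑s : Set ℕ)ᶜ)), ‖π (j:ℕ) * ∑ k ∈ s, (f k - f (j:ℕ)) * π k‖ := by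
          exact_mod_cast norm_tsum_le_tsum_norm hAsum.norm
      _ ≤ ∑' (j : ↑((↑s : Set ℕ)ᶜ)), π (j:ℕ) * ∑ k ∈ s, (((j:ℕ):ℝ) - k) * π k := by
          apply hAsum.norm.tsum_le_tsum _ hBsum
          intro j
          rw [Real.norm_eq_abs]
          exact hbound j
      _ = ∑' (j : ↑((↑s : Set ℕ)ᶜ)), π (j:ℕ) * ∑ k ∈ s, (-(k:ℝ) - -((j:ℕ):ℝ)) * π k :=
          tsum_congr (fun j => by rw [hBinner j])
  have hfg := Hf n
  have hfg1 := H1 n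
  rw [← hs] at hfg hfg1
  rw [← hfg, ← hfg1] at hfin
  have hpos : 0 < α * π n := mul_pos hα (hπpos n)
  rw [abs_mul, abs_of_pos hpos] at hfin
  exact le_of_mul_le_mul_left hfin hpos
end

section
/- The Stein solution for f₁ is positive and decreasing on i ≥ 1: for every i ≥ 1, g_{f₁}(i) > 0 and g_{f₁}(i+1) ≤ g_{f₁}(i). -/
set_option maxHeartbeats 2000000 in
/-- the Stein solution for `f₁ k = -k` is positive and decreasing on `i ≥ 1`. -/
theorem stmt_9
    (α β : ℝ) (hα : 0 < α) (hβ : 0 < β)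
    (C : ℝ) (hC : 0 < C) (π : ℕ → ℝ)
    (hπ : ∀ n : ℕ, π n =
      C * α ^ n / ∏ i ∈ Finset.range n, (β * ((i : ℝ) + 1) + ((i : ℝ) + 1) * (i : ℝ)))
    (hπ1 : ∑' n, π n = 1)
    (g₁ : ℕ → ℝ) (hg₁0 : g₁ 0 = g₁ 1)
    (hg₁ : ∀ n : ℕ, α * g₁ (n + 1) - (β * (n : ℝ) + (n : ℝ) * ((n : ℝ) - 1)) * g₁ n
      = -(n : ℝ) - ∑' k : ℕ, -(k : ℝ) * π k)
    :
    ∀ i : ℕ, 1 ≤ i → 0 < g₁ i ∧ g₁ (i + 1) ≤ g₁ i := by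
  -- death rates
  set a : ℕ → ℝ := fun k => β * (k : ℝ) + (k : ℝ) * ((k : ℝ) - 1) with ha_def
  have haeval : ∀ k : ℕ, a k = β * (k : ℝ) + (k : ℝ) * ((k : ℝ) - 1) := fun k => rfl
  have ha_le : ∀ i j : ℕ, i ≤ j → a i ≤ a j := by
    intro i j hij
    rw [haeval, haeval]
    have h1 : (i : ℝ) ≤ (j : ℝ) := by exact_mod_cast hij
    have h0 : (0 : ℝ) ≤ (i : ℝ) := Nat.cast_nonneg i
    rcases Nat.eq_or_lt_of_le hij with h | h
    · subst h; exact le_rfl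
    · have h2 : (i : ℝ) + 1 ≤ (j : ℝ) := by exact_mod_cast h
      nlinarith [mul_nonneg (by linarith : (0:ℝ) ≤ (j:ℝ) - i) hβ.le,
        mul_nonneg (by linarith : (0:ℝ) ≤ (j:ℝ) - i) (by linarith : (0:ℝ) ≤ (j:ℝ) + i - 1)]
  -- positivity of π
  have hfact : ∀ i : ℕ, 0 < β * ((i : ℝ) + 1) + ((i : ℝ) + 1) * (i : ℝ) := by
    intro i
    have h0 : (0 : ℝ) ≤ (i : ℝ) := Nat.cast_nonneg i
    nlinarith
  have hprodpos : ∀ n : ℕ, 0 < ∏ i ∈ Finset.range n, (β * ((i : ℝ) + 1) + ((i : ℝ) + 1) * (i : ℝ)) := by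
    intro n
    exact Finset.prod_pos (fun i _ => hfact i)
  have hπpos : ∀ n : ℕ, 0 < π n := by
    intro n
    rw [hπ n]
    exact div_pos (mul_pos hC (pow_pos hα n)) (hprodpos n)
  -- balance equation
  have hbal : ∀ n : ℕ, α * π n = a (n + 1) * π (n + 1) := by
    intro n
    have h1 : (∏ i ∈ Finset.range n, (β * ((i : ℝ) + 1) + ((i : ℝ) + 1) * (i : ℝ))) ≠ 0 :=
      ne_of_gt (hprodpos n)
    have h2 : β * ((n : ℝ) + 1) + ((n : ℝ) + 1) * (n : ℝ) ≠ 0 := ne_of_gt (hfact n)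
    rw [hπ n, hπ (n + 1), Finset.prod_range_succ, haeval]
    push_cast
    field_simp
    ring
  -- summability of π
  have hsum : Summable π := by
    by_contra h
    rw [tsum_eq_zero_of_not_summable h] at hπ1
    norm_num at hπ1
  -- summability of k ↦ k * π k
  have hsum1 : Summable (fun k : ℕ => (k : ℝ) * π k) := by
    apply (summable_nat_add_iff 1).1
    apply Summable.of_nonneg_of_le
      (fun n => mul_nonneg (Nat.cast_nonneg _) (hπpos _).le)
      (fun n => ?_) (hsum.mul_left (α / β))
    have hb := hbal n
    rw [haeval] at hb
    push_cast at hb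
    have hp := hπpos (n + 1)
    have h0 : (0 : ℝ) ≤ (n : ℝ) := Nat.cast_nonneg n
    rw [div_mul_eq_mul_div, le_div_iff₀ hβ]
    push_cast
    nlinarith [mul_nonneg (mul_nonneg (by linarith : (0:ℝ) ≤ (n:ℝ)+1) h0) hp.le]
  -- summability of k ↦ a k * π k and its sum
  have hsuma : Summable (fun k : ℕ => a k * π k) := by
    apply (summable_nat_add_iff 1).1
    have : (fun k : ℕ => a (k + 1) * π (k + 1)) = fun k : ℕ => α * π k :=
      funext fun k => (hbal k).symm
    rw [this]
    exact hsum.mul_left α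
  have hEa : ∑' k, a k * π k = α := by
    rw [Summable.tsum_eq_zero_add hsuma]
    have h0 : a 0 * π 0 = 0 := by rw [haeval]; push_cast; ring
    have h1 : ∑' k : ℕ, a (k + 1) * π (k + 1) = ∑' k : ℕ, α * π k :=
      tsum_congr fun k => (hbal k).symm
    rw [h0, h1, tsum_mul_left, hπ1]
    ring
  -- the mean m
  set m : ℝ := ∑' k : ℕ, (k : ℝ) * π k with hm_def
  have hneg : ∑' k : ℕ, -(k : ℝ) * π k = -m := by
    rw [hm_def]
    rw [← tsum_neg]
    apply tsum_congr; intro k; ring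
  have hstein : ∀ n : ℕ, α * g₁ (n + 1) = a n * g₁ n + (m - (n : ℝ)) := by
    intro n
    have h := hg₁ n
    rw [hneg] at h
    rw [haeval]
    linarith
  have hm_pos : 0 < m := by
    rw [hm_def]
    apply Summable.tsum_pos hsum1 (fun b => mul_nonneg (Nat.cast_nonneg _) (hπpos _).le) 1
    have := hπpos 1
    push_cast
    linarith
  -- Lemma A (Jensen-type): m * (β + 2k) ≤ k(k+1) + α
  have hA : ∀ k : ℕ, m * (β + 2 * (k : ℝ)) ≤ (k : ℝ) * ((k : ℝ) + 1) + α := by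
    intro k
    have heq : ∀ l : ℕ, ((l : ℝ) - k) * ((l : ℝ) - k - 1) * π l
        = (a l * π l - (β + 2 * (k : ℝ)) * ((l : ℝ) * π l)) + ((k : ℝ) * ((k : ℝ) + 1)) * π l := by
      intro l; rw [haeval]; ring
    have hterm : ∀ l : ℕ, 0 ≤ ((l : ℝ) - k) * ((l : ℝ) - k - 1) * π l := by
      intro l
      have hp := hπpos l
      rcases le_or_gt l k with h | h
      · have h1 : (l : ℝ) ≤ (k : ℝ) := by exact_mod_cast h
        have h2 : (0:ℝ) ≤ ((k:ℝ) - l) * (((k:ℝ) + 1) - l) * π l :=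
          mul_nonneg (mul_nonneg (by linarith) (by linarith)) hp.le
        nlinarith [h2]
      · have h1 : (k : ℝ) + 1 ≤ (l : ℝ) := by exact_mod_cast h
        exact mul_nonneg (mul_nonneg (by linarith) (by linarith)) hp.le
    have hsum2 : Summable (fun l : ℕ => ((l : ℝ) - k) * ((l : ℝ) - k - 1) * π l) := by
      rw [funext heq]
      exact (hsuma.sub (hsum1.mul_left _)).add (hsum.mul_left _)
    have hval : ∑' l : ℕ, ((l : ℝ) - k) * ((l : ℝ) - k - 1) * π l
        = (α - (β + 2 * (k : ℝ)) * m) + (k : ℝ) * ((k : ℝ) + 1) := by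
      rw [funext heq]
      rw [Summable.tsum_add (hsuma.sub (hsum1.mul_left _)) (hsum.mul_left _),
        Summable.tsum_sub hsuma (hsum1.mul_left _), tsum_mul_left, tsum_mul_left, hEa, hπ1, hm_def]
      ring
    have hnn : 0 ≤ ∑' l : ℕ, ((l : ℝ) - k) * ((l : ℝ) - k - 1) * π l := tsum_nonneg hterm
    rw [hval] at hnn
    linarith
  have hmβ : m * β ≤ α := by
    have := hA 0
    push_cast at this
    linarith
  -- partial sums S
  set S : ℕ → ℝ := fun n => ∑ k ∈ Finset.range (n + 1), (m - (k : ℝ)) * π k with hS_def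
  have hS0 : S 0 = m * π 0 := by
    simp only [hS_def]
    rw [Finset.sum_range_one]
    push_cast
    ring
  have hS_succ : ∀ n : ℕ, S (n + 1) = S n + (m - ((n : ℝ) + 1)) * π (n + 1) := by
    intro n
    simp only [hS_def]
    rw [Finset.sum_range_succ]
    push_cast
    ring
  -- representation of g via S
  have hrep : ∀ n : ℕ, α * π n * g₁ (n + 1) = S n := by
    intro n
    induction n with
    | zero =>
      have h := hstein 0
      have h0 : a 0 * g₁ 0 = 0 := by rw [haeval]; push_cast; ring
      rw [h0] at h
      push_cast at h
      rw [hS0]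
      calc α * π 0 * g₁ 1 = π 0 * (α * g₁ 1) := by ring
        _ = π 0 * m := by rw [h]; ring
        _ = m * π 0 := by ring
    | succ n ih =>
      have h := hstein (n + 1)
      have hb := hbal n
      rw [hS_succ n, ← ih]
      calc α * π (n + 1) * g₁ (n + 1 + 1)
          = π (n + 1) * (α * g₁ (n + 1 + 1)) := by ring
        _ = π (n + 1) * (a (n + 1) * g₁ (n + 1) + (m - ((n : ℝ) + 1))) := by rw [h]; push_cast; ring
        _ = (a (n + 1) * π (n + 1)) * g₁ (n + 1) + (m - ((n : ℝ) + 1)) * π (n + 1) := by ring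
        _ = (α * π n) * g₁ (n + 1) + (m - ((n : ℝ) + 1)) * π (n + 1) := by rw [hb]
        _ = α * π n * g₁ (n + 1) + (m - ((n : ℝ) + 1)) * π (n + 1) := by ring
  -- tail representation of S
  have hsum_km : Summable (fun k : ℕ => ((k : ℝ) - m) * π k) := by
    have : (fun k : ℕ => ((k : ℝ) - m) * π k)
        = fun k : ℕ => (k : ℝ) * π k - m * π k := by funext k; ring
    rw [this]
    exact hsum1.sub (hsum.mul_left m)
  have htotal : ∑' k : ℕ, ((k : ℝ) - m) * π k = 0 := by
    have : (fun k : ℕ => ((k : ℝ) - m) * π k)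
        = fun k : ℕ => (k : ℝ) * π k - m * π k := by funext k; ring
    rw [this, Summable.tsum_sub hsum1 (hsum.mul_left m), tsum_mul_left, hπ1, hm_def]
    ring
  have htail : ∀ t : ℕ, S t = ∑' j : ℕ, ((↑(j + (t + 1)) : ℝ) - m) * π (j + (t + 1)) := by
    intro t
    have h := Summable.sum_add_tsum_nat_add (f := fun k : ℕ => ((k : ℝ) - m) * π k) (t + 1) hsum_km
    rw [htotal] at h
    have h2 : S t = -∑ i ∈ Finset.range (t + 1), (((i : ℝ)) - m) * π i := by
      simp only [hS_def]
      rw [← Finset.sum_neg_distrib]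
      apply Finset.sum_congr rfl
      intro k _
      ring
    rw [h2]
    linarith
  have hsum_tail : ∀ t : ℕ, Summable (fun j : ℕ => ((↑(j + (t + 1)) : ℝ) - m) * π (j + (t + 1))) :=
    fun t => (summable_nat_add_iff (t + 1)).2 hsum_km
  -- positivity of S
  have hSpos : ∀ n : ℕ, 0 < S n := by
    intro n
    rcases lt_or_ge m ((n : ℝ) + 1) with h | h
    · rw [htail n]
      apply Summable.tsum_pos (hsum_tail n) (fun j => ?_) 0
      · have hp := hπpos (0 + (n + 1))
        have hc : (0 : ℝ) < (↑(0 + (n + 1)) : ℝ) - m := by push_cast; linarith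
        exact mul_pos hc hp
      · have hp := hπpos (j + (n + 1))
        have hc : (0 : ℝ) ≤ (↑(j + (n + 1)) : ℝ) - m := by
          push_cast
          have : (0 : ℝ) ≤ (j : ℝ) := Nat.cast_nonneg j
          linarith
        exact mul_nonneg hc hp.le
    · simp only [hS_def]
      apply Finset.sum_pos
      · intro k hk
        have hk' : (k : ℝ) ≤ (n : ℝ) := by
          have := Finset.mem_range.1 hk
          exact_mod_cast Nat.lt_succ_iff.1 this
        exact mul_pos (by linarith) (hπpos k)
      · exact Finset.nonempty_range_iff.2 (Nat.succ_ne_zero n)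
  -- UP induction: below the mean
  have hup : ∀ n : ℕ, (n : ℝ) + 1 < m →
      α * (m - ((n : ℝ) + 1)) * π n ≤ (α - a (n + 1)) * S n := by
    intro n
    induction n with
    | zero =>
      intro hm1
      have ha1 : a 1 = β := by rw [haeval]; push_cast; ring
      rw [hS0, ha1]
      push_cast
      have hp := hπpos 0
      nlinarith
    | succ n ih =>
      intro hm2
      push_cast at hm2
      have hm1 : (n : ℝ) + 1 < m := by linarith
      have ihn := ih hm1
      have hb := hbal n
      -- a (n+1) < α and a (n+2) < α from Lemma A
      have ha1 : a (n + 1) < α := by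
        have hAk := hA (n + 1)
        rw [haeval]
        push_cast at hAk ⊢
        nlinarith [mul_lt_mul_of_pos_right (show (n:ℝ)+1 < m by linarith)
          (show (0:ℝ) < β + 2*((n:ℝ)+1) by positivity)]
      have ha2 : a (n + 2) < α := by
        have hAk := hA (n + 2)
        rw [haeval]
        push_cast at hAk ⊢
        nlinarith [mul_lt_mul_of_pos_right (show (n:ℝ)+2 < m by linarith)
          (show (0:ℝ) < β + 2*((n:ℝ)+2) by positivity)]
      have hP : 0 < α - a (n + 1) := by linarith
      have hD : 0 < α - a (n + 2) := by linarith
      -- key inequality from Lemma A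
      have hca : (m - ((n : ℝ) + 1)) * (β + 2 * ((n : ℝ) + 1)) ≤ α - a (n + 1) := by
        have hAk := hA (n + 1)
        rw [haeval]
        push_cast at hAk ⊢
        nlinarith
      have key : (m - ((n : ℝ) + 2)) * (α - a (n + 1)) ≤ (m - ((n : ℝ) + 1)) * (α - a (n + 2)) := by
        have expand : (m - ((n : ℝ) + 1)) * (α - a (n + 2)) - (m - ((n : ℝ) + 2)) * (α - a (n + 1))
            = (α - a (n + 1)) - (m - ((n : ℝ) + 1)) * (β + 2 * ((n : ℝ) + 1)) := by
          rw [haeval, haeval]; push_cast; ring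
        linarith [hca, expand]
      -- assemble
      have e1 := hS_succ n
      have t2 : (α - a (n + 2)) * (α * (m - ((n : ℝ) + 1)) * π n)
          ≤ (α - a (n + 2)) * ((α - a (n + 1)) * S n) :=
        mul_le_mul_of_nonneg_left ihn hD.le
      have t4 : (α - a (n + 2)) * (α * (m - ((n : ℝ) + 1)) * π n)
          = (α - a (n + 2)) * ((m - ((n : ℝ) + 1)) * (a (n + 1) * π (n + 1))) := by
        rw [← hb]; ring
      have t7 : ((m - ((n : ℝ) + 2)) * (α - a (n + 1))) * (α * π (n + 1))
          ≤ ((m - ((n : ℝ) + 1)) * (α - a (n + 2))) * (α * π (n + 1)) :=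
        mul_le_mul_of_nonneg_right key (mul_nonneg hα.le (hπpos (n + 1)).le)
      have t2' : (α - a (n + 2)) * ((m - ((n : ℝ) + 1)) * (a (n + 1) * π (n + 1)))
          ≤ (α - a (n + 2)) * ((α - a (n + 1)) * S n) := by rw [← t4]; exact t2
      have e2 : (α - a (n + 1)) * ((α - a (n + 2)) * S (n + 1))
          = (α - a (n + 2)) * ((α - a (n + 1)) * S n)
            + ((α - a (n + 2)) * (α - a (n + 1))) * ((m - ((n : ℝ) + 1)) * π (n + 1)) := by
        rw [e1]; ring
      have e3 : (α - a (n + 2)) * ((m - ((n : ℝ) + 1)) * (a (n + 1) * π (n + 1)))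
          + ((α - a (n + 2)) * (α - a (n + 1))) * ((m - ((n : ℝ) + 1)) * π (n + 1))
          = ((m - ((n : ℝ) + 1)) * (α - a (n + 2))) * (α * π (n + 1)) := by ring
      have e4 : ((m - ((n : ℝ) + 2)) * (α - a (n + 1))) * (α * π (n + 1))
          = (α - a (n + 1)) * (α * (m - ((n : ℝ) + 2)) * π (n + 1)) := by ring
      have t8 : (α - a (n + 1)) * (α * (m - ((n : ℝ) + 2)) * π (n + 1))
          ≤ (α - a (n + 1)) * ((α - a (n + 2)) * S (n + 1)) := by
        linarith [t2', t7, e2, e3, e4]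
      have goal' : α * (m - ((n : ℝ) + 2)) * π (n + 1) ≤ (α - a (n + 2)) * S (n + 1) :=
        le_of_mul_le_mul_left t8 hP
      push_cast
      calc α * (m - ((n : ℝ) + 1 + 1)) * π (n + 1)
          = α * (m - ((n : ℝ) + 2)) * π (n + 1) := by ring
        _ ≤ (α - a (n + 2)) * S (n + 1) := goal'
        _ = (α - a (n + 1 + 1)) * S (n + 1) := by norm_num
  -- single DOWN step
  have hstep : ∀ k : ℕ, α < a (k + 1) →
      (a (k + 2) - α) * S (k + 1) ≤ α * (((k : ℝ) + 2) - m) * π (k + 1) →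
      (a (k + 1) - α) * S k ≤ α * (((k : ℝ) + 1) - m) * π k := by
    intro k hk hM1
    have hk2 : α < a (k + 2) := lt_of_lt_of_le hk (ha_le (k + 1) (k + 2) (by omega))
    have hQ : (a (k + 1) - α) * ((k : ℝ) + 2 - m) ≤ ((k : ℝ) + 1 - m) * (a (k + 2) - α) := by
      have expand : ((k : ℝ) + 1 - m) * (a (k + 2) - α) - (a (k + 1) - α) * ((k : ℝ) + 2 - m)
          = ((k : ℝ) + 1) * (((k : ℝ) + 1) + 1) + α - m * (β + 2 * ((k : ℝ) + 1)) := by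
        rw [haeval, haeval]; push_cast; ring
      have hAk := hA (k + 1)
      push_cast at hAk
      linarith
    -- M'(k): (a(k+1)-α) S(k+1) ≤ α (k+1-m) π(k+1)
    have hM' : (a (k + 1) - α) * S (k + 1) ≤ α * (((k : ℝ) + 1) - m) * π (k + 1) := by
      have h1 : (a (k + 2) - α) * ((a (k + 1) - α) * S (k + 1))
          ≤ (a (k + 2) - α) * (α * (((k : ℝ) + 1) - m) * π (k + 1)) := by
        have u1 : (a (k + 1) - α) * ((a (k + 2) - α) * S (k + 1))
            ≤ (a (k + 1) - α) * (α * (((k : ℝ) + 2) - m) * π (k + 1)) :=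
          mul_le_mul_of_nonneg_left hM1 (by linarith)
        have u2 : ((a (k + 1) - α) * ((k : ℝ) + 2 - m)) * (α * π (k + 1))
            ≤ (((k : ℝ) + 1 - m) * (a (k + 2) - α)) * (α * π (k + 1)) :=
          mul_le_mul_of_nonneg_right hQ (mul_nonneg hα.le (hπpos (k + 1)).le)
        nlinarith [u1, u2]
      exact le_of_mul_le_mul_left h1 (by linarith)
    have hb := hbal k
    have e1 := hS_succ k
    calc (a (k + 1) - α) * S k
        = (a (k + 1) - α) * S (k + 1) + ((k : ℝ) + 1 - m) * (a (k + 1) * π (k + 1))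
          - α * ((((k : ℝ) + 1) - m) * π (k + 1)) := by rw [e1]; ring
      _ ≤ α * (((k : ℝ) + 1) - m) * π (k + 1) + ((k : ℝ) + 1 - m) * (a (k + 1) * π (k + 1))
          - α * ((((k : ℝ) + 1) - m) * π (k + 1)) := by linarith [hM']
      _ = ((k : ℝ) + 1 - m) * (a (k + 1) * π (k + 1)) := by ring
      _ = ((k : ℝ) + 1 - m) * (α * π k) := by rw [← hb]
      _ = α * (((k : ℝ) + 1) - m) * π k := by ring
  -- base case for DOWN induction
  have hbase : ∀ n : ℕ, m + α + 2 * α / β + 4 ≤ (n : ℝ) →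
      (a (n + 1) - α) * S n ≤ α * (((n : ℝ) + 1) - m) * π n := by
    intro n hn
    have hab : 0 ≤ 2 * α / β := by positivity
    have hmn : m ≤ (n : ℝ) := by linarith
    have hαn : α + 4 ≤ (n : ℝ) := by linarith
    have h2ab : 2 * α / β ≤ (n : ℝ) := by linarith
    have hn0 : (0 : ℝ) ≤ (n : ℝ) := Nat.cast_nonneg n
    have ha1 : α < a (n + 1) := by
      rw [haeval]; push_cast; nlinarith
    have ha2 : α < a (n + 2) := lt_of_lt_of_le ha1 (ha_le (n + 1) (n + 2) (by omega))
    have hA2pos : 0 < a (n + 2) := lt_trans hα ha2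
    have hu : 0 < a (n + 2) - α := by linarith
    set q : ℝ := α / a (n + 2) with hq_def
    have hq0 : 0 < q := div_pos hα hA2pos
    have hq1 : q < 1 := (div_lt_one hA2pos).2 ha2
    -- geometric domination of the tail
    have hgeo : ∀ j : ℕ, π (j + (n + 2)) ≤ π (n + 1) * q ^ (j + 1) := by
      intro j
      induction j with
      | zero =>
        have hb := hbal (n + 1)
        have : π (0 + (n + 2)) = π (n + 1) * q := by
          have hidx : 0 + (n + 2) = (n + 1) + 1 := by omega
          rw [hidx, hq_def]
          field_simp
          linarith [hb]
        rw [this]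
        norm_num
      | succ j ih =>
        have hidx : (j + 1) + (n + 2) = (j + (n + 2)) + 1 := by omega
        rw [hidx]
        have hb := hbal (j + (n + 2))
        have hle : a (n + 2) ≤ a (j + (n + 2) + 1) := ha_le (n + 2) (j + (n + 2) + 1) (by omega)
        have hp1 := hπpos (j + (n + 2) + 1)
        have h1 : a (n + 2) * π (j + (n + 2) + 1) ≤ α * π (j + (n + 2)) := by
          rw [hb]
          nlinarith
        have h2 : π (j + (n + 2) + 1) ≤ q * π (j + (n + 2)) := by
          rw [hq_def, div_mul_eq_mul_div, le_div_iff₀ hA2pos]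
          linarith
        calc π (j + (n + 2) + 1) ≤ q * π (j + (n + 2)) := h2
          _ ≤ q * (π (n + 1) * q ^ (j + 1)) := mul_le_mul_of_nonneg_left ih hq0.le
          _ = π (n + 1) * q ^ (j + 1 + 1) := by ring
    -- summabilities for the geometric bound
    have hqnorm : ‖q‖ < 1 := by rwa [Real.norm_eq_abs, abs_of_pos hq0]
    have hgsum1 : Summable (fun j : ℕ => q ^ j) := summable_geometric_of_lt_one hq0.le hq1
    have hgsum2 : Summable (fun j : ℕ => (j : ℝ) * q ^ j) := by
      have := summable_pow_mul_geometric_of_norm_lt_one 1 hqnorm (R := ℝ)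
      simpa using this
    have hRHSsum : Summable (fun j : ℕ => (((n : ℝ) + 2 + (j : ℝ)) - m) * (π (n + 1) * q ^ (j + 1))) := by
      have heq : (fun j : ℕ => (((n : ℝ) + 2 + (j : ℝ)) - m) * (π (n + 1) * q ^ (j + 1)))
          = fun j : ℕ => (π (n + 1) * q) * ((((n : ℝ) + 2 - m)) * q ^ j + (j : ℝ) * q ^ j) := by
        funext j; ring
      rw [heq]
      exact ((hgsum1.mul_left _).add hgsum2).mul_left _
    -- bound S (n+1)
    have hS1B : S (n + 1) ≤ π (n + 1) * q * (((n : ℝ) + 2 - m) * (1 - q)⁻¹ + q / (1 - q) ^ 2) := by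
      have ht := htail (n + 1)
      have hle : ∀ j : ℕ, ((↑(j + (n + 1 + 1)) : ℝ) - m) * π (j + (n + 1 + 1))
          ≤ (((n : ℝ) + 2 + (j : ℝ)) - m) * (π (n + 1) * q ^ (j + 1)) := by
        intro j
        have hidx : j + (n + 1 + 1) = j + (n + 2) := by omega
        rw [hidx]
        have hcast : ((↑(j + (n + 2)) : ℝ)) = (n : ℝ) + 2 + (j : ℝ) := by push_cast; ring
        rw [hcast]
        have hcoef : (0 : ℝ) ≤ ((n : ℝ) + 2 + (j : ℝ)) - m := by
          have : (0 : ℝ) ≤ (j : ℝ) := Nat.cast_nonneg j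
          linarith
        exact mul_le_mul_of_nonneg_left (hgeo j) hcoef
      have hsum_left : Summable (fun j : ℕ => ((↑(j + (n + 1 + 1)) : ℝ) - m) * π (j + (n + 1 + 1))) :=
        hsum_tail (n + 1)
      have h1 : S (n + 1) ≤ ∑' j : ℕ, (((n : ℝ) + 2 + (j : ℝ)) - m) * (π (n + 1) * q ^ (j + 1)) := by
        rw [ht]
        exact Summable.tsum_le_tsum hle hsum_left hRHSsum
      have heval : ∑' j : ℕ, (((n : ℝ) + 2 + (j : ℝ)) - m) * (π (n + 1) * q ^ (j + 1))
          = π (n + 1) * q * (((n : ℝ) + 2 - m) * (1 - q)⁻¹ + q / (1 - q) ^ 2) := by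
        have heq : (fun j : ℕ => (((n : ℝ) + 2 + (j : ℝ)) - m) * (π (n + 1) * q ^ (j + 1)))
            = fun j : ℕ => (π (n + 1) * q) * ((((n : ℝ) + 2 - m)) * q ^ j + (j : ℝ) * q ^ j) := by
          funext j; ring
        rw [heq, tsum_mul_left, Summable.tsum_add (hgsum1.mul_left _) hgsum2, tsum_mul_left,
          tsum_geometric_of_lt_one hq0.le hq1, tsum_coe_mul_geometric_of_norm_lt_one hqnorm]
      rw [heval] at h1
      exact h1
    -- key algebraic inequality
    have hinner2 : 2 * α ≤ ((n : ℝ) + 1) * ((n : ℝ) + 2) + α - m * (β + 2 * ((n : ℝ) + 1)) := by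
      have hm2 : m * (β + 2 * ((n : ℝ) + 1)) ≤ (α / β) * (β + 2 * ((n : ℝ) + 1)) := by
        apply mul_le_mul_of_nonneg_right _ (by positivity)
        rw [le_div_iff₀ hβ]
        linarith [hmβ]
      have hdiv : (α / β) * (β + 2 * ((n : ℝ) + 1)) = α + 2 * ((n : ℝ) + 1) * (α / β) := by
        field_simp
      have h3 : 2 * ((n : ℝ) + 1) * (α / β) ≤ ((n : ℝ) + 1) * (n : ℝ) := by
        have h4 : 2 * (α / β) ≤ (n : ℝ) := by
          rw [show 2 * (α / β) = 2 * α / β from by ring]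
          exact h2ab
        have h5 : 0 ≤ α / β := by positivity
        nlinarith
      nlinarith
    have hkey : (a (n + 1) - α) * (α * ((((n : ℝ) + 2 - m)) * (a (n + 2) - α) + α))
        ≤ α * (((n : ℝ) + 1) - m) * (a (n + 2) - α) ^ 2 := by
      have ha12 : a (n + 1) ≤ a (n + 2) := ha_le (n + 1) (n + 2) (by omega)
      have hG : α * (((n : ℝ) + 1) - m) * (a (n + 2) - α) ^ 2
          - (a (n + 1) - α) * (α * ((((n : ℝ) + 2 - m)) * (a (n + 2) - α) + α))
          = α * ((a (n + 2) - α) * (((n : ℝ) + 1) * ((n : ℝ) + 2) + α - m * (β + 2 * ((n : ℝ) + 1)))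
            - (a (n + 1) - α) * α) := by
        rw [haeval, haeval]; push_cast; ring
      have hfin : (a (n + 1) - α) * α ≤ (a (n + 2) - α) * (((n : ℝ) + 1) * ((n : ℝ) + 2) + α - m * (β + 2 * ((n : ℝ) + 1))) := by
        have h1 : (a (n + 1) - α) * α ≤ (a (n + 2) - α) * α :=
          mul_le_mul_of_nonneg_right (by linarith) hα.le
        have h2 : (a (n + 2) - α) * α ≤ (a (n + 2) - α) * (2 * α) := by nlinarith
        have h3 : (a (n + 2) - α) * (2 * α)
            ≤ (a (n + 2) - α) * (((n : ℝ) + 1) * ((n : ℝ) + 2) + α - m * (β + 2 * ((n : ℝ) + 1))) :=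
          mul_le_mul_of_nonneg_left hinner2 hu.le
        linarith
      nlinarith [hG, hfin, hα]
    -- conclude M'(n) then M(n)
    have hBval : q * (((n : ℝ) + 2 - m) * (1 - q)⁻¹ + q / (1 - q) ^ 2)
        = (α * ((((n : ℝ) + 2 - m)) * (a (n + 2) - α) + α)) / (a (n + 2) - α) ^ 2 := by
      have h1q : 1 - q = (a (n + 2) - α) / a (n + 2) := by
        rw [hq_def]; field_simp
      rw [hq_def, h1q]
      have hA2ne : a (n + 2) ≠ 0 := ne_of_gt hA2pos
      have hune : a (n + 2) - α ≠ 0 := sub_ne_zero.2 (ne_of_gt ha2)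
      field_simp
    have hM' : (a (n + 1) - α) * S (n + 1) ≤ α * (((n : ℝ) + 1) - m) * π (n + 1) := by
      have h5 : (a (n + 1) - α) * (q * (((n : ℝ) + 2 - m) * (1 - q)⁻¹ + q / (1 - q) ^ 2))
          ≤ α * (((n : ℝ) + 1) - m) := by
        rw [hBval, mul_div_assoc']
        rw [div_le_iff₀ (by positivity : (0:ℝ) < (a (n + 2) - α) ^ 2)]
        nlinarith [hkey]
      have h6 : (a (n + 1) - α) * S (n + 1)
          ≤ (a (n + 1) - α) * (π (n + 1) * (q * (((n : ℝ) + 2 - m) * (1 - q)⁻¹ + q / (1 - q) ^ 2))) := by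
        apply mul_le_mul_of_nonneg_left _ (by linarith : (0:ℝ) ≤ a (n + 1) - α)
        calc S (n + 1) ≤ π (n + 1) * q * (((n : ℝ) + 2 - m) * (1 - q)⁻¹ + q / (1 - q) ^ 2) := hS1B
          _ = π (n + 1) * (q * (((n : ℝ) + 2 - m) * (1 - q)⁻¹ + q / (1 - q) ^ 2)) := by ring
      have h7 : (a (n + 1) - α) * (π (n + 1) * (q * (((n : ℝ) + 2 - m) * (1 - q)⁻¹ + q / (1 - q) ^ 2)))
          = π (n + 1) * ((a (n + 1) - α) * (q * (((n : ℝ) + 2 - m) * (1 - q)⁻¹ + q / (1 - q) ^ 2))) := by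
        ring
      have h8 : π (n + 1) * ((a (n + 1) - α) * (q * (((n : ℝ) + 2 - m) * (1 - q)⁻¹ + q / (1 - q) ^ 2)))
          ≤ π (n + 1) * (α * (((n : ℝ) + 1) - m)) :=
        mul_le_mul_of_nonneg_left h5 (hπpos (n + 1)).le
      calc (a (n + 1) - α) * S (n + 1)
          ≤ π (n + 1) * ((a (n + 1) - α) * (q * (((n : ℝ) + 2 - m) * (1 - q)⁻¹ + q / (1 - q) ^ 2))) := by
            rw [← h7]; exact h6
        _ ≤ π (n + 1) * (α * (((n : ℝ) + 1) - m)) := h8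
        _ = α * (((n : ℝ) + 1) - m) * π (n + 1) := by ring
    have hb := hbal n
    have e1 := hS_succ n
    calc (a (n + 1) - α) * S n
        = (a (n + 1) - α) * S (n + 1) + ((n : ℝ) + 1 - m) * (a (n + 1) * π (n + 1))
          - α * ((((n : ℝ) + 1) - m) * π (n + 1)) := by rw [e1]; ring
      _ ≤ α * (((n : ℝ) + 1) - m) * π (n + 1) + ((n : ℝ) + 1 - m) * (a (n + 1) * π (n + 1))
          - α * ((((n : ℝ) + 1) - m) * π (n + 1)) := by linarith [hM']
      _ = ((n : ℝ) + 1 - m) * (a (n + 1) * π (n + 1)) := by ring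
      _ = ((n : ℝ) + 1 - m) * (α * π n) := by rw [← hb]
      _ = α * (((n : ℝ) + 1) - m) * π n := by ring
  -- the main inequality M(n) for all n
  have hM : ∀ n : ℕ, (a (n + 1) - α) * S n ≤ α * (((n : ℝ) + 1) - m) * π n := by
    have hdown : ∀ d : ℕ, ∀ k : ℕ, α < a (k + 1) →
        (a (k + d + 1) - α) * S (k + d) ≤ α * ((((k + d : ℕ) : ℝ) + 1) - m) * π (k + d) →
        (a (k + 1) - α) * S k ≤ α * (((k : ℝ) + 1) - m) * π k := by
      intro d
      induction d with
      | zero => intro k hk h; simpa using h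
      | succ d ih =>
        intro k hk h
        have hk1 : α < a (k + 1 + 1) := lt_of_lt_of_le hk (ha_le (k + 1) (k + 1 + 1) (by omega))
        have hidx : k + (d + 1) = (k + 1) + d := by omega
        have h' : (a ((k + 1) + d + 1) - α) * S ((k + 1) + d)
            ≤ α * (((((k + 1) + d : ℕ) : ℝ) + 1) - m) * π ((k + 1) + d) := by
          rw [← hidx] at *
          convert h using 3 <;> push_cast <;> ring
        have hM1 := ih (k + 1) hk1 h'
        apply hstep k hk
        have hc : ((k : ℝ) + 1) + 1 = (k : ℝ) + 2 := by ring
        calc (a (k + 2) - α) * S (k + 1) = (a (k + 1 + 1) - α) * S (k + 1) := by norm_num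
          _ ≤ α * ((((k + 1 : ℕ) : ℝ)) + 1 - m) * π (k + 1) := by
              convert hM1 using 3
          _ = α * (((k : ℝ) + 2) - m) * π (k + 1) := by push_cast; ring
    intro n
    rcases lt_or_ge ((n : ℝ) + 1) m with h | h
    · have := hup n h
      linarith
    · rcases le_or_gt (a (n + 1)) α with h2 | h2
      · have hl : (a (n + 1) - α) * S n ≤ 0 :=
          mul_nonpos_of_nonpos_of_nonneg (by linarith) (hSpos n).le
        have hr : 0 ≤ α * (((n : ℝ) + 1) - m) * π n := by
          apply mul_nonneg (mul_nonneg hα.le (by linarith)) (hπpos n).le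
        linarith
      · obtain ⟨N₀, hN₀⟩ := exists_nat_ge (m + α + 2 * α / β + 4)
        have hbig : m + α + 2 * α / β + 4 ≤ ((n + N₀ : ℕ) : ℝ) := by
          push_cast
          have : (0 : ℝ) ≤ (n : ℝ) := Nat.cast_nonneg n
          linarith
        exact hdown N₀ n h2 (hbase (n + N₀) hbig)
  -- final assembly
  intro i hi
  obtain ⟨n, rfl⟩ : ∃ n, i = n + 1 := ⟨i - 1, by omega⟩
  constructor
  · -- positivity
    have h := hrep n
    have hS := hSpos n
    have hpos : 0 < α * π n := mul_pos hα (hπpos n)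
    by_contra hc
    push_neg at hc
    have : α * π n * g₁ (n + 1) ≤ 0 := mul_nonpos_of_nonneg_of_nonpos hpos.le hc
    linarith
  · -- monotonicity
    have hMn := hM n
    have hst := hstein (n + 1)
    have hr := hrep n
    have h2 : α * (π n * (α * g₁ (n + 1 + 1)))
        = a (n + 1) * (α * π n * g₁ (n + 1)) + (m - ((n : ℝ) + 1)) * (α * π n) := by
      rw [hst]; push_cast; ring
    rw [hr] at h2
    have h5 : α * (α * π n * g₁ (n + 1)) = α * S n := by rw [hr]
    have h4 : α * (α * π n * g₁ (n + 1 + 1)) ≤ α * (α * π n * g₁ (n + 1)) := by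
      nlinarith [hMn, h2, h5]
    have h6 : α * π n * g₁ (n + 1 + 1) ≤ α * π n * g₁ (n + 1) :=
      le_of_mul_le_mul_left h4 hα
    exact le_of_mul_le_mul_left h6 (mul_pos hα (hπpos n))
end

section
/- The sequence e_i^+ := F(i)/(α π_i) is convex: for every i ≥ 0, e_{i+2}^+ − 2e_{i+1}^+ + e_i^+ ≥ 0; equivalently, F(i+2)/(α π_{i+2}) − 2F(i+1)/(α π_{i+1}) + F(i)/(α π_i) ≥ 0. -/
/-- convexity of `e_i^+ = F(i)/(α π_i)` where `F` is the distribution function of PBD(α;0,β,1). -/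
theorem stmt_11
    (α β : ℝ) (hα : 0 < α) (hβ : 0 < β)
    (C : ℝ) (hC : 0 < C) (π : ℕ → ℝ)
    (hπ : ∀ n : ℕ, π n =
      C * α ^ n / ∏ i ∈ Finset.range n, (β * ((i : ℝ) + 1) + ((i : ℝ) + 1) * (i : ℝ)))
    (hπ1 : ∑' n, π n = 1)
    (F : ℕ → ℝ) (hF : ∀ i : ℕ, F i = ∑ j ∈ Finset.range (i + 1), π j)
    :
    ∀ i : ℕ,
      0 ≤ F (i + 2) / (α * π (i + 2)) - 2 * (F (i + 1) / (α * π (i + 1))) + F i / (α * π i) := by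
  have hαne := hα.ne'
  obtain ⟨c, hc_def⟩ : ∃ c : ℕ → ℝ, c = fun n : ℕ => β * ((n : ℝ) + 1) + ((n : ℝ) + 1) * (n : ℝ) :=
    ⟨_, rfl⟩
  have hcpos : ∀ n : ℕ, 0 < c n := by
    intro n
    have h1 : (0:ℝ) ≤ (n:ℝ) := Nat.cast_nonneg n
    simp only [hc_def]
    nlinarith
  have hcmono : ∀ n : ℕ, c n + (β + 2 * (n:ℝ) + 2) = c (n+1) := by
    intro n
    simp only [hc_def]
    push_cast
    ring
  have hcle : ∀ n : ℕ, c n ≤ c (n+1) := by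
    intro n
    have h1 : (0:ℝ) ≤ (n:ℝ) := Nat.cast_nonneg n
    linarith [hcmono n]
  have hprodpos : ∀ n : ℕ,
      0 < ∏ i ∈ Finset.range n, (β * ((i : ℝ) + 1) + ((i : ℝ) + 1) * (i : ℝ)) := by
    intro n
    apply Finset.prod_pos
    intro i _
    have h1 : (0:ℝ) ≤ (i:ℝ) := Nat.cast_nonneg i
    nlinarith
  have hπpos : ∀ n, 0 < π n := by
    intro n
    rw [hπ n]
    exact div_pos (by positivity) (hprodpos n)
  have hrec : ∀ n, c n * π (n+1) = α * π n := by
    intro n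
    rw [hπ n, hπ (n+1), Finset.prod_range_succ]
    have h1 := (hprodpos n).ne'
    have h2 := (hcpos n).ne'
    simp only [hc_def] at h2 ⊢
    field_simp
    ring
  have hFrec : ∀ n, F (n+1) = F n + π (n+1) := by
    intro n
    rw [hF, hF, Finset.sum_range_succ]
  obtain ⟨s, hs_def⟩ : ∃ s : ℕ → ℝ, s = fun n => F n / π n := ⟨_, rfl⟩
  have hs1 : ∀ n, 1 ≤ s n := by
    intro n
    have h1 : π n ≤ F n := by
      rw [hF n, Finset.sum_range_succ]
      have h2 : 0 ≤ ∑ j ∈ Finset.range n, π j :=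
        Finset.sum_nonneg fun j _ => (hπpos j).le
      linarith
    simp only [hs_def]
    rw [le_div_iff₀ (hπpos n)]
    linarith
  have hs0 : s 0 = 1 := by
    simp only [hs_def]
    rw [hF 0, Finset.sum_range_one]
    exact div_self (hπpos 0).ne'
  have hsrec : ∀ n, s (n+1) = 1 + (c n / α) * s n := by
    intro n
    simp only [hs_def, hc_def]
    rw [hFrec n]
    have h1 := (hπpos n).ne'
    have h2 := (hπpos (n+1)).ne'
    have hr := hrec n
    simp only [hc_def] at hr
    field_simp
    linear_combination (-F n) * hr
  obtain ⟨u, hu_def⟩ : ∃ u : ℕ → ℝ, u = fun n => (c n - α) * s n + α := ⟨_, rfl⟩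
  have hu0 : u 0 = c 0 := by
    simp only [hu_def]
    rw [hs0]; ring
  have hurec : ∀ n, u (n+1) = (c (n+1) - c n) * s (n+1) + (c n / α) * u n := by
    intro n
    simp only [hu_def]
    rw [hsrec n]
    field_simp
    ring
  have hupos : ∀ n, 0 ≤ u n := by
    intro n
    induction n with
    | zero => rw [hu0]; exact (hcpos 0).le
    | succ n ih =>
      rw [hurec n]
      have h1 : 0 < c (n+1) - c n := by
        have := Nat.cast_nonneg (α := ℝ) n
        linarith [hcmono n]
      have h2 : 0 ≤ (c n / α) * u n :=
        mul_nonneg (div_nonneg (hcpos n).le hα.le) ih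
      have h3 : 0 ≤ (c (n+1) - c n) * s (n+1) :=
        mul_nonneg h1.le (le_trans zero_le_one (hs1 (n+1)))
      linarith
  have hdiff : ∀ n, u n = α * (s (n+1) - s n) := by
    intro n
    simp only [hu_def]
    rw [hsrec n]
    field_simp
    ring
  have hsmono : ∀ n, s n ≤ s (n+1) := by
    intro n
    have h1 := hdiff n
    have h2 := hupos n
    nlinarith
  have humono : ∀ n, u n ≤ u (n+1) := by
    intro n
    induction n with
    | zero =>
      show u 0 ≤ u 1
      have key : u 1 - u 0 = 2 + (2*β^2 + 2*β)/α := by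
        rw [hurec 0, hsrec 0, hs0, hu0]
        have hc0 : c 0 = β := by simp [hc_def]
        have hc1 : c 1 = 2*β + 2 := by simp [hc_def]; ring
        rw [hc0, hc1]
        field_simp
        ring
      have hpos : 0 < 2 + (2*β^2 + 2*β)/α := by positivity
      linarith
    | succ n ih =>
      rw [hurec n, hurec (n+1)]
      have h1 : (c (n+1) - c n) * s (n+1) ≤ (c (n+1+1) - c (n+1)) * s (n+1+1) := by
        have d1 := hcmono n
        have d2 := hcmono (n+1)
        have hn : (0:ℝ) ≤ (n:ℝ) := Nat.cast_nonneg n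
        push_cast at d2
        exact mul_le_mul (by linarith) (hsmono (n+1))
          (le_trans zero_le_one (hs1 (n+1))) (by linarith)
      have h2 : (c n / α) * u n ≤ (c (n+1) / α) * u (n+1) := by
        apply mul_le_mul
        · exact (div_le_div_iff_of_pos_right hα).mpr (hcle n)
        · exact ih
        · exact hupos n
        · exact div_nonneg (hcpos (n+1)).le hα.le
      linarith
  intro i
  have hFs : ∀ k, F k / (α * π k) = s k / α := by
    intro k
    simp only [hs_def]
    rw [div_div, mul_comm]
  rw [hFs (i+2), hFs (i+1), hFs i]
  have h := humono i
  rw [hdiff i, hdiff (i+1)] at h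
  have h2 : s (i+1) - s i ≤ s (i+1+1) - s (i+1) := le_of_mul_le_mul_left h hα
  have h3 : s (i+2) / α - 2 * (s (i+1) / α) + s i / α
      = (s (i+2) - 2 * s (i+1) + s i) / α := by ring
  rw [h3]
  apply div_nonneg _ hα.le
  have heq : i + 1 + 1 = i + 2 := by omega
  rw [heq] at h2
  linarith
end

section
/- The sequence e_i^- := F̄(i)/(α π_{i−1}) is convex on i ≥ 1: for every i ≥ 1, e_{i+2}^- − 2e_{i+1}^- + e_i^- ≥ 0; equivalently, F̄(i+2)/(α π_{i+1}) − 2F̄(i+1)/(α π_i) + F̄(i)/(α π_{i−1}) ≥ 0. -/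
/-- convexity on `i ≥ 1` of `e_i^- = F̄(i)/(α π_{i-1})` where `F̄` is the upper tail of PBD(α;0,β,1). -/
theorem stmt_12
    (α β : ℝ) (hα : 0 < α) (hβ : 0 < β)
    (C : ℝ) (hC : 0 < C) (π : ℕ → ℝ)
    (hπ : ∀ n : ℕ, π n =
      C * α ^ n / ∏ i ∈ Finset.range n, (β * ((i : ℝ) + 1) + ((i : ℝ) + 1) * (i : ℝ)))
    (hπ1 : ∑' n, π n = 1)
    (Fbar : ℕ → ℝ) (hFbar : ∀ i : ℕ, Fbar i = ∑' j : ℕ, if i ≤ j then π j else 0)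
    :
    ∀ i : ℕ, 1 ≤ i →
      0 ≤ Fbar (i + 2) / (α * π (i + 1)) - 2 * (Fbar (i + 1) / (α * π i))
        + Fbar i / (α * π (i - 1)) := by
  -- positivity of π and the basic recurrence
  have hP : ∀ n : ℕ, 0 < ∏ i ∈ Finset.range n, (β * ((i : ℝ) + 1) + ((i : ℝ) + 1) * (i : ℝ)) := by
    intro n
    apply Finset.prod_pos
    intro k _
    have : (0:ℝ) ≤ (k:ℝ) := Nat.cast_nonneg k
    nlinarith
  have hpos : ∀ n, 0 < π n := by
    intro n
    rw [hπ n]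
    have := hP n
    positivity
  have hrec : ∀ n : ℕ, π (n+1) * (β * ((n:ℝ)+1) + ((n:ℝ)+1) * (n:ℝ)) = α * π n := by
    intro n
    have h1 := hπ (n+1)
    rw [Finset.prod_range_succ] at h1
    rw [h1, hπ n]
    have h2 : (0:ℝ) < β * ((n:ℝ)+1) + ((n:ℝ)+1) * (n:ℝ) := by
      have : (0:ℝ) ≤ (n:ℝ) := Nat.cast_nonneg n
      nlinarith
    have := hP n
    field_simp
    ring
  -- log-concavity step (cube inequality)
  have hK : ∀ n : ℕ, π n * (π (n+2))^3 ≤ (π (n+1))^3 * π (n+3) := by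
    intro n
    set x : ℝ := (n : ℝ) with hx
    have hx0 : (0:ℝ) ≤ x := Nat.cast_nonneg n
    set c1 : ℝ := β * (x+1) + (x+1) * x with hc1
    set c2 : ℝ := β * (x+2) + (x+2) * (x+1) with hc2
    set c3 : ℝ := β * (x+3) + (x+3) * (x+2) with hc3
    have hc2p : 0 < c2 := by rw [hc2]; nlinarith
    have hc3p : 0 < c3 := by rw [hc3]; nlinarith
    have key : c1 * c3 ≤ c2 ^ 2 := by rw [hc1, hc2, hc3]; nlinarith
    have h1 : π (n+1) * c1 = α * π n := hrec n
    have h2 : π (n+2) * c2 = α * π (n+1) := by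
      have := hrec (n+1); push_cast at this; rw [hc2]; convert this using 2 <;> push_cast <;> ring
    have h3 : π (n+3) * c3 = α * π (n+2) := by
      have := hrec (n+2); push_cast at this; rw [hc3]; convert this using 2 <;> push_cast <;> ring
    have hfac : 0 < α * c2^3 * c3 := by positivity
    rw [← mul_le_mul_iff_right₀ hfac]
    have e1 : (α * c2^3 * c3) * (π n * (π (n+2))^3) = (α * π n) * (c2 * π (n+2))^3 * c3 := by ring
    have e2 : (α * c2^3 * c3) * ((π (n+1))^3 * π (n+3))
        = α * (π (n+1))^3 * c2^3 * (c3 * π (n+3)) := by ring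
    rw [e1, e2, ← h1, mul_comm c2 (π (n+2)), h2, mul_comm c3 (π (n+3)), h3]
    have e3 : π (n+1) * c1 * (α * π (n+1)) ^ 3 * c3 = α^3 * (π (n+1))^4 * (c1 * c3) := by ring
    rw [e3]
    have e4 : α * π (n+1) ^ 3 * c2 ^ 3 * (α * π (n+2))
        = α^2 * (π (n+1))^3 * c2^2 * (π (n+2) * c2) := by ring
    rw [e4, h2]
    have e5 : α ^ 2 * π (n + 1) ^ 3 * c2 ^ 2 * (α * π (n + 1)) = α^3 * (π (n+1))^4 * c2^2 := by
      ring
    rw [e5]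
    have hppos : (0:ℝ) < α^3 * (π (n+1))^4 := by have := hpos (n+1); positivity
    exact mul_le_mul_of_nonneg_left key hppos.le
  -- log-convexity of the shifted ratios, by induction
  have hL : ∀ (m j : ℕ),
      (π (j+m+2))^2 * (π j * π (j+2)) ≤ π (j+m+1) * π (j+m+3) * (π (j+1))^2 := by
    intro m
    induction m with
    | zero =>
      intro j
      have := hK j
      have h2 := hpos (j+2)
      nlinarith [hpos j, hpos (j+1), hpos (j+3)]
    | succ m ih =>
      intro j
      have IH := ih j
      have K := hK (j+m+1)
      set a := π (j+m+1)
      set b := π (j+m+2)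
      have hb : 0 < b := hpos _
      have e1 : j + (m+1) + 2 = j + m + 3 := by omega
      have e2 : j + (m+1) + 1 = j + m + 2 := by omega
      have e3 : j + (m+1) + 3 = j + m + 4 := by omega
      rw [e1, e2, e3]
      set c := π (j+m+3)
      have hc : 0 < c := hpos _
      set d := π (j+m+4)
      have hK' : a * c^3 ≤ b^3 * d := K
      set p := (π (j+1))^2
      set q := π j * π (j+2)
      have hp : 0 < p := by have := hpos (j+1); positivity
      have step : b^2 * (c^2 * q) ≤ b^2 * (b * d * p) := by
        nlinarith [mul_le_mul_of_nonneg_left IH (sq_nonneg c),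
          mul_le_mul_of_nonneg_right hK' hp.le]
      exact le_of_mul_le_mul_left step (by positivity)
  -- termwise convexity
  have hterm : ∀ (m j : ℕ),
      0 ≤ π (m+(j+3))/(α*π (j+2)) - 2*(π (m+(j+2))/(α*π (j+1))) + π (m+(j+1))/(α*π j) := by
    intro m j
    have e1 : m+(j+3) = j+m+3 := by omega
    have e2 : m+(j+2) = j+m+2 := by omega
    have e3 : m+(j+1) = j+m+1 := by omega
    rw [e1, e2, e3]
    set A := π (j+m+1)/(α*π j) with hA
    set M := π (j+m+2)/(α*π (j+1)) with hM
    set B := π (j+m+3)/(α*π (j+2)) with hB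
    have hAp : 0 < A := by rw [hA]; have := hpos (j+m+1); have := hpos j; positivity
    have hMp : 0 < M := by rw [hM]; have := hpos (j+m+2); have := hpos (j+1); positivity
    have hBp : 0 < B := by rw [hB]; have := hpos (j+m+3); have := hpos (j+2); positivity
    have hAB : M^2 ≤ A * B := by
      rw [hA, hB, hM, div_pow, div_mul_div_comm,
        div_le_div_iff₀ (by have := hpos (j+1); positivity)
          (by have := hpos j; have := hpos (j+2); positivity)]
      nlinarith [sq_nonneg α, mul_le_mul_of_nonneg_left (hL m j) (sq_nonneg α)]
    nlinarith [sq_nonneg (A - B)]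
  -- summability and tail representation
  have hsum : Summable π := by
    by_contra h
    rw [tsum_eq_zero_of_not_summable h] at hπ1
    norm_num at hπ1
  have hFs : ∀ i : ℕ, Fbar i = ∑' m, π (m + i) := by
    intro i
    rw [hFbar i]
    have hgsum : Summable (fun j => if i ≤ j then π j else 0) := by
      apply Summable.of_nonneg_of_le (fun n => ?_) (fun n => ?_) hsum
      · split <;> [exact (hpos n).le; rfl]
      · split <;> [exact le_rfl; exact (hpos n).le]
    rw [← Summable.sum_add_tsum_nat_add i hgsum]
    have h0 : ∑ k ∈ Finset.range i, (if i ≤ k then π k else 0) = 0 := by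
      apply Finset.sum_eq_zero
      intro k hk
      rw [if_neg (by simpa using Finset.mem_range.mp hk |>.not_ge)]
    rw [h0, zero_add]
    congr 1
    funext m
    rw [if_pos (Nat.le_add_left i m)]
  have S : ∀ t : ℕ, Summable (fun m => π (m + t)) := fun t => (summable_nat_add_iff t).mpr hsum
  -- final assembly
  intro i hi
  obtain ⟨j, rfl⟩ : ∃ j, i = j + 1 := ⟨i - 1, by omega⟩
  have hi1 : j + 1 - 1 = j := rfl
  have hi2 : j + 1 + 2 = j + 3 := by omega
  have hi3 : j + 1 + 1 = j + 2 := by omega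
  rw [hi1, hi2, hi3]
  have S3 := (S (j+3)).div_const (α * π (j+2))
  have S2 := (S (j+2)).div_const (α * π (j+1))
  have S1 := (S (j+1)).div_const (α * π j)
  have key : Fbar (j + 3) / (α * π (j + 2)) - 2 * (Fbar (j + 2) / (α * π (j + 1)))
        + Fbar (j + 1) / (α * π j)
      = ∑' m, (π (m+(j+3))/(α*π (j+2)) - 2*(π (m+(j+2))/(α*π (j+1))) + π (m+(j+1))/(α*π j)) := by
    rw [hFs (j+3), hFs (j+2), hFs (j+1), ← tsum_div_const, ← tsum_div_const, ← tsum_div_const,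
      ← tsum_mul_left, ← Summable.tsum_sub S3 (S2.mul_left 2), ← Summable.tsum_add (S3.sub (S2.mul_left 2)) S1]
  rw [key]
  exact tsum_nonneg (fun m => hterm m j)
end

section
/- The second difference of the Stein solution for f₁ at 1 satisfies Δ²g_{f₁}(1) ≤ 2/(αβ + 2(α + β + β²)). -/
set_option maxHeartbeats 2000000 in
/-- bound on the second difference at 1 of the Stein solution for `f₁`. -/
theorem stmt_13
    (α β : ℝ) (hα : 0 < α) (hβ : 0 < β)
    (C : ℝ) (hC : 0 < C) (π : ℕ → ℝ)
    (hπ : ∀ n : ℕ, π n =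
      C * α ^ n / ∏ i ∈ Finset.range n, (β * ((i : ℝ) + 1) + ((i : ℝ) + 1) * (i : ℝ)))
    (hπ1 : ∑' n, π n = 1)
    (g₁ : ℕ → ℝ) (hg₁0 : g₁ 0 = g₁ 1)
    (hg₁ : ∀ n : ℕ, α * g₁ (n + 1) - (β * (n : ℝ) + (n : ℝ) * ((n : ℝ) - 1)) * g₁ n
      = -(n : ℝ) - ∑' k : ℕ, -(k : ℝ) * π k)
    :
    g₁ 3 - 2 * g₁ 2 + g₁ 1 ≤ 2 / (α * β + 2 * (α + β + β ^ 2)) := by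
  have hβn : ∀ n : ℕ, (0:ℝ) < β + n := fun n => by positivity
  have hβn1 : ∀ n : ℕ, (0:ℝ) < β + n + 1 := fun n => by positivity
  have hβn2 : ∀ n : ℕ, (0:ℝ) < β + n + 2 := fun n => by positivity
  have hprod : ∀ n : ℕ, (0:ℝ) <
      ∏ i ∈ Finset.range n, (β * ((i : ℝ) + 1) + ((i : ℝ) + 1) * (i : ℝ)) := by
    intro n
    apply Finset.prod_pos
    intro i _
    have : (0:ℝ) ≤ (i:ℝ) := Nat.cast_nonneg i
    nlinarith
  have hπpos : ∀ n : ℕ, 0 < π n := by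
    intro n
    rw [hπ n]
    have := hprod n
    positivity
  have hrec : ∀ n : ℕ, ((n:ℝ) + 1) * (β + n) * π (n+1) = α * π n := by
    intro n
    rw [hπ n, hπ (n+1), Finset.prod_range_succ]
    have h1 := (hprod n).ne'
    have h2 : β * ((n:ℝ) + 1) + ((n:ℝ) + 1) * (n:ℝ) ≠ 0 := by
      have : (0:ℝ) ≤ (n:ℝ) := Nat.cast_nonneg n
      nlinarith
    field_simp
    ring
  -- summability
  have hsumπ : Summable π := by
    by_contra h
    rw [tsum_eq_zero_of_not_summable h] at hπ1
    norm_num at hπ1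
  have hsumx : Summable (fun n : ℕ => π n / (β + n)) := by
    refine Summable.of_nonneg_of_le
      (fun n => (div_pos (hπpos n) (hβn n)).le) (fun n => ?_) (hsumπ.div_const β)
    have hn : (0:ℝ) ≤ (n:ℝ) := Nat.cast_nonneg n
    gcongr
    · exact (hπpos n).le
    · linarith
  have hsumy : Summable (fun n : ℕ => π n / (β + n + 1)) := by
    refine Summable.of_nonneg_of_le
      (fun n => (div_pos (hπpos n) (hβn1 n)).le) (fun n => ?_) (hsumπ.div_const β)
    have hn : (0:ℝ) ≤ (n:ℝ) := Nat.cast_nonneg n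
    gcongr
    · exact (hπpos n).le
    · linarith
  have hsumP : Summable (fun n : ℕ => π n / ((β + n) * (β + n + 1))) := by
    refine Summable.of_nonneg_of_le
      (fun n => (div_pos (hπpos n) (mul_pos (hβn n) (hβn1 n))).le) (fun n => ?_)
      (hsumπ.div_const (β * β))
    have hn : (0:ℝ) ≤ (n:ℝ) := Nat.cast_nonneg n
    have h1 : β * β ≤ (β + n) * (β + n + 1) := by nlinarith
    exact div_le_div_of_nonneg_left (hπpos n).le (mul_pos hβ hβ) h1
  have hsumP2 : Summable (fun n : ℕ =>
      π n / ((β + n) * (β + n + 1) * (β + n + 2))) := by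
    refine Summable.of_nonneg_of_le
      (fun n => (div_pos (hπpos n)
        (mul_pos (mul_pos (hβn n) (hβn1 n)) (hβn2 n))).le) (fun n => ?_)
      (hsumπ.div_const (β * β * β))
    have hn : (0:ℝ) ≤ (n:ℝ) := Nat.cast_nonneg n
    have h1 : β * β * β ≤ (β + n) * (β + n + 1) * (β + n + 2) := by
      have e2 : β * β ≤ (β + n) * (β + n + 1) := by nlinarith
      have e3 : β ≤ β + n + 2 := by linarith
      exact mul_le_mul e2 e3 hβ.le (mul_pos (hβn n) (hβn1 n)).le
    exact div_le_div_of_nonneg_left (hπpos n).le (by positivity) h1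
  have hsumQ : Summable (fun n : ℕ => π n / ((β + n + 1) * (β + n + 2))) := by
    refine Summable.of_nonneg_of_le
      (fun n => (div_pos (hπpos n) (mul_pos (hβn1 n) (hβn2 n))).le) (fun n => ?_)
      (hsumπ.div_const (β * β))
    have hn : (0:ℝ) ≤ (n:ℝ) := Nat.cast_nonneg n
    have h1 : β * β ≤ (β + n + 1) * (β + n + 2) := by nlinarith
    exact div_le_div_of_nonneg_left (hπpos n).le (mul_pos hβ hβ) h1
  have hrecd : ∀ n : ℕ, ((n:ℝ) + 1) * π (n+1) = α * (π n / (β + n)) := by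
    intro n
    rw [mul_div_assoc', eq_div_iff (hβn n).ne']
    linear_combination hrec n
  have hsumμ : Summable (fun n : ℕ => (n:ℝ) * π n) := by
    rw [← summable_nat_add_iff 1]
    have : (fun n : ℕ => ((n + 1 : ℕ):ℝ) * π (n + 1))
        = fun n : ℕ => α * (π n / (β + n)) := by
      funext n
      push_cast
      exact hrecd n
    exact this ▸ hsumx.mul_left α
  -- Identity A : μ = α x
  have hμx : (∑' n : ℕ, (n:ℝ) * π n) = α * ∑' n : ℕ, π n / (β + n) := by
    rw [Summable.tsum_eq_zero_add hsumμ]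
    simp only [Nat.cast_zero, zero_mul, zero_add, Nat.cast_add, Nat.cast_one]
    rw [← tsum_mul_left]
    exact tsum_congr fun n => hrecd n
  -- Identity B
  have hkey1 : ∀ m : ℕ, (m:ℝ) * (β + m - 1) * π m / (β + m)
      = ((m:ℝ) - 1) * π m + β * (π m / (β + m)) := by
    intro m
    have h := (hβn m).ne'
    field_simp
    ring
  have hsumsub : Summable (fun m : ℕ => ((m:ℝ) - 1) * π m) := by
    have h2 := hsumμ.sub hsumπ
    simpa [sub_mul] using h2
  have hsumh : Summable (fun m : ℕ => (m:ℝ) * (β + m - 1) * π m / (β + m)) := by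
    have he : (fun m : ℕ => (m:ℝ) * (β + m - 1) * π m / (β + m))
        = fun m : ℕ => ((m:ℝ) - 1) * π m + β * (π m / (β + m)) := funext hkey1
    rw [he]
    exact hsumsub.add (hsumx.mul_left β)
  have hsumh_eq : (∑' m : ℕ, (m:ℝ) * (β + m - 1) * π m / (β + m))
      = ((∑' n : ℕ, (n:ℝ) * π n) - 1) + β * ∑' n : ℕ, π n / (β + n) := by
    rw [tsum_congr hkey1, Summable.tsum_add hsumsub (hsumx.mul_left β), tsum_mul_left]
    congr 1
    have he : (fun m : ℕ => ((m:ℝ) - 1) * π m) = fun m : ℕ => (m:ℝ) * π m - π m := by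
      funext m; ring
    rw [he, Summable.tsum_sub hsumμ hsumπ, hπ1]
  have hαy : α * (∑' n : ℕ, π n / (β + n + 1))
      = ((∑' n : ℕ, (n:ℝ) * π n) - 1) + β * ∑' n : ℕ, π n / (β + n) := by
    have h0 : ((0:ℕ):ℝ) * (β + (0:ℕ) - 1) * π 0 / (β + (0:ℕ)) = 0 := by norm_num
    have hs := Summable.tsum_eq_zero_add hsumh
    rw [h0, zero_add] at hs
    rw [← hsumh_eq, hs, ← tsum_mul_left]
    refine tsum_congr fun n => ?_
    show α * (π n / (β + ↑n + 1))
      = ((n+1:ℕ):ℝ) * (β + ((n+1:ℕ):ℝ) - 1) * π (n+1) / (β + ((n+1:ℕ):ℝ))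
    have h1 := (hβn n).ne'
    have h2 := (hβn1 n).ne'
    have h3 := hrec n
    push_cast
    field_simp
    linear_combination (-(β + (n:ℝ) + 1)) * h3
  -- x = y + P
  have hxyP : (∑' n : ℕ, π n / (β + n))
      = (∑' n : ℕ, π n / (β + n + 1)) + ∑' n : ℕ, π n / ((β + n) * (β + n + 1)) := by
    rw [← Summable.tsum_add hsumy hsumP]
    refine tsum_congr fun n => ?_
    have h1 := (hβn n).ne'
    have h2 := (hβn1 n).ne'
    field_simp
  -- Identity C (level 1)
  have hkey2 : ∀ m : ℕ, (m:ℝ) * (β + m - 1) * π m / ((β + m) * (β + m + 1))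
      = π m - (β + 2) * (π m / (β + m + 1)) + β * (π m / ((β + m) * (β + m + 1))) := by
    intro m
    have h1 := (hβn m).ne'
    have h2 := (hβn1 m).ne'
    field_simp
    ring
  have hsumh2 : Summable (fun m : ℕ => (m:ℝ) * (β + m - 1) * π m / ((β + m) * (β + m + 1))) := by
    have he : (fun m : ℕ => (m:ℝ) * (β + m - 1) * π m / ((β + m) * (β + m + 1)))
        = fun m : ℕ => π m - (β + 2) * (π m / (β + m + 1)) + β * (π m / ((β + m) * (β + m + 1))) :=
      funext hkey2
    rw [he]
    exact (hsumπ.sub (hsumy.mul_left (β + 2))).add (hsumP.mul_left β)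
  have hsumh2_eq : (∑' m : ℕ, (m:ℝ) * (β + m - 1) * π m / ((β + m) * (β + m + 1)))
      = 1 - (β + 2) * (∑' n : ℕ, π n / (β + n + 1))
        + β * ∑' n : ℕ, π n / ((β + n) * (β + n + 1)) := by
    rw [tsum_congr hkey2,
      Summable.tsum_add (hsumπ.sub (hsumy.mul_left (β + 2))) (hsumP.mul_left β),
      Summable.tsum_sub hsumπ (hsumy.mul_left (β + 2)), tsum_mul_left, tsum_mul_left, hπ1]
  have hαQ : α * (∑' n : ℕ, π n / ((β + n + 1) * (β + n + 2)))
      = 1 - (β + 2) * (∑' n : ℕ, π n / (β + n + 1))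
        + β * ∑' n : ℕ, π n / ((β + n) * (β + n + 1)) := by
    have h0 : ((0:ℕ):ℝ) * (β + (0:ℕ) - 1) * π 0 / ((β + (0:ℕ)) * (β + (0:ℕ) + 1)) = 0 := by
      norm_num
    have hs := Summable.tsum_eq_zero_add hsumh2
    rw [h0, zero_add] at hs
    rw [← hsumh2_eq, hs, ← tsum_mul_left]
    refine tsum_congr fun n => ?_
    show α * (π n / ((β + ↑n + 1) * (β + ↑n + 2)))
      = ((n+1:ℕ):ℝ) * (β + ((n+1:ℕ):ℝ) - 1) * π (n+1)
        / ((β + ((n+1:ℕ):ℝ)) * (β + ((n+1:ℕ):ℝ) + 1))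
    have h1 := (hβn1 n).ne'
    have h2 := (hβn2 n).ne'
    have h3 := hrec n
    push_cast
    field_simp
    linear_combination (-(β + (n:ℝ) + 1) * (β + (n:ℝ) + 2)) * h3
  -- Q = P - 2 P2
  have hQP2 : (∑' n : ℕ, π n / ((β + n + 1) * (β + n + 2)))
      = (∑' n : ℕ, π n / ((β + n) * (β + n + 1)))
        - 2 * ∑' n : ℕ, π n / ((β + n) * (β + n + 1) * (β + n + 2)) := by
    rw [← tsum_mul_left, ← Summable.tsum_sub hsumP (hsumP2.mul_left 2)]
    refine tsum_congr fun n => ?_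
    have h1 := (hβn n).ne'
    have h2 := (hβn1 n).ne'
    have h3 := (hβn2 n).ne'
    field_simp
    ring
  -- termwise bound : (β+2) * P2 ≤ P
  have hP2le : (β + 2) * (∑' n : ℕ, π n / ((β + n) * (β + n + 1) * (β + n + 2)))
      ≤ ∑' n : ℕ, π n / ((β + n) * (β + n + 1)) := by
    rw [← tsum_mul_left]
    refine Summable.tsum_le_tsum (fun n => ?_) (hsumP2.mul_left (β + 2)) hsumP
    have hA : 0 ≤ π n / ((β + ↑n) * (β + ↑n + 1)) :=
      (div_pos (hπpos n) (mul_pos (hβn n) (hβn1 n))).le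
    have hne1 := (hβn n).ne'
    have hne2 := (hβn1 n).ne'
    have hne3 := (hβn2 n).ne'
    have e : (β + 2) * (π n / ((β + ↑n) * (β + ↑n + 1) * (β + ↑n + 2)))
        = (π n / ((β + ↑n) * (β + ↑n + 1))) * ((β + 2) / (β + ↑n + 2)) := by
      field_simp
    rw [e]
    have h1 : (β + 2) / (β + ↑n + 2) ≤ 1 := by
      rw [div_le_one (hβn2 n)]
      have : (0:ℝ) ≤ (n:ℝ) := Nat.cast_nonneg n
      linarith
    calc (π n / ((β + ↑n) * (β + ↑n + 1))) * ((β + 2) / (β + ↑n + 2))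
        ≤ (π n / ((β + ↑n) * (β + ↑n + 1))) * 1 := mul_le_mul_of_nonneg_left h1 hA
      _ = π n / ((β + ↑n) * (β + ↑n + 1)) := mul_one _
  -- algebra on the sums
  have hαP : α * (∑' n : ℕ, π n / ((β + n) * (β + n + 1)))
      = 1 - β * ∑' n : ℕ, π n / (β + n) := by
    linear_combination (-α) * hxyP - hαy - hμx
  have hαR : α * (∑' n : ℕ, π n / ((β + n) * (β + n + 1) * (β + n + 2)))
      = (∑' n : ℕ, π n / (β + n)) - (β + 1) * ∑' n : ℕ, π n / ((β + n) * (β + n + 1)) := by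
    linear_combination (α/2) * hQP2 - (1/2) * hαQ - ((β+2)/2) * hxyP + (1/2) * hαP
  have hq := mul_le_mul_of_nonneg_left hP2le hα.le
  have e1 : α * ((β + 2) * ∑' n : ℕ, π n / ((β + n) * (β + n + 1) * (β + n + 2)))
      = (β + 2) * (∑' n : ℕ, π n / (β + n))
        - (β + 2) * (β + 1) * ∑' n : ℕ, π n / ((β + n) * (β + n + 1)) := by
    linear_combination (β + 2) * hαR
  have h6 : (β + 2) * (∑' n : ℕ, π n / (β + n))
      ≤ ((β + 1) * (β + 2) + α) * ∑' n : ℕ, π n / ((β + n) * (β + n + 1)) := by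
    linarith [hq, e1]
  have h7 := mul_le_mul_of_nonneg_left h6 hα.le
  have e2 : α * (((β + 1) * (β + 2) + α) * ∑' n : ℕ, π n / ((β + n) * (β + n + 1)))
      = ((β + 1) * (β + 2) + α) * (1 - β * ∑' n : ℕ, π n / (β + n)) := by
    linear_combination ((β + 1) * (β + 2) + α) * hαP
  have hxB : (∑' n : ℕ, π n / (β + n)) * (α * (β + 2) + β * ((β + 1) * (β + 2) + α))
      ≤ (β + 1) * (β + 2) + α := by
    linarith [h7, e2]
  have hcoef : (0:ℝ) < α * (β + 2) + β * ((β + 1) * (β + 2) + α) := by positivity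
  have hSD : (0:ℝ) ≤ (α + β + β^2) * (α * β + 2 * (α + β + β^2)) := by positivity
  have h8 := mul_le_mul_of_nonneg_left hxB hSD
  have h9 : ((α + β + β^2) * (α * β + 2 * (α + β + β^2))) * ((β + 1) * (β + 2) + α)
      ≤ ((β + 1) * (α * β + 2 * (α + β + β^2)) + α^2)
        * (α * (β + 2) + β * ((β + 1) * (β + 2) + α)) := by
    have e3 : ((β + 1) * (α * β + 2 * (α + β + β^2)) + α^2)
          * (α * (β + 2) + β * ((β + 1) * (β + 2) + α))
        - ((α + β + β^2) * (α * β + 2 * (α + β + β^2))) * ((β + 1) * (β + 2) + α)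
        = α^2 * β^3 + α^2 * β^2 + α^3 * β := by ring
    linarith [e3, mul_pos (mul_pos hα hα) (mul_pos hβ (mul_pos hβ hβ)),
      mul_pos (mul_pos hα hα) (mul_pos hβ hβ),
      mul_pos (mul_pos (mul_pos hα hα) hα) hβ]
  have hxu : (∑' n : ℕ, π n / (β + n)) * ((α + β + β^2) * (α * β + 2 * (α + β + β^2)))
      ≤ (β + 1) * (α * β + 2 * (α + β + β^2)) + α^2 := by
    have h10 : ((∑' n : ℕ, π n / (β + n)) * ((α + β + β^2) * (α * β + 2 * (α + β + β^2))))
          * (α * (β + 2) + β * ((β + 1) * (β + 2) + α))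
        ≤ ((β + 1) * (α * β + 2 * (α + β + β^2)) + α^2)
          * (α * (β + 2) + β * ((β + 1) * (β + 2) + α)) := by
      linarith [h8, h9]
    exact le_of_mul_le_mul_right h10 hcoef
  -- the Stein solution values
  have hneg : (∑' k : ℕ, -(k:ℝ) * π k) = -(∑' n : ℕ, (n:ℝ) * π n) := by
    have he : (fun k : ℕ => -(k:ℝ) * π k) = fun k : ℕ => -((k:ℝ) * π k) := by
      funext k; ring
    rw [he, tsum_neg]
  have e0 := hg₁ 0
  have ee1 := hg₁ 1
  have ee2 := hg₁ 2
  rw [hneg] at e0 ee1 ee2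
  norm_num at e0 ee1 ee2
  have key : α^3 * (g₁ 3 - 2 * g₁ 2 + g₁ 1)
      = 2 * (∑' n : ℕ, (n:ℝ) * π n) * (α + β + β^2) - 2 * α * (β + 1) := by
    linear_combination (α^2) * ee2 + ((2*β + 2 - 2*α) * α) * ee1
      + (α^2 + (2*β + 2 - 2*α) * β) * e0
  have hD : (0:ℝ) < α * β + 2 * (α + β + β^2) := by positivity
  rw [le_div_iff₀ hD]
  have keyD : α^3 * ((g₁ 3 - 2 * g₁ 2 + g₁ 1) * (α * β + 2 * (α + β + β^2)))
      = (2 * (∑' n : ℕ, (n:ℝ) * π n) * (α + β + β^2) - 2 * α * (β + 1))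
        * (α * β + 2 * (α + β + β^2)) := by
    linear_combination (α * β + 2 * (α + β + β^2)) * key
  rw [hμx] at keyD
  have h11 := mul_le_mul_of_nonneg_left hxu (by positivity : (0:ℝ) ≤ 2 * α)
  have h12 : α^3 * ((g₁ 3 - 2 * g₁ 2 + g₁ 1) * (α * β + 2 * (α + β + β^2)))
      ≤ α^3 * 2 := by
    linarith [keyD, h11]
  exact le_of_mul_le_mul_left h12 (by positivity)
end

section
/- The mean of the PBD(α;0,β,1) distribution satisfies ∑_{k=1}^∞ k π_k ≤ √(α + (1 − β)²/4) + (1 − β)/2. -/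
/-- upper bound on the mean of PBD(α;0,β,1). -/
theorem stmt_15
    (α β : ℝ) (hα : 0 < α) (hβ : 0 < β)
    (C : ℝ) (hC : 0 < C) (π : ℕ → ℝ)
    (hπ : ∀ n : ℕ, π n =
      C * α ^ n / ∏ i ∈ Finset.range n, (β * ((i : ℝ) + 1) + ((i : ℝ) + 1) * (i : ℝ)))
    (hπ1 : ∑' n, π n = 1)
    :
    ∑' k : ℕ, (k : ℝ) * π k ≤ Real.sqrt (α + (1 - β) ^ 2 / 4) + (1 - β) / 2 := by
  set m : ℝ := Real.sqrt (α + (1 - β) ^ 2 / 4) + (1 - β) / 2 with hm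
  have hsq : ((β - 1) / 2) ^ 2 ≤ α + (1 - β) ^ 2 / 4 := by nlinarith
  have hm0 : 0 ≤ m := by
    have h1 : (β - 1) / 2 ≤ Real.sqrt (((β - 1) / 2) ^ 2) := by
      rw [Real.sqrt_sq_eq_abs]; exact le_abs_self _
    have h2 := Real.sqrt_le_sqrt hsq
    rw [hm]; linarith
  have hfpos : ∀ i : ℕ, 0 < β * ((i : ℝ) + 1) + ((i : ℝ) + 1) * (i : ℝ) := by
    intro i
    have : (0 : ℝ) ≤ i := Nat.cast_nonneg i
    nlinarith
  have hπpos : ∀ n, 0 < π n := by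
    intro n
    rw [hπ]
    exact div_pos (by positivity) (Finset.prod_pos fun i _ => hfpos i)
  have hsum : Summable π := by
    by_contra h
    rw [tsum_eq_zero_of_not_summable h] at hπ1
    norm_num at hπ1
  have hrec : ∀ n : ℕ, (β * ((n : ℝ) + 1) + ((n : ℝ) + 1) * (n : ℝ)) * π (n + 1) = α * π n := by
    intro n
    rw [hπ, hπ, Finset.prod_range_succ]
    have hP : (∏ i ∈ Finset.range n, (β * ((i : ℝ) + 1) + ((i : ℝ) + 1) * (i : ℝ))) ≠ 0 :=
      ne_of_gt (Finset.prod_pos fun i _ => hfpos i)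
    have hfn : (β * ((n : ℝ) + 1) + ((n : ℝ) + 1) * (n : ℝ)) ≠ 0 := ne_of_gt (hfpos n)
    field_simp
    ring
  -- key finite-sum bound
  have hkey : ∀ N : ℕ, ∑ k ∈ Finset.range (N + 1), (k : ℝ) * π k ≤ m := by
    intro N
    set T : ℝ := ∑ n ∈ Finset.range N, ((n : ℝ) + 1) * π (n + 1) with hT
    have hTeq : ∑ k ∈ Finset.range (N + 1), (k : ℝ) * π k = T := by
      rw [Finset.sum_range_succ' (fun k => (k : ℝ) * π k) N]
      push_cast
      simp [hT]
    rw [hTeq]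
    set A : ℝ := ∑ n ∈ Finset.range N, ((n : ℝ) + 1) ^ 2 * π (n + 1) with hA
    set B : ℝ := ∑ n ∈ Finset.range N, π (n + 1) with hB
    set S : ℝ := ∑ n ∈ Finset.range N, π n with hS
    have hT0 : 0 ≤ T :=
      Finset.sum_nonneg fun n _ => mul_nonneg (by positivity) (hπpos _).le
    have hA0 : 0 ≤ A := Finset.sum_nonneg fun n _ => mul_nonneg (by positivity) (hπpos _).le
    have hB0 : 0 ≤ B := Finset.sum_nonneg fun n _ => (hπpos _).le
    have hB1 : B ≤ 1 := by
      have h1 : B ≤ ∑ k ∈ Finset.range (N + 1), π k := by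
        rw [Finset.sum_range_succ' π N]
        have := (hπpos 0).le
        linarith
      have h2 : ∑ k ∈ Finset.range (N + 1), π k ≤ ∑' n, π n :=
        Summable.sum_le_tsum _ (fun i _ => (hπpos i).le) hsum
      rw [hπ1] at h2; linarith
    have hS1 : S ≤ 1 := by
      have h2 : S ≤ ∑' n, π n := Summable.sum_le_tsum _ (fun i _ => (hπpos i).le) hsum
      rw [hπ1] at h2; exact h2
    have hCS : T ^ 2 ≤ A * B := by
      apply Finset.sum_sq_le_sum_mul_sum_of_sq_eq_mul
      · intro i _; exact mul_nonneg (by positivity) (hπpos _).le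
      · intro i _; exact (hπpos _).le
      · intro i _; ring
    have hAT : A + (β - 1) * T = α * S := by
      rw [hA, hT, hS, Finset.mul_sum, Finset.mul_sum, ← Finset.sum_add_distrib]
      apply Finset.sum_congr rfl
      intro n _
      have := hrec n
      nlinarith [hrec n]
    have hTA : T ^ 2 ≤ A := by
      calc T ^ 2 ≤ A * B := hCS
        _ ≤ A * 1 := by nlinarith
        _ = A := mul_one A
    have hquad : T ^ 2 + (β - 1) * T ≤ α := by nlinarith
    -- conclude T ≤ m
    have h1 : (T + (β - 1) / 2) ^ 2 ≤ α + (1 - β) ^ 2 / 4 := by nlinarith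
    have h2 : T + (β - 1) / 2 ≤ Real.sqrt ((T + (β - 1) / 2) ^ 2) := by
      rw [Real.sqrt_sq_eq_abs]; exact le_abs_self _
    have h3 := Real.sqrt_le_sqrt h1
    rw [hm]; linarith
  apply tsum_le_of_sum_le' hm0
  intro u
  have hsub : u ⊆ Finset.range (u.sup id + 1) := by
    intro k hk
    simp only [Finset.mem_range]
    exact Nat.lt_succ_of_le (Finset.le_sup (f := id) hk)
  calc ∑ k ∈ u, (k : ℝ) * π k
      ≤ ∑ k ∈ Finset.range (u.sup id + 1), (k : ℝ) * π k :=
        Finset.sum_le_sum_of_subset_of_nonneg hsub fun i _ _ =>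
          mul_nonneg (Nat.cast_nonneg i) (hπpos _).le
    _ ≤ m := hkey _
end

section
/- For every i ≥ 0, the truncated first moment of the upper tail of PBD(α;0,β,1) satisfies ∑_{k > i} (k − i) π_k ≤ (1 + √α) F̄(i+1). -/
set_option maxHeartbeats 1000000 in
/-- truncated first moment bound for the upper tail of PBD(α;0,β,1). -/
theorem stmt_17
    (α β : ℝ) (hα : 0 < α) (hβ : 0 < β)
    (C : ℝ) (hC : 0 < C) (π : ℕ → ℝ)
    (hπ : ∀ n : ℕ, π n =
      C * α ^ n / ∏ i ∈ Finset.range n, (β * ((i : ℝ) + 1) + ((i : ℝ) + 1) * (i : ℝ)))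
    (hπ1 : ∑' n, π n = 1)
    (Fbar : ℕ → ℝ) (hFbar : ∀ i : ℕ, Fbar i = ∑' j : ℕ, if i ≤ j then π j else 0)
    :
    ∀ i : ℕ, (∑' k : ℕ, if i < k then ((k : ℝ) - (i : ℝ)) * π k else 0)
      ≤ (1 + Real.sqrt α) * Fbar (i + 1) := by
  have hprodpos : ∀ n : ℕ,
      (0:ℝ) < ∏ j ∈ Finset.range n, (β * ((j : ℝ) + 1) + ((j : ℝ) + 1) * (j : ℝ)) := by
    intro n
    apply Finset.prod_pos
    intro j _
    have : (0:ℝ) ≤ (j:ℝ) := Nat.cast_nonneg j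
    nlinarith
  have hπpos : ∀ n, 0 < π n := by
    intro n
    rw [hπ]
    exact div_pos (by positivity) (hprodpos n)
  have hdenpos : ∀ n : ℕ, (0:ℝ) < ((n:ℝ) + 1) * (β + (n:ℝ)) := by
    intro n
    have : (0:ℝ) ≤ (n:ℝ) := Nat.cast_nonneg n
    nlinarith
  -- detailed balance
  have hdb : ∀ n : ℕ, (((n:ℝ) + 1) * (β + (n:ℝ))) * π (n+1) = α * π n := by
    intro n
    rw [hπ, hπ, Finset.prod_range_succ]
    have h1 := hprodpos n
    have h2 : (0:ℝ) < β * ((n:ℝ) + 1) + ((n:ℝ) + 1) * (n:ℝ) := by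
      have : (0:ℝ) ≤ (n:ℝ) := Nat.cast_nonneg n
      nlinarith
    field_simp
    ring
  have hsummπ : Summable π := by
    by_contra h
    rw [tsum_eq_zero_of_not_summable h] at hπ1
    norm_num at hπ1
  -- summability of second moments via ratio test
  have hsq : Summable (fun n : ℕ => ((n:ℝ))^2 * π n) := by
    apply summable_of_ratio_norm_eventually_le (r := 1/2) (by norm_num)
    filter_upwards [Filter.eventually_ge_atTop (⌈4*α⌉₊ + 1)] with n hn
    have hn1 : 1 ≤ n := le_trans (Nat.le_add_left 1 _) hn
    have hn1' : (1:ℝ) ≤ (n:ℝ) := by exact_mod_cast hn1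
    have hnα : 4*α ≤ (n:ℝ) := by
      calc 4*α ≤ (⌈4*α⌉₊ : ℝ) := Nat.le_ceil _
        _ ≤ (n:ℝ) := by exact_mod_cast le_trans (Nat.le_succ _) hn
    have hp := hπpos n
    have hp1 := hπpos (n+1)
    have hdbn := hdb n
    have hπn1 : π (n+1) = α * π n / (((n:ℝ)+1)*(β+(n:ℝ))) := by
      rw [eq_div_iff (hdenpos n).ne']
      linear_combination hdbn
    have hnorm1 : (0:ℝ) ≤ ((n+1:ℕ):ℝ)^2 * π (n+1) := by positivity
    have hnorm2 : (0:ℝ) ≤ ((n:ℕ):ℝ)^2 * π n := by positivity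
    rw [Real.norm_of_nonneg hnorm1, Real.norm_of_nonneg hnorm2]
    push_cast
    rw [hπn1, ← mul_div_assoc, div_le_iff₀ (hdenpos n)]
    have h2n : ((n:ℝ)+1) ≤ 2*(n:ℝ)*(β+(n:ℝ)) := by nlinarith
    have key : α * ((n:ℝ)+1)^2 ≤ 1/2*((n:ℝ)^2*(((n:ℝ)+1)*(β+(n:ℝ)))) := by
      nlinarith [mul_le_mul_of_nonneg_right hnα (sq_nonneg ((n:ℝ)+1)),
        mul_nonneg (by positivity : (0:ℝ) ≤ (n:ℝ)*((n:ℝ)+1)/4)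
          (by linarith : (0:ℝ) ≤ 2*(n:ℝ)*(β+(n:ℝ)) - ((n:ℝ)+1))]
    nlinarith [mul_le_mul_of_nonneg_right key hp.le]
  intro i
  set a : ℕ := i + 1 with ha
  have hacast : ((a:ℕ):ℝ) = (i:ℝ) + 1 := by push_cast [ha]; ring
  have ha1 : (1:ℝ) ≤ (a:ℝ) := by
    rw [hacast]; linarith [Nat.cast_nonneg (α := ℝ) i]
  -- the three auxiliary series
  set h1 : ℕ → ℝ := fun k => if a ≤ k then π k else 0 with hh1
  set h2 : ℕ → ℝ := fun k => if a < k then ((k:ℝ) - (a:ℝ)) * π k else 0 with hh2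
  set g : ℕ → ℝ := fun k => if a < k then ((k:ℝ) - (a:ℝ))^2 * π k else 0 with hg
  have h1nonneg : ∀ k, 0 ≤ h1 k := by
    intro k; simp only [hh1]; split
    · exact (hπpos k).le
    · exact le_rfl
  have h2nonneg : ∀ k, 0 ≤ h2 k := by
    intro k; simp only [hh2]; split
    · rename_i hk
      have h1k : (a:ℝ) < (k:ℝ) := by exact_mod_cast hk
      have := hπpos k; nlinarith
    · exact le_rfl
  have gnonneg : ∀ k, 0 ≤ g k := by
    intro k; simp only [hg]; split
    · have := (hπpos k).le; positivity
    · exact le_rfl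
  have hsumm1 : Summable h1 := by
    apply Summable.of_nonneg_of_le h1nonneg _ hsummπ
    intro k; simp only [hh1]; split
    · exact le_rfl
    · exact (hπpos k).le
  have hsummg : Summable g := by
    apply Summable.of_nonneg_of_le gnonneg _ hsq
    intro k; simp only [hg]; split
    · rename_i hk
      have hka : (a:ℝ) ≤ (k:ℝ) := by exact_mod_cast le_of_lt hk
      have : ((k:ℝ) - (a:ℝ))^2 ≤ (k:ℝ)^2 := by nlinarith [Nat.cast_nonneg (α := ℝ) k]
      exact mul_le_mul_of_nonneg_right this (hπpos k).le
    · have := (hπpos k).le; positivity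
  have hsumm2 : Summable h2 := by
    apply Summable.of_nonneg_of_le h2nonneg _ hsummg
    intro k; simp only [hh2, hg]; split
    · rename_i hk
      have hka : (a:ℝ) + 1 ≤ (k:ℝ) := by exact_mod_cast (by omega : a + 1 ≤ k)
      have h1k : (1:ℝ) ≤ (k:ℝ) - (a:ℝ) := by linarith
      have hpk := (hπpos k).le
      nlinarith [mul_nonneg (mul_nonneg (by linarith : (0:ℝ) ≤ (k:ℝ) - (a:ℝ) - 1)
        (by linarith : (0:ℝ) ≤ (k:ℝ) - (a:ℝ))) hpk]
    · exact le_rfl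
  -- second moment bound : ∑ g ≤ α * ∑ h1
  have hE2 : ∑' k, g k ≤ α * ∑' k, h1 k := by
    rw [Summable.tsum_eq_zero_add hsummg]
    have hg0 : g 0 = 0 := by simp [hg]
    rw [hg0, zero_add, ← tsum_mul_left]
    refine Summable.tsum_le_tsum (fun m => ?_) ((summable_nat_add_iff 1).mpr hsummg)
      (hsumm1.mul_left α)
    simp only [hg, hh1]
    by_cases hm : a ≤ m
    · rw [if_pos (by omega), if_pos hm]
      have hma : (a:ℝ) ≤ (m:ℝ) := by exact_mod_cast hm
      have hdbm := hdb m
      have hp1 := hπpos (m+1)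
      have key : (((m:ℕ)+1:ℕ):ℝ) - (a:ℝ) = (m:ℝ) + 1 - (a:ℝ) := by push_cast; ring
      rw [key]
      have key2 : ((m:ℝ) + 1 - (a:ℝ))^2 ≤ ((m:ℝ) + 1) * (β + (m:ℝ)) := by nlinarith
      calc ((m:ℝ) + 1 - (a:ℝ))^2 * π (m+1)
          ≤ (((m:ℝ) + 1) * (β + (m:ℝ))) * π (m+1) :=
            mul_le_mul_of_nonneg_right key2 hp1.le
        _ = α * π m := hdbm
    · rw [if_neg (by omega), if_neg hm, mul_zero]
  -- AM-GM : ∑ h2 ≤ √α * ∑ h1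
  have hsqrtpos : 0 < Real.sqrt α := Real.sqrt_pos.mpr hα
  have hsqrtsq : Real.sqrt α * Real.sqrt α = α := Real.mul_self_sqrt hα.le
  have hAM : ∑' k, h2 k ≤ Real.sqrt α * ∑' k, h1 k := by
    have key : ∀ k, 2 * Real.sqrt α * h2 k ≤ α * h1 k + g k := by
      intro k
      simp only [hh1, hh2, hg]
      by_cases hk : a < k
      · rw [if_pos hk, if_pos (le_of_lt hk), if_pos hk]
        have hka : (a:ℝ) ≤ (k:ℝ) := by exact_mod_cast le_of_lt hk
        have hp := (hπpos k).le
        nlinarith [sq_nonneg (Real.sqrt α - ((k:ℝ) - (a:ℝ))), mul_nonneg (sq_nonneg (Real.sqrt α - ((k:ℝ) - (a:ℝ)))) hp]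
      · rw [if_neg hk]
        by_cases hk' : a ≤ k
        · rw [if_pos hk', if_neg hk, mul_zero]
          have := hπpos k; positivity
        · rw [if_neg hk', if_neg hk]; simp
    have hsum_le : ∑' k, 2 * Real.sqrt α * h2 k ≤ ∑' k, (α * h1 k + g k) := by
      apply Summable.tsum_le_tsum key (hsumm2.mul_left _) ((hsumm1.mul_left α).add hsummg)
    rw [tsum_mul_left, Summable.tsum_add (hsumm1.mul_left α) hsummg, tsum_mul_left] at hsum_le
    have hlin : 2 * Real.sqrt α * ∑' k, h2 k ≤ 2 * α * ∑' k, h1 k := by linarith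
    have h3 : Real.sqrt α * (2 * Real.sqrt α * ∑' k, h2 k)
        ≤ Real.sqrt α * (2 * α * ∑' k, h1 k) :=
      mul_le_mul_of_nonneg_left hlin hsqrtpos.le
    have e1 : Real.sqrt α * (2 * Real.sqrt α * ∑' k, h2 k) = 2 * α * ∑' k, h2 k := by
      linear_combination (2 * ∑' k, h2 k) * hsqrtsq
    have e2 : Real.sqrt α * (2 * α * ∑' k, h1 k)
        = 2 * α * (Real.sqrt α * ∑' k, h1 k) := by ring
    rw [e1, e2] at h3
    exact le_of_mul_le_mul_left h3 (by positivity)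
  -- decompose LHS
  have hdecomp : (fun k : ℕ => if i < k then ((k : ℝ) - (i : ℝ)) * π k else 0)
      = fun k => h1 k + h2 k := by
    funext k
    simp only [hh1, hh2]
    by_cases hk : a < k
    · rw [if_pos (by omega), if_pos (le_of_lt hk), if_pos hk]
      rw [hacast]; ring
    · by_cases hk' : a ≤ k
      · have : k = a := by omega
        subst this
        rw [if_pos (by omega), if_pos le_rfl, if_neg hk, hacast]
        ring
      · rw [if_neg (by omega), if_neg hk', if_neg hk]; simp
  rw [hdecomp, Summable.tsum_add hsumm1 hsumm2]
  have hF : Fbar (i+1) = ∑' k, h1 k := by rw [hFbar]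
  rw [hF]
  calc (∑' k, h1 k) + ∑' k, h2 k ≤ (∑' k, h1 k) + Real.sqrt α * ∑' k, h1 k := by linarith
    _ = (1 + Real.sqrt α) * ∑' k, h1 k := by ring
end
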